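/- arXiv:2212.06268 — 8 statements merged into one kernel-verified Lean document; each statement's English description precedes it below -/
import Mathlib

section
/- Let Z be a standard normal random variable (law N(0,1)) independent of a nonnegative real random variable W, let μ ∈ ℝ and σ > 0, and set X = μ + σ Z √W. Then for every t ∈ ℝ the characteristic function of X satisfies E[exp(i t X)] = exp(i μ t) · E[exp(−σ² t² W / 2)]. -/
open MeasureTheory ProbabilityTheory Complex

open scoped NNReal ENNReal
open Real in
lemma gauss_cf (s : ℝ) :
    ∫ x : ℝ, Complex.exp (Complex.I * s * x) ∂(gaussianReal 0 1) = Real.exp (-s ^ 2 / 2) := by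
  rw [gaussianReal_of_var_ne_zero 0 one_ne_zero]
  have hpdf : gaussianPDF 0 1 = fun x => ((Real.toNNReal (gaussianPDFReal 0 1 x) : ℝ≥0) : ℝ≥0∞) :=
    rfl
  rw [hpdf, integral_withDensity_eq_integral_smul
    ((measurable_gaussianPDFReal 0 1).real_toNNReal) _]
  have h1 : ∀ x : ℝ, (Real.toNNReal (gaussianPDFReal 0 1 x) : ℝ≥0)
      • Complex.exp (Complex.I * s * x)
      = ((Real.sqrt (2 * π))⁻¹ : ℂ)
        * Complex.exp ((-(1/2) : ℂ) * x ^ 2 + (Complex.I * s) * x + 0) := by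
    intro x
    rw [NNReal.smul_def, Real.coe_toNNReal _ (gaussianPDFReal_nonneg 0 1 x)]
    simp only [gaussianPDFReal, NNReal.coe_one, mul_one, sub_zero]
    rw [real_smul, ofReal_mul, ofReal_inv, mul_assoc]
    congr 1
    rw [Complex.ofReal_exp, ← Complex.exp_add]
    congr 1
    push_cast
    ring
  simp_rw [h1, integral_const_mul]
  rw [integral_cexp_quadratic (by norm_num) (Complex.I * s) 0]
  have h2 : ((π : ℂ) / -(-(1/2) : ℂ)) ^ (1 / 2 : ℂ) = ((Real.sqrt (2 * π) : ℝ) : ℂ) := by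
    have hb : ((π : ℂ) / -(-(1/2) : ℂ)) = ((2 * π : ℝ) : ℂ) := by push_cast; ring
    rw [hb, Real.sqrt_eq_rpow, show (1 / 2 : ℂ) = ((1/2 : ℝ) : ℂ) by norm_num,
      ← Complex.ofReal_cpow (by positivity)]
  rw [h2]
  have h3 : ((0 : ℂ) - (Complex.I * s) ^ 2 / (4 * -(1/2)) ) = ((-s ^ 2 / 2 : ℝ) : ℂ) := by
    push_cast
    rw [mul_pow, Complex.I_sq]
    ring
  rw [h3, ← Complex.ofReal_exp, ← mul_assoc,
    inv_mul_cancel₀ (by exact_mod_cast Real.sqrt_ne_zero'.mpr (by positivity)), one_mul]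
/-- **Characteristic function of a normal variance mixture.**
If `Z` is standard normal, independent of a nonnegative random variable `W`, and
`X = μ + σ Z √W` with `σ > 0`, then for every `t ∈ ℝ`,
`E[exp(i t X)] = exp(i μ t) · E[exp(−σ² t² W / 2)]`. -/
theorem charFun_normal_variance_mixture
    {Ω : Type*} [MeasurableSpace Ω] (P : Measure Ω) [IsProbabilityMeasure P]
    (Z W : Ω → ℝ) (hZmeas : Measurable Z) (hWmeas : Measurable W)
    (hZ : Measure.map Z P = gaussianReal 0 1)
    (hWnonneg : ∀ ω, 0 ≤ W ω)
    (hindep : IndepFun Z W P)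
    (μ : ℝ) (σ : ℝ) (hσ : 0 < σ)
    (X : Ω → ℝ) (hX : ∀ ω, X ω = μ + σ * Z ω * Real.sqrt (W ω)) :
    ∀ t : ℝ,
      ∫ ω, Complex.exp (Complex.I * t * X ω) ∂P
        = Complex.exp (Complex.I * μ * t)
            * ((∫ ω, Real.exp (-(σ ^ 2 * t ^ 2 * W ω) / 2) ∂P : ℝ) : ℂ) := by
  intro t
  set g : ℝ × ℝ → ℂ :=
    fun p => Complex.exp (Complex.I * ((t : ℂ) * (σ : ℂ) * ((Real.sqrt p.1 : ℝ) : ℂ)) * (p.2 : ℂ))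
    with hg_def
  have hXrw : ∀ ω, Complex.I * t * (X ω : ℂ)
      = Complex.I * μ * t
        + Complex.I * ((t : ℂ) * (σ : ℂ) * ((Real.sqrt (W ω) : ℝ) : ℂ)) * (Z ω : ℂ) := by
    intro ω
    rw [hX ω]
    push_cast
    ring
  simp_rw [hXrw, Complex.exp_add]
  rw [integral_const_mul]
  congr 1
  have hg : Measurable g := by
    unfold g
    fun_prop
  haveI : IsProbabilityMeasure (Measure.map W P) :=
    Measure.isProbabilityMeasure_map hWmeas.aemeasurable
  haveI : IsProbabilityMeasure (Measure.map Z P) := by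
    rw [hZ]; infer_instance
  have hmap : Measure.map (fun ω => (W ω, Z ω)) P
      = (Measure.map W P).prod (Measure.map Z P) :=
    (indepFun_iff_map_prod_eq_prod_map_map hWmeas.aemeasurable hZmeas.aemeasurable).mp
      hindep.symm
  have hgint : Integrable g ((Measure.map W P).prod (Measure.map Z P)) := by
    refine ⟨hg.aestronglyMeasurable, ?_⟩
    apply HasFiniteIntegral.of_bounded (C := (1 : ℝ))
    filter_upwards with p
    simp [hg_def, Complex.norm_exp, Complex.mul_re, Complex.mul_im]
  have hWae : ∀ᵐ w ∂(Measure.map W P), 0 ≤ w := by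
    rw [ae_map_iff hWmeas.aemeasurable measurableSet_Ici]
    exact ae_of_all _ hWnonneg
  calc ∫ ω, g (W ω, Z ω) ∂P
      = ∫ p, g p ∂((Measure.map W P).prod (Measure.map Z P)) := by
        rw [← hmap, integral_map (hWmeas.prodMk hZmeas).aemeasurable hg.aestronglyMeasurable]
    _ = ∫ w, ∫ z, g (w, z) ∂(Measure.map Z P) ∂(Measure.map W P) := integral_prod g hgint
    _ = ∫ w, ((Real.exp (-(t * σ * Real.sqrt w) ^ 2 / 2) : ℝ) : ℂ) ∂(Measure.map W P) := by
        refine integral_congr_ae (ae_of_all _ fun w => ?_)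
        rw [hZ]
        simpa [hg_def] using gauss_cf (t * σ * Real.sqrt w)
    _ = ∫ w, ((Real.exp (-(σ ^ 2 * t ^ 2 * w) / 2) : ℝ) : ℂ) ∂(Measure.map W P) := by
        refine integral_congr_ae ?_
        filter_upwards [hWae] with w hw
        rw [mul_pow, mul_pow, Real.sq_sqrt hw]
        ring_nf
    _ = ((∫ w, Real.exp (-(σ ^ 2 * t ^ 2 * w) / 2) ∂(Measure.map W P) : ℝ) : ℂ) :=
        integral_ofReal
    _ = ((∫ ω, Real.exp (-(σ ^ 2 * t ^ 2 * W ω) / 2) ∂P : ℝ) : ℂ) := by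
        rw [integral_map hWmeas.aemeasurable]
        exact (Real.continuous_exp.comp (by continuity)).measurable.aestronglyMeasurable
end

section
/- Let Z be a standard normal random variable independent of W, where W follows the Gamma(a, β) distribution with shape a > 0 and rate β > 0, let μ ∈ ℝ and σ > 0, and set X = μ + σ Z √W. Then for every t ∈ ℝ, E[exp(i t X)] = exp(i μ t) · (1 + σ² t² / (2β))^{−a}. -/
open MeasureTheory ProbabilityTheory Complex
open Real

lemma gauss_char (c : ℝ) :
    ∫ z : ℝ, Complex.exp (Complex.I * c * z) ∂(gaussianReal 0 1)
      = Complex.exp (-(c : ℂ) ^ 2 / 2) := by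
  rw [gaussianReal_of_var_ne_zero 0 one_ne_zero]
  have hd : (volume : Measure ℝ).withDensity (gaussianPDF 0 1)
      = (volume : Measure ℝ).withDensity
          (fun x => ((gaussianPDFReal 0 1 x).toNNReal : ENNReal)) := rfl
  rw [hd, integral_withDensity_eq_integral_smul
    (measurable_gaussianPDFReal 0 1).real_toNNReal]
  have h1 : ∀ x : ℝ, (gaussianPDFReal 0 1 x).toNNReal • Complex.exp (Complex.I * c * x)
      = ((Real.sqrt (2 * π))⁻¹ : ℂ)
          * Complex.exp ((-(1/2) : ℂ) * x ^ 2 + (Complex.I * c) * x + 0) := by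
    intro x
    rw [NNReal.smul_def, Real.coe_toNNReal _ (gaussianPDFReal_nonneg 0 1 x)]
    rw [real_smul, gaussianPDFReal]
    push_cast
    rw [mul_assoc, ← Complex.exp_add]
    congr 1
    · norm_num
    · ring
  simp_rw [h1]
  rw [integral_const_mul, integral_cexp_quadratic (by norm_num) (Complex.I * c) 0]
  have h2 : ((π : ℂ) / -(-(1/2))) ^ (1/2 : ℂ) = (Real.sqrt (2 * π) : ℂ) := by
    have : ((π : ℂ) / -(-(1/2))) = ((2 * π : ℝ) : ℂ) := by push_cast; ring
    rw [this, Real.sqrt_eq_rpow, Complex.ofReal_cpow (by positivity)]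
    norm_num
  rw [h2]
  have h3 : (Real.sqrt (2 * π) : ℂ) ≠ 0 := by
    simpa using (Real.sqrt_pos.2 (by positivity)).ne'
  rw [← mul_assoc, inv_mul_cancel₀ h3, one_mul]
  congr 1
  have : (Complex.I * c) ^ 2 = -(c : ℂ) ^ 2 := by
    rw [mul_pow, Complex.I_sq]; ring
  rw [this]
  ring

lemma gamma_lap {a β : ℝ} (ha : 0 < a) (hβ : 0 < β) {s : ℝ} (hs : 0 ≤ s) :
    ∫ w, Real.exp (-(s * w)) ∂(gammaMeasure a β) = ((β + s) / β) ^ (-a) := by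
  have hβs : 0 < β + s := by linarith
  have hd : gammaMeasure a β
      = (volume : Measure ℝ).withDensity
          (fun x => ((gammaPDFReal a β x).toNNReal : ENNReal)) := rfl
  rw [hd, integral_withDensity_eq_integral_smul
    (measurable_gammaPDFReal a β).real_toNNReal]
  have h1 : ∀ x : ℝ, (gammaPDFReal a β x).toNNReal • Real.exp (-(s * x))
      = gammaPDFReal a β x * Real.exp (-(s * x)) := by
    intro x
    rw [NNReal.smul_def, Real.coe_toNNReal _ (gammaPDFReal_nonneg ha hβ x), smul_eq_mul]
  simp_rw [h1]
  rw [← setIntegral_eq_integral_of_forall_compl_eq_zero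
    (s := Set.Ici (0:ℝ)) (fun x hx => by
      rw [gammaPDFReal, if_neg (by simpa using hx), zero_mul])]
  rw [integral_Ici_eq_integral_Ioi]
  rw [setIntegral_congr_fun measurableSet_Ioi (g := fun x =>
      β ^ a / Real.Gamma a * (x ^ (a - 1) * Real.exp (-((β + s) * x))))
    (fun x (hx : 0 < x) => by
      rw [gammaPDFReal, if_pos hx.le, mul_assoc, mul_assoc, ← Real.exp_add]
      ring_nf)]
  rw [integral_const_mul, integral_rpow_mul_exp_neg_mul_Ioi ha hβs]
  rw [Real.rpow_neg (by positivity), Real.div_rpow hβs.le hβ.le, one_div,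
    Real.inv_rpow hβs.le]
  have h1 : Real.Gamma a ≠ 0 := (Real.Gamma_pos_of_pos ha).ne'
  have h2 : (β + s) ^ a ≠ 0 := (Real.rpow_pos_of_pos hβs a).ne'
  have h3 : β ^ a ≠ 0 := (Real.rpow_pos_of_pos hβ a).ne'
  field_simp


/-- **Characteristic function of the gamma generalized hyperbolic law.**
If `Z` is standard normal, independent of `W ~ Gamma(a, β)` (`a > 0`, `β > 0`), and
`X = μ + σ Z √W` with `σ > 0`, then for every `t ∈ ℝ`,
`E[exp(i t X)] = exp(i μ t) · (1 + σ² t² / (2β))^(−a)`. -/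
theorem charFun_gamma_gh
    {Ω : Type*} [MeasurableSpace Ω] (P : Measure Ω) [IsProbabilityMeasure P]
    (a β : ℝ) (ha : 0 < a) (hβ : 0 < β)
    (Z W : Ω → ℝ) (hZmeas : Measurable Z) (hWmeas : Measurable W)
    (hZ : Measure.map Z P = gaussianReal 0 1)
    (hW : Measure.map W P = gammaMeasure a β)
    (hindep : IndepFun Z W P)
    (μ : ℝ) (σ : ℝ) (hσ : 0 < σ)
    (X : Ω → ℝ) (hX : ∀ ω, X ω = μ + σ * Z ω * Real.sqrt (W ω)) :
    ∀ t : ℝ,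
      ∫ ω, Complex.exp (Complex.I * t * X ω) ∂P
        = Complex.exp (Complex.I * μ * t)
            * ((1 + σ ^ 2 * t ^ 2 / (2 * β) : ℂ) ^ (-(a : ℂ))) := by
  intro t
  haveI : IsProbabilityMeasure (gammaMeasure a β) := isProbabilityMeasure_gammaMeasure ha hβ
  set c : ℝ := σ * t with hc
  set g : ℝ × ℝ → ℂ :=
    fun p => Complex.exp (Complex.I * c * ((p.1 * Real.sqrt p.2 : ℝ) : ℂ)) with hg
  have hgcont : Continuous g := by
    apply Complex.continuous_exp.comp
    exact continuous_const.mul (Complex.continuous_ofReal.comp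
      (continuous_fst.mul (Real.continuous_sqrt.comp continuous_snd)))
  have hstep1 : ∀ ω, Complex.exp (Complex.I * t * X ω)
      = Complex.exp (Complex.I * μ * t) * g (Z ω, W ω) := by
    intro ω
    rw [hX ω, hg, ← Complex.exp_add]
    congr 1
    simp only [hc]
    push_cast
    ring
  simp_rw [hstep1]
  rw [integral_const_mul]
  have hmap : Measure.map (fun ω => (Z ω, W ω)) P
      = (gaussianReal 0 1).prod (gammaMeasure a β) := by
    rw [← hZ, ← hW]
    exact (indepFun_iff_map_prod_eq_prod_map_map hZmeas.aemeasurable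
      hWmeas.aemeasurable).mp hindep
  have hpairmeas : AEMeasurable (fun ω => (Z ω, W ω)) P :=
    (hZmeas.prodMk hWmeas).aemeasurable
  have hstep2 : ∫ ω, g (Z ω, W ω) ∂P
      = ∫ p, g p ∂((gaussianReal 0 1).prod (gammaMeasure a β)) := by
    rw [← hmap, integral_map hpairmeas hgcont.aestronglyMeasurable]
  rw [hstep2]
  have hgint : Integrable g ((gaussianReal 0 1).prod (gammaMeasure a β)) := by
    apply Integrable.mono' (integrable_const 1) hgcont.aestronglyMeasurable
    filter_upwards with p
    simp [hg, Complex.norm_exp, Complex.mul_re, Complex.mul_im]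
  rw [integral_prod_symm g hgint]
  have hinner : ∀ w : ℝ, (∫ z, g (z, w) ∂(gaussianReal 0 1))
      = Complex.exp (-((c * Real.sqrt w : ℝ) : ℂ) ^ 2 / 2) := by
    intro w
    rw [← gauss_char (c * Real.sqrt w)]
    refine integral_congr_ae (Filter.Eventually.of_forall fun z => ?_)
    simp only [hg]
    congr 1
    push_cast
    ring
  simp_rw [hinner]
  have hae : ∀ᵐ w ∂(gammaMeasure a β), 0 ≤ w := by
    rw [ae_iff]
    have h0 : {w : ℝ | ¬ 0 ≤ w} = Set.Iio 0 := by ext w; simp [not_le]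
    rw [h0]
    show (volume.withDensity (gammaPDF a β)) (Set.Iio 0) = 0
    rw [withDensity_apply _ measurableSet_Iio]
    exact lintegral_gammaPDF_of_nonpos le_rfl
  have hstep3 : ∫ w, Complex.exp (-((c * Real.sqrt w : ℝ) : ℂ) ^ 2 / 2) ∂(gammaMeasure a β)
      = ∫ w, ((Real.exp (-((c ^ 2 / 2) * w)) : ℝ) : ℂ) ∂(gammaMeasure a β) := by
    refine integral_congr_ae ?_
    filter_upwards [hae] with w hw
    rw [Complex.ofReal_exp]
    congr 1
    push_cast
    rw [mul_pow, show ((Real.sqrt w : ℝ) : ℂ) ^ 2 = (w : ℂ) by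
      rw [← Complex.ofReal_pow, Real.sq_sqrt hw]]
    ring
  rw [hstep3]
  rw [show (∫ (w : ℝ), ((Real.exp (-(c ^ 2 / 2 * w)) : ℝ) : ℂ) ∂(gammaMeasure a β))
      = ((∫ w, Real.exp (-(c ^ 2 / 2 * w)) ∂(gammaMeasure a β) : ℝ) : ℂ) from integral_ofReal]
  rw [gamma_lap ha hβ (by positivity : (0:ℝ) ≤ c ^ 2 / 2)]
  congr 1
  rw [Complex.ofReal_cpow (by positivity)]
  have hbase : (((β + c ^ 2 / 2) / β : ℝ) : ℂ) = 1 + (σ:ℂ) ^ 2 * (t:ℂ) ^ 2 / (2 * (β:ℂ)) := by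
    have hβ' : (β:ℂ) ≠ 0 := Complex.ofReal_ne_zero.mpr hβ.ne'
    simp only [hc]
    push_cast
    field_simp
  rw [hbase]
  norm_cast
end

section
/- Let Z be a standard normal random variable independent of W, where W follows the Gamma(a, β) distribution with a > 0, β > 0. Then Z √W has the density u ↦ (β^a / (√(2π) Γ(a))) ∫₀^∞ x^{a − 3/2} exp(−(2βx + u²/x)/2) dx on ℝ. -/
open MeasureTheory ProbabilityTheory Real
open scoped ENNReal NNReal

/-- **Density of the centered gamma normal variance mixture.**
If `Z` is standard normal, independent of `W ~ Gamma(a, β)` (`a > 0`, `β > 0`), then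
`Z √W` has density `u ↦ (β^a / (√(2π) Γ(a))) ∫₀^∞ x^(a − 3/2) exp(−(2βx + u²/x)/2) dx`
on `ℝ`. -/
theorem density_gamma_normal_variance_mixture
    {Ω : Type*} [MeasurableSpace Ω] (P : Measure Ω) [IsProbabilityMeasure P]
    (a β : ℝ) (ha : 0 < a) (hβ : 0 < β)
    (Z W : Ω → ℝ) (hZmeas : Measurable Z) (hWmeas : Measurable W)
    (hZ : Measure.map Z P = gaussianReal 0 1)
    (hW : Measure.map W P = gammaMeasure a β)
    (hindep : IndepFun Z W P) :
    Measure.map (fun ω => Z ω * Real.sqrt (W ω)) P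
      = volume.withDensity fun u => ENNReal.ofReal
          ((β ^ a / (Real.sqrt (2 * π) * Real.Gamma a)) *
            ∫ x in Set.Ioi (0 : ℝ),
              x ^ (a - 3 / 2) * Real.exp (-(2 * β * x + u ^ 2 / x) / 2)) := by
  classical
  have hφ : Measurable fun p : ℝ × ℝ => p.1 * Real.sqrt p.2 :=
    measurable_fst.mul (Real.continuous_sqrt.measurable.comp measurable_snd)
  have hpair : Measurable fun ω => (Z ω, W ω) := hZmeas.prodMk hWmeas
  have hjoint : Measure.map (fun ω => (Z ω, W ω)) P
      = (gaussianReal 0 1).prod (gammaMeasure a β) := by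
    rw [← hZ, ← hW]
    exact (ProbabilityTheory.indepFun_iff_map_prod_eq_prod_map_map
      hZmeas.aemeasurable hWmeas.aemeasurable).mp hindep
  have hmap : Measure.map (fun ω => Z ω * Real.sqrt (W ω)) P
      = Measure.map (fun p : ℝ × ℝ => p.1 * Real.sqrt p.2)
          ((gaussianReal 0 1).prod (gammaMeasure a β)) := by
    rw [← hjoint, Measure.map_map hφ hpair]
    rfl
  -- the two-variable density function
  have hGmeas : Measurable fun p : ℝ × ℝ =>
      gammaPDF a β p.1 * gaussianPDF 0 p.1.toNNReal p.2 := by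
    apply Measurable.fun_mul
    · exact ((measurable_gammaPDFReal a β).ennreal_ofReal).comp measurable_fst
    · unfold gaussianPDF gaussianPDFReal
      apply Measurable.ennreal_ofReal
      fun_prop
  set g : ℝ → ℝ≥0∞ :=
    fun u => ∫⁻ w in Set.Ioi (0 : ℝ), gammaPDF a β w * gaussianPDF 0 w.toNNReal u with hg_def
  have hg_meas : Measurable g := by
    apply Measurable.lintegral_prod_right'
      (f := fun p : ℝ × ℝ => gammaPDF a β p.2 * gaussianPDF 0 p.2.toNNReal p.1)
    exact hGmeas.comp measurable_swap
  haveI : IsProbabilityMeasure (gammaMeasure a β) := isProbabilityMeasure_gammaMeasure ha hβ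
  have hkey : Measure.map (fun p : ℝ × ℝ => p.1 * Real.sqrt p.2)
      ((gaussianReal 0 1).prod (gammaMeasure a β)) = volume.withDensity g := by
    ext s hs
    rw [Measure.map_apply hφ hs, Measure.prod_apply_symm (hφ hs), withDensity_apply _ hs]
    set F : ℝ → ℝ≥0∞ := fun w => (gaussianReal 0 1)
      ((fun z : ℝ => (z, w)) ⁻¹' ((fun p : ℝ × ℝ => p.1 * Real.sqrt p.2) ⁻¹' s)) with hF_def
    have hFmeas : Measurable F := measurable_measure_prodMk_right (hφ hs)
    have h2 : ∀ w ∈ Set.Ioi (0 : ℝ), F w = ∫⁻ u in s, gaussianPDF 0 w.toNNReal u := by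
      intro w hw
      have hvne : w.toNNReal ≠ 0 := (Real.toNNReal_pos.mpr hw).ne'
      have hsq : (⟨(Real.sqrt w) ^ 2, sq_nonneg _⟩ : ℝ≥0) * 1 = w.toNNReal := by
        ext
        simp [Real.sq_sqrt (Set.mem_Ioi.mp hw).le, Real.coe_toNNReal', max_eq_left (Set.mem_Ioi.mp hw).le]
      have hmap1 : (gaussianReal 0 1).map (· * Real.sqrt w) = gaussianReal 0 w.toNNReal := by
        rw [gaussianReal_map_mul_const (Real.sqrt w), mul_zero]; exact congrArg _ hsq
      have hpre : ((fun z : ℝ => (z, w)) ⁻¹' ((fun p : ℝ × ℝ => p.1 * Real.sqrt p.2) ⁻¹' s))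
          = (fun z : ℝ => z * Real.sqrt w) ⁻¹' s := rfl
      calc F w = (gaussianReal 0 1) ((fun z : ℝ => z * Real.sqrt w) ⁻¹' s) := by
            simp only [hF_def]; rw [hpre]
        _ = (gaussianReal 0 1).map (· * Real.sqrt w) s :=
            (Measure.map_apply (measurable_mul_const _) hs).symm
        _ = gaussianReal 0 w.toNNReal s := by rw [hmap1]
        _ = ∫⁻ u in s, gaussianPDF 0 w.toNNReal u := gaussianReal_apply 0 hvne s
    calc ∫⁻ w, F w ∂(gammaMeasure a β)
        = ∫⁻ w, gammaPDF a β w * F w := by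
          rw [gammaMeasure, lintegral_withDensity_eq_lintegral_mul (f := gammaPDF a β) _
            ((measurable_gammaPDFReal a β).ennreal_ofReal) hFmeas]
          rfl
      _ = ∫⁻ w in Set.Ioi (0 : ℝ), gammaPDF a β w * F w := by
          rw [← lintegral_add_compl (fun w => gammaPDF a β w * F w) measurableSet_Ioi]
          have hz : ∫⁻ w in (Set.Ioi (0 : ℝ))ᶜ, gammaPDF a β w * F w = 0 := by
            rw [Set.compl_Ioi, setLIntegral_congr MeasureTheory.Iio_ae_eq_Iic.symm,
              setLIntegral_congr_fun measurableSet_Iio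
                (fun w (hw : w < 0) => by
                  rw [gammaPDF_of_neg hw, zero_mul])]
            simp
          rw [hz, add_zero]
      _ = ∫⁻ w in Set.Ioi (0 : ℝ), ∫⁻ u in s, gammaPDF a β w * gaussianPDF 0 w.toNNReal u := by
          refine setLIntegral_congr_fun measurableSet_Ioi
            (fun w hw => ?_)
          rw [h2 w hw, lintegral_const_mul _ (measurable_gaussianPDF _ _)]
      _ = ∫⁻ u in s, g u := by
          rw [lintegral_lintegral_swap hGmeas.aemeasurable]
  have hone : ∫⁻ u, g u = 1 := by
    have h1 : (volume.withDensity g) Set.univ = 1 := by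
      rw [← hkey, Measure.map_apply hφ MeasurableSet.univ, Set.preimage_univ, measure_univ]
    rwa [withDensity_apply _ MeasurableSet.univ, setLIntegral_univ] at h1
  have hfin : ∀ᵐ u : ℝ, g u < ∞ := ae_lt_top hg_meas (by rw [hone]; exact ENNReal.one_ne_top)
  rw [hmap, hkey]
  refine withDensity_congr_ae ?_
  have hC : (0 : ℝ) < β ^ a / (Real.sqrt (2 * π) * Real.Gamma a) := by
    have := Real.Gamma_pos_of_pos ha
    have h2π : (0 : ℝ) < Real.sqrt (2 * π) := Real.sqrt_pos.mpr (by positivity)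
    positivity
  filter_upwards [hfin] with u hu
  set C : ℝ := β ^ a / (Real.sqrt (2 * π) * Real.Gamma a) with hC_def
  set h : ℝ → ℝ := fun w => w ^ (a - 3 / 2) * Real.exp (-(2 * β * w + u ^ 2 / w) / 2)
    with hh_def
  have hh_meas : Measurable h :=
    Measurable.mul (measurable_id'.pow_const _) (by fun_prop)
  have hpt : ∀ w ∈ Set.Ioi (0 : ℝ),
      gammaPDF a β w * gaussianPDF 0 w.toNNReal u
        = ENNReal.ofReal C * ENNReal.ofReal (h w) := by
    intro w hw
    have hw' : (0 : ℝ) < w := hw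
    rw [gammaPDF_of_nonneg hw.le]
    unfold gaussianPDF
    rw [← ENNReal.ofReal_mul (by positivity), ← ENNReal.ofReal_mul hC.le]
    congr 1
    unfold gaussianPDFReal
    rw [Real.coe_toNNReal _ hw.le]
    have hsw : Real.sqrt (2 * π * w) = Real.sqrt (2 * π) * Real.sqrt w :=
      Real.sqrt_mul (by positivity) w
    have hexp : Real.exp (-(β * w)) * Real.exp (-(u - 0) ^ 2 / (2 * w))
        = Real.exp (-(2 * β * w + u ^ 2 / w) / 2) := by
      rw [← Real.exp_add]
      congr 1
      field_simp
      ring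
    have hpow : w ^ (a - 1) * (Real.sqrt w)⁻¹ = w ^ (a - 3 / 2) := by
      rw [Real.sqrt_eq_rpow, ← Real.rpow_neg hw'.le, ← Real.rpow_add hw']
      congr 1
      ring
    calc β ^ a / Real.Gamma a * w ^ (a - 1) * Real.exp (-(β * w))
          * ((Real.sqrt (2 * π * w))⁻¹ * Real.exp (-(u - 0) ^ 2 / (2 * w)))
        = (β ^ a / Real.Gamma a * (Real.sqrt (2 * π))⁻¹)
          * ((w ^ (a - 1) * (Real.sqrt w)⁻¹)
            * (Real.exp (-(β * w)) * Real.exp (-(u - 0) ^ 2 / (2 * w)))) := by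
          rw [hsw, mul_inv]; ring
      _ = C * h w := by
          have h2π : (0 : ℝ) < Real.sqrt (2 * π) := Real.sqrt_pos.mpr (by positivity)
          have hΓ : Real.Gamma a ≠ 0 := (Real.Gamma_pos_of_pos ha).ne'
          have hscal : β ^ a / Real.Gamma a * (Real.sqrt (2 * π))⁻¹ = C := by
            rw [hC_def]
            field_simp
          rw [hpow, hexp, hscal]
  have hgu : g u = ENNReal.ofReal C * ∫⁻ w in Set.Ioi (0 : ℝ), ENNReal.ofReal (h w) := by
    rw [hg_def]
    simp only []
    rw [setLIntegral_congr_fun measurableSet_Ioi hpt,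
      lintegral_const_mul _ hh_meas.ennreal_ofReal]
  set L : ℝ≥0∞ := ∫⁻ w in Set.Ioi (0 : ℝ), ENNReal.ofReal (h w) with hL_def
  have hLne : L ≠ ∞ := by
    intro hLtop
    rw [hgu, hLtop, ENNReal.mul_top (by simp [ENNReal.ofReal_eq_zero, not_le, hC])] at hu
    exact (lt_irrefl _ hu)
  have hint : ∫ w in Set.Ioi (0 : ℝ), h w = L.toReal := by
    rw [hL_def, integral_eq_lintegral_of_nonneg_ae]
    · refine (ae_restrict_iff' measurableSet_Ioi).mpr
        (Filter.Eventually.of_forall fun w hw => ?_)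
      have : (0 : ℝ) ≤ w ^ (a - 3 / 2) := Real.rpow_nonneg (le_of_lt hw) _
      exact mul_nonneg this (Real.exp_nonneg _)
    · exact hh_meas.aestronglyMeasurable
  rw [hgu, hC_def]
  rw [ENNReal.ofReal_mul hC.le, hint, ENNReal.ofReal_toReal hLne]
end

section
/- Fix a > 0, β > 0, μ ∈ ℝ, σ > 0 and n ≥ 1. Let ν denote the law of μ + σ Z √W where Z is standard normal independent of W ~ Gamma(a, β), and let ν_n denote the law of μ/n + σ Z' √W' where Z' is standard normal independent of W' ~ Gamma(a/n, β). Then ν equals the n-fold convolution of ν_n with itself; equivalently, if X₁, …, X_n are independent each with law ν_n, then X₁ + ⋯ + X_n has law ν. (This expresses that the gamma-gh law is infinitely divisible.) -/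
set_option maxHeartbeats 1000000

open MeasureTheory ProbabilityTheory

section Auxiliary

open Real Set
open scoped ENNReal NNReal

namespace GammaGHAux

/-! ### The real Beta integral -/

lemma betaIntegrable {a b : ℝ} (ha : 0 < a) (hb : 0 < b) :
    IntervalIntegrable (fun t : ℝ => t ^ (a-1) * (1-t) ^ (b-1)) volume 0 1 := by
  have h := (Complex.betaIntegral_convergent (u := (a:ℂ)) (v := (b:ℂ)) (by simpa) (by simpa)).norm
  apply h.congr
  intro t ht
  rw [Set.uIoc_of_le (by norm_num : (0:ℝ) ≤ 1)] at ht
  have ht0 : 0 < t := ht.1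
  have ht1 : (0:ℝ) ≤ 1 - t := by linarith [ht.2]
  have e1 : ((t:ℂ)) ^ ((a:ℂ) - 1) = ((t ^ (a-1) : ℝ) : ℂ) := by
    rw [Complex.ofReal_cpow ht0.le]; push_cast; ring_nf
  have e2 : ((1 - (t:ℂ))) ^ ((b:ℂ) - 1) = (((1-t) ^ (b-1) : ℝ) : ℂ) := by
    rw [show (1 - (t:ℂ)) = ((1 - t : ℝ) : ℂ) by push_cast; ring,
      Complex.ofReal_cpow ht1]; push_cast; ring_nf
  simp only [e1, e2, ← Complex.ofReal_mul, Complex.norm_real]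
  rw [norm_eq_abs, abs_of_nonneg]
  positivity

lemma betaIntegral {a b : ℝ} (ha : 0 < a) (hb : 0 < b) :
    ∫ t in (0:ℝ)..1, t ^ (a-1) * (1-t) ^ (b-1) = Gamma a * Gamma b / Gamma (a+b) := by
  have key := Complex.Gamma_mul_Gamma_eq_betaIntegral (s := (a:ℂ)) (t := (b:ℂ))
    (by simpa) (by simpa)
  have hbeta : Complex.betaIntegral a b = ((∫ t in (0:ℝ)..1, t ^ (a-1) * (1-t) ^ (b-1) : ℝ) : ℂ) := by
    rw [Complex.betaIntegral, ← intervalIntegral.integral_ofReal]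
    apply intervalIntegral.integral_congr
    intro t ht
    rw [Set.uIcc_of_le (by norm_num : (0:ℝ) ≤ 1)] at ht
    have ht0 : 0 ≤ t := ht.1
    have ht1 : (0:ℝ) ≤ 1 - t := by linarith [ht.2]
    have e1 : ((t:ℂ)) ^ ((a:ℂ) - 1) = ((t ^ (a-1) : ℝ) : ℂ) := by
      rw [Complex.ofReal_cpow ht0]; push_cast; ring_nf
    have e2 : ((1 - (t:ℂ))) ^ ((b:ℂ) - 1) = (((1-t) ^ (b-1) : ℝ) : ℂ) := by
      rw [show (1 - (t:ℂ)) = ((1 - t : ℝ) : ℂ) by push_cast; ring,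
        Complex.ofReal_cpow ht1]; push_cast; ring_nf
    simp only [e1, e2, ← Complex.ofReal_mul]
  rw [hbeta, ← Complex.ofReal_add, Complex.Gamma_ofReal, Complex.Gamma_ofReal,
    Complex.Gamma_ofReal, ← Complex.ofReal_mul, ← Complex.ofReal_mul] at key
  have := Complex.ofReal_injective key
  have hG : Gamma (a+b) ≠ 0 := (Gamma_pos_of_pos (by linarith)).ne'
  field_simp
  linarith [this]

/-! ### Scaled Beta integral -/

variable {a b x : ℝ}

lemma scaled_eqOn (hx : 0 < x) :
    ∀ y ∈ Set.Icc (0:ℝ) x, (x - y)^(a-1) * y^(b-1)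
      = (x^(b-1) * x^(a-1)) * ((x⁻¹ * y) ^ (b-1) * (1 - x⁻¹ * y) ^ (a-1)) := by
  intro y hy
  obtain ⟨hy0, hyx⟩ := hy
  have h1 : (0:ℝ) ≤ x⁻¹ * y := by positivity
  have h2 : (0:ℝ) ≤ 1 - x⁻¹ * y := by
    rw [sub_nonneg, inv_mul_le_iff₀ hx]
    linarith
  have e1 : x * (x⁻¹ * y) = y := by field_simp
  have e2 : x * (1 - x⁻¹ * y) = x - y := by field_simp
  calc (x - y)^(a-1) * y^(b-1)
      = (x * (1 - x⁻¹ * y))^(a-1) * (x * (x⁻¹ * y))^(b-1) := by rw [e1, e2]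
    _ = (x^(a-1) * (1 - x⁻¹ * y)^(a-1)) * (x^(b-1) * (x⁻¹ * y)^(b-1)) := by
        rw [Real.mul_rpow hx.le h2, Real.mul_rpow hx.le h1]
    _ = (x^(b-1) * x^(a-1)) * ((x⁻¹ * y) ^ (b-1) * (1 - x⁻¹ * y) ^ (a-1)) := by ring

lemma scaled_beta_integrable (ha : 0 < a) (hb : 0 < b) (hx : 0 < x) :
    IntervalIntegrable (fun y => (x - y)^(a-1) * y^(b-1)) volume 0 x := by
  have h0 : IntervalIntegrable (fun t : ℝ => t ^ (b-1) * (1-t) ^ (a-1)) volume 0 1 :=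
    betaIntegrable hb ha
  have h1 := (h0.comp_mul_left (c := x⁻¹)).const_mul (x^(b-1) * x^(a-1))
  have h2 : (1:ℝ) / x⁻¹ = x := by field_simp
  rw [h2, zero_div] at h1
  apply h1.congr
  intro y hy
  rw [Set.uIoc_of_le hx.le] at hy
  exact (scaled_eqOn hx y ⟨hy.1.le, hy.2⟩).symm

lemma scaled_beta_value (ha : 0 < a) (hb : 0 < b) (hx : 0 < x) :
    ∫ y in (0:ℝ)..x, (x - y)^(a-1) * y^(b-1)
      = x^(a+b-1) * (Gamma a * Gamma b / Gamma (a+b)) := by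
  rw [intervalIntegral.integral_congr (g := fun y =>
      (x^(b-1) * x^(a-1)) * ((x⁻¹ * y) ^ (b-1) * (1 - x⁻¹ * y) ^ (a-1)))
      (fun y hy => scaled_eqOn hx y (by rwa [Set.uIcc_of_le hx.le] at hy)),
    intervalIntegral.integral_const_mul,
    intervalIntegral.integral_comp_mul_left
      (fun t => t ^ (b-1) * (1-t) ^ (a-1)) (by positivity : x⁻¹ ≠ 0),
    mul_zero, inv_mul_cancel₀ hx.ne', betaIntegral hb ha]
  rw [smul_eq_mul, inv_inv]
  rw [show a + b - 1 = b - 1 + (a - 1) + 1 by ring, Real.rpow_add hx, Real.rpow_add hx,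
    Real.rpow_one, add_comm b a]
  ring

/-! ### Convolution of densities -/

lemma map_add_withDensity {f g : ℝ → ℝ≥0∞} (hf : Measurable f) (hg : Measurable g) :
    Measure.map (fun p : ℝ × ℝ => p.1 + p.2)
      ((volume.withDensity f).prod (volume.withDensity g)) =
    volume.withDensity (fun x => ∫⁻ y, f (x - y) * g y) := by
  ext s hs
  rw [Measure.map_apply measurable_add hs, Measure.prod_apply (measurable_add hs),
    withDensity_apply _ hs, lintegral_withDensity_eq_lintegral_mul _ hf
      (by exact Measurable.mono (measurable_measure_prodMk_left (measurable_add hs)) le_rfl le_rfl)]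
  simp only [Pi.mul_apply]
  set e : ℝ → ℝ≥0∞ := s.indicator 1 with he
  have heMeas : Measurable e := measurable_one.indicator hs
  have hA : ∀ x : ℝ, (volume.withDensity g) (Prod.mk x ⁻¹' ((fun p : ℝ × ℝ => p.1 + p.2) ⁻¹' s))
      = ∫⁻ y, e (x + y) * g y := by
    intro x
    rw [show Prod.mk x ⁻¹' ((fun p : ℝ × ℝ => p.1 + p.2) ⁻¹' s) = (fun y => x + y) ⁻¹' s from rfl,
      withDensity_apply _ ((measurable_const_add x) hs), ← lintegral_indicator ((measurable_const_add x) hs)]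
    congr 1 with y
    by_cases hy : x + y ∈ s <;> simp [e, Set.indicator_apply, hy]
  calc ∫⁻ x, f x * (volume.withDensity g) (Prod.mk x ⁻¹' ((fun p : ℝ × ℝ => p.1 + p.2) ⁻¹' s))
      = ∫⁻ x, ∫⁻ y, f x * (e (x + y) * g y) := by
        congr 1 with x
        have hm : Measurable fun y : ℝ => e (x + y) * g y := by
          exact (heMeas.comp (measurable_const_add x)).mul hg
        rw [hA x, lintegral_const_mul _ hm]
    _ = ∫⁻ y, ∫⁻ x, f x * (e (x + y) * g y) := by
        apply lintegral_lintegral_swap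
        exact ((hf.comp measurable_fst).mul (((heMeas.comp
          (measurable_fst.add measurable_snd)).mul (hg.comp measurable_snd)))).aemeasurable
    _ = ∫⁻ y, ∫⁻ u, f (u - y) * (e u * g y) := by
        congr 1 with y
        rw [← lintegral_add_right_eq_self (fun u => f (u - y) * (e u * g y)) y]
        simp
    _ = ∫⁻ u, ∫⁻ y, f (u - y) * (e u * g y) := by
        apply lintegral_lintegral_swap
        exact ((hf.comp (measurable_snd.sub measurable_fst)).mul
          ((heMeas.comp measurable_snd).mul (hg.comp measurable_fst))).aemeasurable
    _ = ∫⁻ u, e u * ∫⁻ y, f (u - y) * g y := by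
        congr 1 with u
        have hm : Measurable fun y : ℝ => f (u - y) * g y := by
          exact (hf.comp (measurable_const_sub u)).mul hg
        rw [← lintegral_const_mul _ hm]
        congr 1 with y; ring
    _ = ∫⁻ u in s, ∫⁻ y, f (u - y) * g y := by
        rw [← lintegral_indicator hs]
        congr 1 with u
        by_cases hu : u ∈ s <;> simp [e, Set.indicator_apply, hu]

/-! ### Gaussian convolution -/

lemma gaussPDF_conv (m₁ m₂ : ℝ) (v₁ v₂ : ℝ≥0) (h₁ : v₁ ≠ 0) (h₂ : v₂ ≠ 0) (x : ℝ) :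
    ∫⁻ y, gaussianPDF m₁ v₁ (x - y) * gaussianPDF m₂ v₂ y
      = gaussianPDF (m₁ + m₂) (v₁ + v₂) x := by
  have hv₁ : (0:ℝ) < v₁ := by positivity
  have hv₂ : (0:ℝ) < v₂ := by positivity
  set V : ℝ := (v₁:ℝ) + (v₂:ℝ) with hVdef
  have hV : 0 < V := by positivity
  set k : ℝ := V / (2 * v₁ * v₂) with hkdef
  have hk : 0 < k := by positivity
  set c : ℝ := ((v₂:ℝ) * (x - m₁) + (v₁:ℝ) * m₂) / V with hcdef
  set K : ℝ := (√(2 * π * v₁))⁻¹ * (√(2 * π * v₂))⁻¹ * rexp (- (x - (m₁ + m₂))^2 / (2 * V))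
    with hKdef
  have hKpos : 0 < K := by
    have := pi_pos
    positivity
  have hpt : ∀ y : ℝ, gaussianPDFReal m₁ v₁ (x - y) * gaussianPDFReal m₂ v₂ y
      = K * rexp (- k * (y - c)^2) := by
    intro y
    have hexp : - (x - y - m₁)^2/(2*(v₁:ℝ)) + - (y - m₂)^2/(2*(v₂:ℝ))
        = - (x - (m₁ + m₂))^2/(2*V) + - k * (y - c)^2 := by
      rw [hcdef, hkdef, hVdef]
      field_simp
      ring
    have hE : rexp (- (x - y - m₁)^2/(2*(v₁:ℝ))) * rexp (- (y - m₂)^2/(2*(v₂:ℝ)))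
        = rexp (- (x - (m₁ + m₂))^2/(2*V)) * rexp (- k * (y - c)^2) := by
      rw [← Real.exp_add, ← Real.exp_add, hexp]
    simp only [gaussianPDFReal, hKdef]
    linear_combination ((√(2 * π * (v₁:ℝ)))⁻¹ * (√(2 * π * (v₂:ℝ)))⁻¹) * hE
  calc ∫⁻ y, gaussianPDF m₁ v₁ (x - y) * gaussianPDF m₂ v₂ y
      = ∫⁻ y, ENNReal.ofReal K * ENNReal.ofReal (rexp (- k * (y - c)^2)) := by
        congr 1 with y
        rw [gaussianPDF, gaussianPDF, ← ENNReal.ofReal_mul (gaussianPDFReal_nonneg _ _ _),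
          hpt y, ENNReal.ofReal_mul hKpos.le]
    _ = ENNReal.ofReal K * ∫⁻ y, ENNReal.ofReal (rexp (- k * (y - c)^2)) := by
        have hm : Measurable fun y : ℝ => ENNReal.ofReal (rexp (- k * (y - c)^2)) := by
          fun_prop
        rw [lintegral_const_mul _ hm]
    _ = ENNReal.ofReal K * ENNReal.ofReal (√(π / k)) := by
        congr 1
        rw [← ofReal_integral_eq_lintegral_ofReal]
        · congr 1
          exact (integral_sub_right_eq_self (fun y : ℝ => rexp (- k * y^2)) c).trans
            (integral_gaussian k)
        · exact (integrable_exp_neg_mul_sq hk).comp_sub_right c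
        · exact Filter.Eventually.of_forall fun y => (Real.exp_pos _).le
    _ = gaussianPDF (m₁ + m₂) (v₁ + v₂) x := by
        rw [← ENNReal.ofReal_mul hKpos.le, gaussianPDF, gaussianPDFReal]
        congr 1
        have hrad : (2 * π * V) * (π / k) = (2 * π * v₁) * (2 * π * v₂) := by
          have := pi_pos
          field_simp [hkdef]
          rw [hkdef]; field_simp
        have hsq : √(2 * π * (v₁:ℝ)) * √(2 * π * (v₂:ℝ)) = √(2 * π * V) * √(π / k) := by
          rw [← Real.sqrt_mul (by positivity), ← Real.sqrt_mul (by positivity), hrad]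
        have h2V : ((v₁ + v₂ : ℝ≥0) : ℝ) = V := by push_cast; rfl
        rw [hKdef, h2V]
        have hsk : (0:ℝ) < √(π / k) := by have := pi_pos; positivity
        have hkey : (√(2 * π * (v₁:ℝ)))⁻¹ * (√(2 * π * (v₂:ℝ)))⁻¹ * √(π / k)
            = (√(2 * π * V))⁻¹ := by
          rw [← mul_inv, hsq, mul_inv, mul_assoc, inv_mul_cancel₀ hsk.ne', mul_one]
        linear_combination rexp (- (x - (m₁ + m₂))^2 / (2 * V)) * hkey

/-! ### Gamma convolution -/

lemma gammaPDF_conv {a b β : ℝ} (ha : 0 < a) (hb : 0 < b) (hβ : 0 < β) :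
    (fun x => ∫⁻ y, gammaPDF a β (x - y) * gammaPDF b β y) =ᵐ[volume] gammaPDF (a+b) β := by
  have hne : ∀ c : ℝ, ∀ᵐ x : ℝ, x ≠ c := by
    intro c
    rw [ae_iff]
    simp only [ne_eq, not_not, Set.setOf_eq_eq_singleton]
    exact measure_singleton c
  have h0 : ∀ᵐ x : ℝ, x ≠ 0 := hne 0
  filter_upwards [h0] with x hx
  rcases hx.lt_or_gt with hneg | hpos
  · rw [gammaPDF_of_neg (by linarith)]
    have hFmeas : Measurable fun y : ℝ => gammaPDF a β (x - y) * gammaPDF b β y := by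
      exact ((measurable_gammaPDFReal a β).comp (measurable_const_sub x)).ennreal_ofReal.mul
        (measurable_gammaPDFReal b β).ennreal_ofReal
    rw [lintegral_eq_zero_iff hFmeas]
    refine Filter.Eventually.of_forall fun y => ?_
    simp only [Pi.zero_apply]
    rcases lt_or_ge y 0 with hy | hy
    · rw [gammaPDF_of_neg hy, mul_zero]
    · rw [gammaPDF_of_neg (by linarith : x - y < 0), zero_mul]
  · set C : ℝ := β ^ a / Gamma a * (β ^ b / Gamma b) * rexp (-(β * x)) with hC
    have hGa := Gamma_pos_of_pos ha
    have hGb := Gamma_pos_of_pos hb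
    have hGab := Gamma_pos_of_pos (by linarith : 0 < a + b)
    have hCpos : 0 < C := by positivity
    have hmem : ∀ᵐ y : ℝ, y ≠ 0 ∧ y ≠ x := by
      filter_upwards [hne 0, hne x] with y h1 h2
      exact ⟨h1, h2⟩
    have step1 : ∫⁻ y, gammaPDF a β (x - y) * gammaPDF b β y
        = ∫⁻ y in Ioo 0 x, gammaPDF a β (x - y) * gammaPDF b β y := by
      rw [← lintegral_indicator measurableSet_Ioo]
      apply lintegral_congr_ae
      filter_upwards [hmem] with y hy
      by_cases hmem' : y ∈ Ioo 0 x
      · rw [Set.indicator_of_mem hmem']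
      · rw [Set.indicator_of_notMem hmem']
        rcases lt_or_ge y 0 with h | h
        · rw [gammaPDF_of_neg h, mul_zero]
        · have : x ≤ y := by
            by_contra hcon
            exact hmem' ⟨lt_of_le_of_ne h (Ne.symm hy.1), lt_of_not_ge fun h2 => hcon (by linarith)⟩
          have : x < y := lt_of_le_of_ne this (Ne.symm hy.2)
          rw [gammaPDF_of_neg (by linarith : x - y < 0), zero_mul]
    have step2 : ∫⁻ y in Ioo 0 x, gammaPDF a β (x - y) * gammaPDF b β y
        = ∫⁻ y in Ioo 0 x, ENNReal.ofReal C * ENNReal.ofReal ((x - y)^(a-1) * y^(b-1)) := by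
      apply setLIntegral_congr_fun measurableSet_Ioo
      intro y hy
      beta_reduce
      obtain ⟨hy0, hyx⟩ := hy
      have hxy : (0:ℝ) ≤ x - y := by linarith
      have hn1 : (0:ℝ) ≤ β ^ a / Gamma a * (x - y) ^ (a-1) * rexp (-(β * (x - y))) :=
        mul_nonneg (mul_nonneg (by positivity) (rpow_nonneg hxy _)) (exp_pos _).le
      rw [gammaPDF_of_nonneg hxy, gammaPDF_of_nonneg hy0.le,
        ← ENNReal.ofReal_mul hn1, ← ENNReal.ofReal_mul hCpos.le]
      congr 1
      have hexp : rexp (-(β * (x - y))) * rexp (-(β * y)) = rexp (-(β * x)) := by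
        rw [← Real.exp_add]; ring_nf
      rw [hC]
      linear_combination (β ^ a / Gamma a * (β ^ b / Gamma b) * ((x-y)^(a-1) * y^(b-1))) * hexp
    have hg_meas : Measurable fun y : ℝ => ENNReal.ofReal ((x - y)^(a-1) * y^(b-1)) := by
      fun_prop
    have step3 : ∫⁻ y in Ioo 0 x, ENNReal.ofReal C * ENNReal.ofReal ((x - y)^(a-1) * y^(b-1))
        = ENNReal.ofReal C * ENNReal.ofReal (x^(a+b-1) * (Gamma a * Gamma b / Gamma (a+b))) := by
      rw [lintegral_const_mul _ hg_meas]
      congr 1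
      rw [← ofReal_integral_eq_lintegral_ofReal]
      · rw [← MeasureTheory.integral_Ioc_eq_integral_Ioo, ← intervalIntegral.integral_of_le hpos.le,
          scaled_beta_value ha hb hpos]
      · exact ((scaled_beta_integrable ha hb hpos).1.mono_set Ioo_subset_Ioc_self)
      · filter_upwards [self_mem_ae_restrict measurableSet_Ioo] with y hy
        have h1 : (0:ℝ) ≤ x - y := by linarith [hy.2]
        exact mul_nonneg (rpow_nonneg h1 _) (rpow_nonneg hy.1.le _)
    rw [step1, step2, step3, gammaPDF_of_nonneg hpos.le, ← ENNReal.ofReal_mul hCpos.le]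
    congr 1
    rw [hC, Real.rpow_add hβ]
    field_simp

lemma gammaMeasure_conv {a b β : ℝ} (ha : 0 < a) (hb : 0 < b) (hβ : 0 < β) :
    Measure.map (fun p : ℝ × ℝ => p.1 + p.2)
      ((gammaMeasure a β).prod (gammaMeasure b β)) = gammaMeasure (a+b) β := by
  have hfa : Measurable (gammaPDF a β) := (measurable_gammaPDFReal a β).ennreal_ofReal
  have hfb : Measurable (gammaPDF b β) := (measurable_gammaPDFReal b β).ennreal_ofReal
  rw [gammaMeasure, gammaMeasure, gammaMeasure, map_add_withDensity hfa hfb]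
  exact withDensity_congr_ae (gammaPDF_conv ha hb hβ)

/-! ### a.e. facts -/

lemma ae_prod_fst {μ ν : Measure ℝ} [SFinite μ] [SFinite ν] {p : ℝ → Prop}
    (h : ∀ᵐ x ∂μ, p x) : ∀ᵐ z ∂(μ.prod ν), p z.1 := by
  rw [ae_iff] at h ⊢
  have hsub : {z : ℝ × ℝ | ¬ p z.1} ⊆ {x : ℝ | ¬ p x} ×ˢ (Set.univ : Set ℝ) :=
    fun z hz => ⟨hz, trivial⟩
  apply measure_mono_null hsub
  rw [Measure.prod_prod, h, zero_mul]

lemma ae_prod_snd {μ ν : Measure ℝ} [SFinite μ] [SFinite ν] {p : ℝ → Prop}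
    (h : ∀ᵐ x ∂ν, p x) : ∀ᵐ z ∂(μ.prod ν), p z.2 := by
  rw [ae_iff] at h ⊢
  have hsub : {z : ℝ × ℝ | ¬ p z.2} ⊆ (Set.univ : Set ℝ) ×ˢ {x : ℝ | ¬ p x} :=
    fun z hz => ⟨trivial, hz⟩
  apply measure_mono_null hsub
  rw [Measure.prod_prod, h, mul_zero]

lemma gammaMeasure_ae_pos (a β : ℝ) : ∀ᵐ w ∂(gammaMeasure a β), 0 < w := by
  rw [ae_iff]
  have hs : {w : ℝ | ¬ 0 < w} = Iic 0 := by ext w; simp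
  rw [hs, gammaMeasure, withDensity_apply _ measurableSet_Iic,
    lintegral_Iic_eq_lintegral_Iio_add_Icc _ le_rfl,
    ProbabilityTheory.lintegral_gammaPDF_of_nonpos le_rfl, zero_add, Icc_self,
    setLIntegral_measure_zero _ _ (measure_singleton 0)]

end GammaGHAux

instance (a β : ℝ) : SFinite (gammaMeasure a β) := by
  unfold gammaMeasure; infer_instance

end Auxiliary

/-- The gamma generalized hyperbolic law `gamma-gh(a, β, μ, σ)`: the law of
`μ + σ Z √W` where `Z` is standard normal independent of `W ~ Gamma(a, β)`. -/
noncomputable def gammaGH (a β μ σ : ℝ) : Measure ℝ :=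
  Measure.map (fun p : ℝ × ℝ => μ + σ * p.1 * Real.sqrt p.2)
    ((gaussianReal 0 1).prod (gammaMeasure a β))

section Auxiliary2

open Real Set GammaGHAux
open scoped ENNReal NNReal

namespace GammaGHAux

/-- The density of the gamma-gh law as a mixture of gaussian densities. -/
noncomputable def ghDensity (a β μ σ : ℝ) (x : ℝ) : ℝ≥0∞ :=
  ∫⁻ w, gaussianPDF μ (Real.toNNReal (σ^2 * w)) x ∂(gammaMeasure a β)

lemma measurable_gaussKernel (μ σ : ℝ) :
    Measurable (fun q : ℝ × ℝ => gaussianPDF μ (Real.toNNReal (σ^2 * q.2)) q.1) := by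
  unfold gaussianPDF gaussianPDFReal
  fun_prop

lemma measurable_ghDensity (a β μ σ : ℝ) : Measurable (ghDensity a β μ σ) := by
  apply Measurable.lintegral_prod_right
  exact (measurable_gaussKernel μ σ).comp (measurable_fst.prodMk measurable_snd)

lemma gammaGH_eq_withDensity {a β σ : ℝ} (μ : ℝ) (ha : 0 < a) (hβ : 0 < β) (hσ : 0 < σ) :
    gammaGH a β μ σ = volume.withDensity (ghDensity a β μ σ) := by
  have : IsProbabilityMeasure (gammaMeasure a β) := isProbabilityMeasure_gammaMeasure ha hβ
  have hh : Measurable (fun p : ℝ × ℝ => μ + σ * p.1 * Real.sqrt p.2) :=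
    measurable_const.add ((measurable_fst.const_mul σ).mul measurable_snd.sqrt)
  ext s hs
  rw [gammaGH, Measure.map_apply hh hs, Measure.prod_apply_symm (hh hs),
    withDensity_apply _ hs]
  have hstep : ∀ᵐ w ∂(gammaMeasure a β),
      gaussianReal 0 1 ((fun z => (z, w)) ⁻¹' ((fun p : ℝ × ℝ => μ + σ * p.1 * Real.sqrt p.2) ⁻¹' s))
        = ∫⁻ x in s, gaussianPDF μ (Real.toNNReal (σ^2 * w)) x := by
    filter_upwards [gammaMeasure_ae_pos a β] with w hw
    have hpre : ((fun z => (z, w)) ⁻¹' ((fun p : ℝ × ℝ => μ + σ * p.1 * Real.sqrt p.2) ⁻¹' s))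
        = (fun z : ℝ => μ + σ * z * Real.sqrt w) ⁻¹' s := rfl
    have hcomp : (fun z : ℝ => μ + σ * z * Real.sqrt w)
        = (fun u => μ + u) ∘ (fun z : ℝ => (σ * Real.sqrt w) * z) := by
      funext z; simp [Function.comp]; ring
    have hv : (NNReal.mk ((σ * Real.sqrt w)^2) (sq_nonneg _) * 1 : ℝ≥0) = Real.toNNReal (σ^2 * w) := by
      ext
      rw [mul_one]
      simp only [NNReal.coe_mk]
      rw [Real.coe_toNNReal _ (by positivity), mul_pow, Real.sq_sqrt hw.le]
    have hvne : Real.toNNReal (σ^2 * w) ≠ 0 := by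
      simp only [ne_eq, Real.toNNReal_eq_zero, not_le]
      positivity
    rw [hpre, ← Measure.map_apply (by fun_prop) hs, hcomp,
      ← Measure.map_map (by fun_prop) (by fun_prop),
      gaussianReal_map_const_mul (σ * Real.sqrt w), gaussianReal_map_const_add,
      mul_zero, zero_add, hv, gaussianReal_apply μ hvne]
  rw [lintegral_congr_ae hstep, lintegral_lintegral_swap]
  · rfl
  · exact (((measurable_gaussKernel μ σ).comp measurable_swap).aemeasurable)

lemma ghDensity_conv {a b β σ : ℝ} (μ₁ μ₂ : ℝ) (ha : 0 < a) (hb : 0 < b)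
    (hβ : 0 < β) (hσ : 0 < σ) (x : ℝ) :
    ∫⁻ y, ghDensity a β μ₁ σ (x - y) * ghDensity b β μ₂ σ y
      = ghDensity (a+b) β (μ₁+μ₂) σ x := by
  have hPa : IsProbabilityMeasure (gammaMeasure a β) := isProbabilityMeasure_gammaMeasure ha hβ
  have hPb : IsProbabilityMeasure (gammaMeasure b β) := isProbabilityMeasure_gammaMeasure hb hβ
  have hKmeas : ∀ m : ℝ, Measurable (fun q : ℝ × ℝ =>
      gaussianPDF m (Real.toNNReal (σ^2 * q.2)) q.1) := fun m => measurable_gaussKernel m σ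
  calc ∫⁻ y, ghDensity a β μ₁ σ (x - y) * ghDensity b β μ₂ σ y
      = ∫⁻ y, (∫⁻ p, gaussianPDF μ₁ (Real.toNNReal (σ^2 * p.1)) (x - y)
          * gaussianPDF μ₂ (Real.toNNReal (σ^2 * p.2)) y
            ∂((gammaMeasure a β).prod (gammaMeasure b β))) := by
        congr 1 with y
        have hf : Measurable fun w : ℝ => gaussianPDF μ₁ (Real.toNNReal (σ^2 * w)) (x - y) := by
          unfold gaussianPDF gaussianPDFReal; fun_prop
        have hg : Measurable fun w : ℝ => gaussianPDF μ₂ (Real.toNNReal (σ^2 * w)) y := by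
          unfold gaussianPDF gaussianPDFReal; fun_prop
        rw [lintegral_prod_mul hf.aemeasurable hg.aemeasurable]
        rfl
    _ = ∫⁻ p, (∫⁻ y, gaussianPDF μ₁ (Real.toNNReal (σ^2 * p.1)) (x - y)
          * gaussianPDF μ₂ (Real.toNNReal (σ^2 * p.2)) y)
            ∂((gammaMeasure a β).prod (gammaMeasure b β)) := by
        apply lintegral_lintegral_swap
        have hswap : Measurable fun z : ℝ × (ℝ × ℝ) =>
            gaussianPDF μ₁ (Real.toNNReal (σ^2 * z.2.1)) (x - z.1)
              * gaussianPDF μ₂ (Real.toNNReal (σ^2 * z.2.2)) z.1 := by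
          unfold gaussianPDF gaussianPDFReal; fun_prop
        exact hswap.aemeasurable
    _ = ∫⁻ p, gaussianPDF (μ₁ + μ₂) (Real.toNNReal (σ^2 * (p.1 + p.2))) x
            ∂((gammaMeasure a β).prod (gammaMeasure b β)) := by
        apply lintegral_congr_ae
        filter_upwards [ae_prod_fst (ν := gammaMeasure b β) (gammaMeasure_ae_pos a β),
          ae_prod_snd (μ := gammaMeasure a β) (gammaMeasure_ae_pos b β)] with p hp1 hp2
        have hv1 : Real.toNNReal (σ^2 * p.1) ≠ 0 := by
          simp only [ne_eq, Real.toNNReal_eq_zero, not_le]; positivity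
        have hv2 : Real.toNNReal (σ^2 * p.2) ≠ 0 := by
          simp only [ne_eq, Real.toNNReal_eq_zero, not_le]; positivity
        rw [gaussPDF_conv μ₁ μ₂ _ _ hv1 hv2 x, ← Real.toNNReal_add (by positivity) (by positivity),
          ← mul_add]
    _ = ghDensity (a+b) β (μ₁+μ₂) σ x := by
        have hH : Measurable fun u : ℝ =>
            gaussianPDF (μ₁ + μ₂) (Real.toNNReal (σ^2 * u)) x := by
          unfold gaussianPDF gaussianPDFReal; fun_prop
        rw [ghDensity, ← gammaMeasure_conv ha hb hβ, lintegral_map hH measurable_add]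

lemma gammaGH_conv {a b β σ : ℝ} (μ₁ μ₂ : ℝ) (ha : 0 < a) (hb : 0 < b)
    (hβ : 0 < β) (hσ : 0 < σ) :
    Measure.map (fun p : ℝ × ℝ => p.1 + p.2)
      ((gammaGH a β μ₁ σ).prod (gammaGH b β μ₂ σ)) = gammaGH (a+b) β (μ₁+μ₂) σ := by
  rw [gammaGH_eq_withDensity μ₁ ha hβ hσ, gammaGH_eq_withDensity μ₂ hb hβ hσ,
    gammaGH_eq_withDensity (μ₁+μ₂) (by linarith) hβ hσ,
    map_add_withDensity (measurable_ghDensity a β μ₁ σ) (measurable_ghDensity b β μ₂ σ)]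
  congr 1
  funext x
  exact ghDensity_conv μ₁ μ₂ ha hb hβ hσ x

end GammaGHAux

end Auxiliary2

/-- **Infinite divisibility of the gamma generalized hyperbolic law.**
For `a > 0`, `β > 0`, `σ > 0`, `μ ∈ ℝ` and `n ≥ 1`: if `X₁, …, X_n` are independent,
each with law `gamma-gh(a/n, β, μ/n, σ)`, then `X₁ + ⋯ + X_n` has law
`gamma-gh(a, β, μ, σ)`. -/
theorem gammaGH_infinitely_divisible
    {Ω : Type*} [MeasurableSpace Ω] (P : Measure Ω) [IsProbabilityMeasure P]
    (a β μ σ : ℝ) (ha : 0 < a) (hβ : 0 < β) (hσ : 0 < σ)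
    (n : ℕ) (hn : 1 ≤ n)
    (X : Fin n → Ω → ℝ) (hXmeas : ∀ i, Measurable (X i))
    (hXindep : iIndepFun X P)
    (hXlaw : ∀ i, Measure.map (X i) P = gammaGH (a / n) β (μ / n) σ) :
    Measure.map (fun ω => ∑ i, X i ω) P = gammaGH a β μ σ := by
  have hnR : (0:ℝ) < n := by exact_mod_cast hn
  have han : 0 < a / n := by positivity
  have key : ∀ (s : Finset (Fin n)) (_ : s.Nonempty),
      Measure.map (fun ω => ∑ i ∈ s, X i ω) P
        = gammaGH (s.card * (a/n)) β (s.card * (μ/n)) σ := by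
    intro s hs
    induction hs using Finset.Nonempty.cons_induction with
    | singleton i =>
        simp only [Finset.sum_singleton, Finset.card_singleton, Nat.cast_one, one_mul]
        exact hXlaw i
    | cons j s hj hs IH =>
        have hS : Measurable fun ω => ∑ i ∈ s, X i ω :=
          Finset.measurable_sum s fun i _ => hXmeas i
        have hsum_eq : (fun ω => ∑ i ∈ Finset.cons j s hj, X i ω)
            = fun ω => X j ω + ∑ i ∈ s, X i ω := by
          funext ω
          exact Finset.sum_cons hj
        have hIndep : IndepFun (X j) (fun ω => ∑ i ∈ s, X i ω) P := by
          have h1 := (hXindep.indepFun_finsetSum_of_notMem hXmeas hj).symm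
          have heq : (∑ i ∈ s, X i) = fun ω => ∑ i ∈ s, X i ω := by
            funext ω; simp
          rwa [heq] at h1
        have hmap : Measure.map (fun ω => (X j ω, ∑ i ∈ s, X i ω)) P
            = (Measure.map (X j) P).prod (Measure.map (fun ω => ∑ i ∈ s, X i ω) P) :=
          (indepFun_iff_map_prod_eq_prod_map_map (hXmeas j).aemeasurable hS.aemeasurable).mp hIndep
        have hscard : (0:ℝ) < s.card := by exact_mod_cast Finset.card_pos.mpr hs
        rw [hsum_eq,
          show (fun ω => X j ω + ∑ i ∈ s, X i ω)
            = (fun p : ℝ × ℝ => p.1 + p.2) ∘ (fun ω => (X j ω, ∑ i ∈ s, X i ω)) from rfl,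
          ← Measure.map_map measurable_add ((hXmeas j).prodMk hS), hmap, hXlaw j, IH,
          GammaGHAux.gammaGH_conv (μ/n) (s.card * (μ/n)) han (by positivity) hβ hσ,
          Finset.card_cons]
        congr 1 <;> push_cast <;> ring
  have : Nonempty (Fin n) := ⟨⟨0, hn⟩⟩
  have huniv := key Finset.univ Finset.univ_nonempty
  rw [Finset.card_univ, Fintype.card_fin] at huniv
  rw [huniv]
  congr 1 <;> field_simp
end

section
/- Fix a > 0, β > 0, σ > 0, T > 0, and let I₁ = ∫₁^∞ x^{−1/2} e^{−x} dx. For each k ≥ 1 let π_k = (0 = t₀^{(k)} < t₁^{(k)} < ⋯ < t_{ℓ(k)}^{(k)} = T) be a partition of [0, T] whose mesh m(π_k) = max_j (t_{j+1}^{(k)} − t_j^{(k)}) tends to 0 as k → ∞. For each k and each 0 ≤ j ≤ ℓ(k) − 1, let Δ_{k,j} = σ |Z_{k,j}| √(W_{k,j}) where Z_{k,j} is standard normal independent of W_{k,j} ~ Gamma(a δ_{k,j}, β), δ_{k,j} = t_{j+1}^{(k)} − t_j^{(k)}, and set V_k = Σ_{j=0}^{ℓ(k)−1} Δ_{k,j}.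 Then limsup_{k → ∞} E[V_k] ≤ σ √(2/(π β)) · e (2 + I₁) · a T and liminf_{k → ∞} E[V_k] ≥ σ √(2/(π β)) · (2/e + I₁) · a T. -/
open MeasureTheory ProbabilityTheory Real Filter
open scoped NNReal ENNReal

section ExpectedVariationHelpers


lemma h_gauss_ioi : ∫ x in Set.Ioi (0:ℝ), x * Real.exp (-x ^ 2 / 2) = 1 := by
  have hd : ∀ x ∈ Set.Ioi (0:ℝ), HasDerivAt (fun y : ℝ => -Real.exp (-y ^ 2 / 2))
      (x * Real.exp (-x ^ 2 / 2)) x := by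
    intro x _
    have h1 : HasDerivAt (fun y : ℝ => -y ^ 2 / 2) (-x) x := by
      have h := ((hasDerivAt_pow 2 x).neg.div_const 2)
      refine h.congr_deriv ?_
      push_cast
      ring
    have h2 := (h1.exp).neg
    refine h2.congr_deriv ?_
    ring_nf
  have hint : IntegrableOn (fun x : ℝ => x * Real.exp (-x ^ 2 / 2)) (Set.Ioi 0) := by
    have h := (integrable_mul_exp_neg_mul_sq (b := (1:ℝ)/2) (by norm_num)).integrableOn
      (s := Set.Ioi 0)
    refine h.congr_fun (fun x _ => ?_) measurableSet_Ioi
    congr 1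
    ring
  have htend : Tendsto (fun y : ℝ => -Real.exp (-y ^ 2 / 2)) atTop (nhds 0) := by
    rw [show (0:ℝ) = -0 by ring]
    refine (Tendsto.comp Real.tendsto_exp_atBot ?_).neg
    refine Tendsto.atBot_div_const (by norm_num) ?_
    exact tendsto_neg_atBot_iff.mpr (tendsto_pow_atTop (by norm_num))
  have hcont : ContinuousWithinAt (fun y : ℝ => -Real.exp (-y ^ 2 / 2)) (Set.Ici 0) 0 :=
    (Continuous.continuousWithinAt (by continuity))
  have := integral_Ioi_of_hasDerivAt_of_tendsto hcont hd hint htend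
  rw [this]
  norm_num



lemma h_gauss_dens : gaussianReal 0 1
    = MeasureTheory.Measure.withDensity volume
        (fun x => ((Real.toNNReal (gaussianPDFReal 0 1 x) : ℝ≥0) : ℝ≥0∞)) := by
  rw [gaussianReal_of_var_ne_zero _ one_ne_zero]
  rfl

lemma h_gauss_integrand : ∀ x : ℝ,
    ((Real.toNNReal (gaussianPDFReal 0 1 x) : ℝ≥0) : ℝ) * |x|
      = (Real.sqrt (2 * π))⁻¹ * (|x| * Real.exp (-x ^ 2 / 2)) := by
  intro x
  rw [Real.coe_toNNReal _ (gaussianPDFReal_nonneg _ _ _)]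
  simp only [gaussianPDFReal, NNReal.coe_one, mul_one, sub_zero]
  rw [mul_comm |x| _, ← mul_assoc]

lemma h_gauss_int : Integrable (fun x => |x|) (gaussianReal 0 1) := by
  rw [h_gauss_dens, integrable_withDensity_iff_integrable_smul
      ((measurable_gaussianPDFReal 0 1).real_toNNReal)]
  have hb : Integrable (fun x : ℝ => (Real.sqrt (2 * π))⁻¹ * (|x| * Real.exp (-x ^ 2 / 2))) := by
    refine Integrable.const_mul ?_ _
    have h := (integrable_mul_exp_neg_mul_sq (b := (1:ℝ)/2) (by norm_num)).abs
    refine h.congr (Filter.Eventually.of_forall fun x => ?_)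
    show |x * Real.exp (-(1/2) * x ^ 2)| = |x| * Real.exp (-x ^ 2 / 2)
    rw [abs_mul, abs_of_pos (Real.exp_pos _)]
    congr 1
    congr 1
    ring
  refine hb.congr (Filter.Eventually.of_forall fun x => ?_)
  show (Real.sqrt (2 * π))⁻¹ * (|x| * Real.exp (-x ^ 2 / 2))
      = (Real.toNNReal (gaussianPDFReal 0 1 x)) • |x|
  rw [NNReal.smul_def, smul_eq_mul, h_gauss_integrand x]

lemma h_gauss_val : ∫ x, |x| ∂(gaussianReal 0 1) = Real.sqrt (2 / π) := by
  rw [h_gauss_dens, integral_withDensity_eq_integral_smul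
    ((measurable_gaussianPDFReal 0 1).real_toNNReal)]
  simp only [NNReal.smul_def, smul_eq_mul]
  calc ∫ x : ℝ, ((Real.toNNReal (gaussianPDFReal 0 1 x) : ℝ≥0) : ℝ) * |x|
      = ∫ x : ℝ, (Real.sqrt (2 * π))⁻¹ * (|x| * Real.exp (-x ^ 2 / 2)) := by
        simp_rw [h_gauss_integrand]
    _ = (Real.sqrt (2 * π))⁻¹ * ∫ x : ℝ, |x| * Real.exp (-x ^ 2 / 2) := integral_const_mul _ _
    _ = (Real.sqrt (2 * π))⁻¹ * (2 * ∫ x in Set.Ioi (0:ℝ), x * Real.exp (-x ^ 2 / 2)) := by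
        rw [← integral_comp_abs (f := fun y => y * Real.exp (-y ^ 2 / 2))]
        congr 1
        refine integral_congr_ae (Filter.Eventually.of_forall fun x => ?_)
        simp only []
        rw [sq_abs]
    _ = Real.sqrt (2 / π) := by
        rw [h_gauss_ioi, Real.sqrt_mul (by norm_num : (0:ℝ) ≤ 2) π,
          Real.sqrt_div (by norm_num : (0:ℝ) ≤ 2) π, mul_one]
        have hπ : (0:ℝ) < Real.sqrt π := Real.sqrt_pos.mpr Real.pi_pos
        have h2 : (0:ℝ) < Real.sqrt 2 := Real.sqrt_pos.mpr (by norm_num)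
        field_simp
        nlinarith [Real.mul_self_sqrt (by norm_num : (0:ℝ) ≤ 2)]


lemma h_gamma_dens (s β : ℝ) : gammaMeasure s β
    = MeasureTheory.Measure.withDensity volume
        (fun x => ((Real.toNNReal (gammaPDFReal s β x) : ℝ≥0) : ℝ≥0∞)) := rfl

lemma h_gamma_supp {s β : ℝ} : ∀ x : ℝ, x ∉ Set.Ioi (0:ℝ) →
    Real.sqrt x * gammaPDFReal s β x = 0 := by
  intro x hx
  simp only [Set.mem_Ioi, not_lt] at hx
  rcases lt_or_eq_of_le hx with h | h
  · simp [gammaPDFReal, not_le.mpr h]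
  · subst h; simp

lemma h_gamma_eqOn {s β : ℝ} (hs : 0 < s) :
    Set.EqOn (fun x => Real.sqrt x * gammaPDFReal s β x)
      (fun x => (β ^ s / Real.Gamma s) * (x ^ (s + 1/2 - 1) * Real.exp (-(β * x))))
      (Set.Ioi 0) := by
  intro x hx
  have hx0 : (0:ℝ) < x := hx
  simp only [gammaPDFReal, if_pos hx0.le]
  rw [Real.sqrt_eq_rpow, show s + 1/2 - 1 = (1:ℝ)/2 + (s - 1) by ring,
    Real.rpow_add hx0]
  ring

lemma h_gamma_intOn {p β : ℝ} (hp : 0 < p) (hβ : 0 < β) :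
    IntegrableOn (fun x : ℝ => x ^ (p - 1) * Real.exp (-(β * x))) (Set.Ioi 0) := by
  have h0 : IntegrableOn (fun x : ℝ => Real.exp (-x) * x ^ (p - 1)) (Set.Ioi 0) :=
    Real.GammaIntegral_convergent hp
  have h1 : IntegrableOn (fun x : ℝ => Real.exp (-(β * x)) * (β * x) ^ (p - 1))
      (Set.Ioi 0) := by
    have := (integrableOn_Ioi_comp_mul_left_iff
      (fun x : ℝ => Real.exp (-x) * x ^ (p - 1)) 0 hβ).mpr
    simpa using this (by simpa using h0)
  have h2 := h1.const_mul ((β : ℝ) ^ (p - 1))⁻¹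
  refine IntegrableOn.congr_fun h2 (fun x hx => ?_) measurableSet_Ioi
  have hx0 : (0:ℝ) < x := hx
  rw [Real.mul_rpow hβ.le hx0.le]
  field_simp [(Real.rpow_pos_of_pos hβ (p-1)).ne']

lemma h_gamma_int {s β : ℝ} (hs : 0 < s) (hβ : 0 < β) :
    Integrable (fun x => Real.sqrt x) (gammaMeasure s β) := by
  rw [h_gamma_dens, integrable_withDensity_iff_integrable_smul
      ((measurable_gammaPDFReal s β).real_toNNReal)]
  have hb : Integrable (fun x : ℝ => Real.sqrt x * gammaPDFReal s β x) := by
    rw [← integrableOn_iff_integrable_of_support_subset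
      (Function.support_subset_iff'.mpr h_gamma_supp)]
    exact IntegrableOn.congr_fun
      ((h_gamma_intOn (by linarith : (0:ℝ) < s + 1/2) hβ).const_mul
        (β ^ s / Real.Gamma s)) (h_gamma_eqOn (β := β) hs).symm measurableSet_Ioi
  refine hb.congr (Filter.Eventually.of_forall fun x => ?_)
  show Real.sqrt x * gammaPDFReal s β x = (Real.toNNReal (gammaPDFReal s β x)) • Real.sqrt x
  rw [NNReal.smul_def, smul_eq_mul,
    Real.coe_toNNReal _ (gammaPDFReal_nonneg hs hβ x), mul_comm]

lemma h_gamma_val {s β : ℝ} (hs : 0 < s) (hβ : 0 < β) :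
    ∫ x, Real.sqrt x ∂(gammaMeasure s β)
      = Real.Gamma (s + 1/2) / (Real.Gamma s * Real.sqrt β) := by
  rw [h_gamma_dens, integral_withDensity_eq_integral_smul
      ((measurable_gammaPDFReal s β).real_toNNReal)]
  have h1 : ∀ x : ℝ, (Real.toNNReal (gammaPDFReal s β x)) • Real.sqrt x
      = Real.sqrt x * gammaPDFReal s β x := by
    intro x
    rw [NNReal.smul_def, smul_eq_mul,
      Real.coe_toNNReal _ (gammaPDFReal_nonneg hs hβ x), mul_comm]
  simp_rw [h1]
  rw [← setIntegral_eq_integral_of_forall_compl_eq_zero (s := Set.Ioi 0) h_gamma_supp,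
    setIntegral_congr_fun measurableSet_Ioi (h_gamma_eqOn hs), integral_const_mul,
    integral_rpow_mul_exp_neg_mul_Ioi (by linarith : (0:ℝ) < s + 1/2) hβ]
  have key : β ^ s * (1/β) ^ (s + 1/2) = (Real.sqrt β)⁻¹ := by
    rw [one_div, ← Real.rpow_neg_one β, ← Real.rpow_mul hβ.le, ← Real.rpow_add hβ,
      Real.sqrt_eq_rpow, ← Real.rpow_neg hβ.le]
    norm_num
  have hΓ : Real.Gamma s ≠ 0 := (Real.Gamma_pos_of_pos hs).ne'
  have hb : Real.sqrt β ≠ 0 := (Real.sqrt_pos.mpr hβ).ne'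
  calc β ^ s / Real.Gamma s * ((1/β) ^ (s + 1/2) * Real.Gamma (s + 1/2))
      = (β ^ s * (1/β) ^ (s + 1/2)) * Real.Gamma (s + 1/2) / Real.Gamma s := by ring
    _ = (Real.sqrt β)⁻¹ * Real.Gamma (s + 1/2) / Real.Gamma s := by rw [key]
    _ = Real.Gamma (s + 1/2) / (Real.Gamma s * Real.sqrt β) := by
        rw [inv_mul_eq_div, div_div, mul_comm (Real.sqrt β) (Real.Gamma s)]

lemma h_step {Ω : Type*} [MeasurableSpace Ω] (P : Measure Ω) [IsProbabilityMeasure P]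
    {s β : ℝ} (hs : 0 < s) (hβ : 0 < β) {Z W : Ω → ℝ}
    (hZm : Measurable Z) (hWm : Measurable W)
    (hZ : Measure.map Z P = gaussianReal 0 1) (hW : Measure.map W P = gammaMeasure s β)
    (hind : IndepFun Z W P) :
    Integrable (fun ω => |Z ω| * Real.sqrt (W ω)) P ∧
      ∫ ω, |Z ω| * Real.sqrt (W ω) ∂P
        = Real.sqrt (2 / π) * (Real.Gamma (s + 1/2) / (Real.Gamma s * Real.sqrt β)) := by
  have habs : Measurable fun x : ℝ => |x| := continuous_abs.measurable
  have hsqrt : Measurable fun x : ℝ => Real.sqrt x := Real.continuous_sqrt.measurable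
  have hZint : Integrable (fun ω => |Z ω|) P := by
    have h := h_gauss_int
    rw [← hZ] at h
    exact (integrable_map_measure habs.aestronglyMeasurable hZm.aemeasurable).mp h
  have hWint : Integrable (fun ω => Real.sqrt (W ω)) P := by
    have h := h_gamma_int hs hβ
    rw [← hW] at h
    exact (integrable_map_measure hsqrt.aestronglyMeasurable hWm.aemeasurable).mp h
  have hind2 : IndepFun (fun ω => |Z ω|) (fun ω => Real.sqrt (W ω)) P :=
    hind.comp habs hsqrt
  refine ⟨hind2.integrable_mul hZint hWint, ?_⟩
  rw [hind2.integral_fun_mul_eq_mul_integral hZint.aestronglyMeasurable hWint.aestronglyMeasurable]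
  have h1 : ∫ ω, |Z ω| ∂P = Real.sqrt (2 / π) := by
    rw [← h_gauss_val, ← hZ, integral_map hZm.aemeasurable habs.aestronglyMeasurable]
  have h2 : ∫ ω, Real.sqrt (W ω) ∂P
      = Real.Gamma (s + 1/2) / (Real.Gamma s * Real.sqrt β) := by
    rw [← h_gamma_val hs hβ, ← hW, integral_map hWm.aemeasurable hsqrt.aestronglyMeasurable]
  rw [h1, h2]


lemma h_G_cont : ContinuousAt (fun s : ℝ => Real.Gamma (s + 1/2) / Real.Gamma (s + 1)) 0 := by
  have hhalf : ∀ m : ℕ, (0:ℝ) + 1/2 ≠ -m := by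
    intro m
    have : (0:ℝ) ≤ m := Nat.cast_nonneg m
    intro h; rw [zero_add] at h; linarith
  have hone : ∀ m : ℕ, (0:ℝ) + 1 ≠ -m := by
    intro m
    have : (0:ℝ) ≤ m := Nat.cast_nonneg m
    intro h; rw [zero_add] at h; linarith
  have hf1 : ContinuousAt (fun s : ℝ => s + 1/2) 0 := by fun_prop
  have hf2 : ContinuousAt (fun s : ℝ => s + 1) 0 := by fun_prop
  have hg1 : ContinuousAt Real.Gamma ((0:ℝ) + 1/2) :=
    (Real.differentiableAt_Gamma hhalf).continuousAt
  have hg2 : ContinuousAt Real.Gamma ((0:ℝ) + 1) :=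
    (Real.differentiableAt_Gamma hone).continuousAt
  have h1 : ContinuousAt (fun s : ℝ => Real.Gamma (s + 1/2)) 0 :=
    ContinuousAt.comp (g := Real.Gamma) (f := fun s : ℝ => s + 1/2) (x := (0:ℝ)) hg1 hf1
  have h2 : ContinuousAt (fun s : ℝ => Real.Gamma (s + 1)) 0 :=
    ContinuousAt.comp (g := Real.Gamma) (f := fun s : ℝ => s + 1) (x := (0:ℝ)) hg2 hf2
  exact h1.div h2 (by rw [zero_add, Real.Gamma_one]; norm_num)

lemma h_G_zero : Real.Gamma ((0:ℝ) + 1/2) / Real.Gamma ((0:ℝ) + 1) = Real.sqrt π := by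
  rw [zero_add, zero_add, Real.Gamma_one, Real.Gamma_one_half_eq, div_one]

lemma h_I1_nonneg {I₁ : ℝ}
    (hI₁ : I₁ = ∫ x in Set.Ioi (1 : ℝ), x ^ (-(1 : ℝ) / 2) * Real.exp (-x)) : 0 ≤ I₁ := by
  rw [hI₁]
  refine setIntegral_nonneg measurableSet_Ioi fun x hx => ?_
  have hx0 : (0:ℝ) < x := lt_trans one_pos hx
  positivity

lemma h_I1_le {I₁ : ℝ}
    (hI₁ : I₁ = ∫ x in Set.Ioi (1 : ℝ), x ^ (-(1 : ℝ) / 2) * Real.exp (-x)) :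
    I₁ ≤ (Real.exp 1)⁻¹ := by
  have hint2 : IntegrableOn (fun x : ℝ => Real.exp (-x)) (Set.Ioi 1) := by
    have h := exp_neg_integrableOn_Ioi (1:ℝ) (b := 1) one_pos
    exact h.congr_fun (fun x _ => by norm_num) measurableSet_Ioi
  have hmeas : AEStronglyMeasurable (fun x : ℝ => x ^ (-(1:ℝ)/2) * Real.exp (-x))
      (volume.restrict (Set.Ioi 1)) := by
    refine (Measurable.aestronglyMeasurable ?_)
    exact (measurable_id.pow_const _).mul (Real.measurable_exp.comp measurable_neg)
  have hbound : ∀ x ∈ Set.Ioi (1:ℝ), x ^ (-(1:ℝ)/2) * Real.exp (-x) ≤ Real.exp (-x) := by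
    intro x hx
    have hx1 : (1:ℝ) ≤ x := le_of_lt hx
    have h1 : x ^ (-(1:ℝ)/2) ≤ 1 :=
      Real.rpow_le_one_of_one_le_of_nonpos hx1 (by norm_num)
    nlinarith [Real.exp_pos (-x), Real.rpow_nonneg (by linarith : (0:ℝ) ≤ x) (-(1:ℝ)/2)]
  have hint1 : IntegrableOn (fun x : ℝ => x ^ (-(1:ℝ)/2) * Real.exp (-x)) (Set.Ioi 1) := by
    refine Integrable.mono' hint2 hmeas ?_
    rw [ae_restrict_iff' measurableSet_Ioi]
    refine Filter.Eventually.of_forall fun x hx => ?_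
    have hx0 : (0:ℝ) < x := lt_trans one_pos hx
    rw [Real.norm_eq_abs, abs_of_nonneg (by positivity)]
    exact hbound x hx
  calc I₁ ≤ ∫ x in Set.Ioi (1:ℝ), Real.exp (-x) := by
        rw [hI₁]; exact setIntegral_mono_on hint1 hint2 measurableSet_Ioi hbound
    _ = (Real.exp 1)⁻¹ := by rw [integral_exp_neg_Ioi, Real.exp_neg]

lemma h_num1 {I₁ : ℝ} (h0 : 0 ≤ I₁) (h1 : I₁ ≤ (Real.exp 1)⁻¹) :
    2 / Real.exp 1 + I₁ < Real.sqrt π := by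
  have he : (2.7182818283:ℝ) < Real.exp 1 := Real.exp_one_gt_d9
  have hep : (0:ℝ) < Real.exp 1 := Real.exp_pos 1
  have h3 : 2 / Real.exp 1 + I₁ ≤ 3 / Real.exp 1 := by
    have heq : (3:ℝ) / Real.exp 1 = 2 / Real.exp 1 + (Real.exp 1)⁻¹ := by
      rw [inv_eq_one_div, ← add_div]; norm_num
    linarith
  have h4 : (3:ℝ) / Real.exp 1 < Real.sqrt π := by
    rw [show (3:ℝ) / Real.exp 1 = 3 * (Real.exp 1)⁻¹ by ring]
    refine (Real.lt_sqrt (by positivity)).mpr ?_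
    have hπ := Real.pi_gt_three
    have hinv : Real.exp 1 * (Real.exp 1)⁻¹ = 1 := mul_inv_cancel₀ hep.ne'
    nlinarith [hinv, sq_nonneg (1 - 2.7182818283 * (Real.exp 1)⁻¹),
      inv_pos.mpr hep]
  linarith

lemma h_num2 {I₁ : ℝ} (h0 : 0 ≤ I₁) : Real.sqrt π < Real.exp 1 * (2 + I₁) := by
  have he : (2.7182818283:ℝ) < Real.exp 1 := Real.exp_one_gt_d9
  have h1 : Real.sqrt π < 2 * Real.exp 1 := by
    refine (Real.sqrt_lt' (by positivity)).mpr ?_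
    have hπ := Real.pi_lt_d2
    nlinarith
  nlinarith [Real.exp_pos 1]

end ExpectedVariationHelpers


/-- **Asymptotic bounds for the expected variation of the centered gamma-gh Lévy increments.**
Along partitions `π_k` of `[0, T]` with mesh tending to `0`, if
`Δ_{k,j} = σ |Z_{k,j}| √(W_{k,j})` with `Z_{k,j}` standard normal independent of
`W_{k,j} ~ Gamma(a δ_{k,j}, β)`, and `V_k = Σ_j Δ_{k,j}`, then, with
`I₁ = ∫₁^∞ x^(−1/2) e^(−x) dx`,
`limsup_k E[V_k] ≤ σ √(2/(π β)) · e (2 + I₁) · a T` and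
`liminf_k E[V_k] ≥ σ √(2/(π β)) · (2/e + I₁) · a T`. -/
theorem expected_variation_bounds_gamma_gh
    {Ω : Type*} [MeasurableSpace Ω] (P : Measure Ω) [IsProbabilityMeasure P]
    (a β σ T : ℝ) (ha : 0 < a) (hβ : 0 < β) (hσ : 0 < σ) (hT : 0 < T)
    (I₁ : ℝ) (hI₁ : I₁ = ∫ x in Set.Ioi (1 : ℝ), x ^ (-(1 : ℝ) / 2) * Real.exp (-x))
    -- the partitions `π_k = (0 = t k 0 < t k 1 < ⋯ < t k (ℓ k) = T)`
    (ℓ : ℕ → ℕ) (hℓ : ∀ k, 0 < ℓ k) (t : ℕ → ℕ → ℝ)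
    (ht0 : ∀ k, t k 0 = 0) (htT : ∀ k, t k (ℓ k) = T)
    (hmono : ∀ k, ∀ j < ℓ k, t k j < t k (j + 1))
    -- the mesh `m(π_k)` tends to `0`
    (hmesh : Tendsto
      (fun k => (Finset.range (ℓ k)).sup'
        (Finset.nonempty_range_iff.mpr (hℓ k).ne') (fun j => t k (j + 1) - t k j))
      atTop (nhds 0))
    -- the random variables
    (Z W : ℕ → ℕ → Ω → ℝ)
    (hZmeas : ∀ k j, Measurable (Z k j)) (hWmeas : ∀ k j, Measurable (W k j))
    (hZlaw : ∀ k, ∀ j < ℓ k, Measure.map (Z k j) P = gaussianReal 0 1)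
    (hWlaw : ∀ k, ∀ j < ℓ k,
      Measure.map (W k j) P = gammaMeasure (a * (t k (j + 1) - t k j)) β)
    (hindep : ∀ k j, IndepFun (Z k j) (W k j) P)
    (Δ : ℕ → ℕ → Ω → ℝ)
    (hΔ : ∀ k j ω, Δ k j ω = σ * |Z k j ω| * Real.sqrt (W k j ω))
    (V : ℕ → Ω → ℝ) (hV : ∀ k ω, V k ω = ∑ j ∈ Finset.range (ℓ k), Δ k j ω) :
    limsup (fun k => ∫ ω, V k ω ∂P) atTop
        ≤ σ * Real.sqrt (2 / (π * β)) * (Real.exp 1 * (2 + I₁)) * (a * T) ∧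
      σ * Real.sqrt (2 / (π * β)) * (2 / Real.exp 1 + I₁) * (a * T)
        ≤ liminf (fun k => ∫ ω, V k ω ∂P) atTop := by
  have hC0 : 0 ≤ σ * (Real.sqrt (2/π) / Real.sqrt β) := by positivity
  have hδ : ∀ k, ∀ j, j < ℓ k → 0 < t k (j+1) - t k j :=
    fun k j hj => sub_pos.mpr (hmono k j hj)
  have hsumδ : ∀ k, ∑ j ∈ Finset.range (ℓ k), (t k (j+1) - t k j) = T := by
    intro k
    rw [Finset.sum_range_sub (fun j => t k j), htT, ht0, sub_zero]
  -- expectation formula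
  have hEV : ∀ k, ∫ ω, V k ω ∂P
      = ∑ j ∈ Finset.range (ℓ k),
          (σ * (Real.sqrt (2/π) / Real.sqrt β)) * ((a * (t k (j+1) - t k j)) *
            (Real.Gamma (a * (t k (j+1) - t k j) + 1/2)
              / Real.Gamma (a * (t k (j+1) - t k j) + 1))) := by
    intro k
    have hstep : ∀ j ∈ Finset.range (ℓ k),
        Integrable (fun ω => |Z k j ω| * Real.sqrt (W k j ω)) P ∧
          ∫ ω, |Z k j ω| * Real.sqrt (W k j ω) ∂P
            = Real.sqrt (2/π) * (Real.Gamma (a * (t k (j+1) - t k j) + 1/2)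
                / (Real.Gamma (a * (t k (j+1) - t k j)) * Real.sqrt β)) := by
      intro j hj
      rw [Finset.mem_range] at hj
      exact h_step P (mul_pos ha (hδ k j hj)) hβ (hZmeas k j) (hWmeas k j)
        (hZlaw k j hj) (hWlaw k j hj) (hindep k j)
    have hΔint : ∀ j ∈ Finset.range (ℓ k), Integrable (fun ω => Δ k j ω) P := by
      intro j hj
      have h := ((hstep j hj).1).const_mul σ
      refine h.congr (Filter.Eventually.of_forall fun ω => ?_)
      simp only [hΔ]; ring
    calc ∫ ω, V k ω ∂P = ∫ ω, ∑ j ∈ Finset.range (ℓ k), Δ k j ω ∂P := by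
          simp_rw [hV]
      _ = ∑ j ∈ Finset.range (ℓ k), ∫ ω, Δ k j ω ∂P := integral_finset_sum _ hΔint
      _ = _ := by
          refine Finset.sum_congr rfl fun j hj => ?_
          rw [Finset.mem_range] at hj
          have hs : 0 < a * (t k (j+1) - t k j) := mul_pos ha (hδ k j hj)
          have heq : ∫ ω, Δ k j ω ∂P = σ * ∫ ω, |Z k j ω| * Real.sqrt (W k j ω) ∂P := by
            rw [← integral_const_mul]
            refine integral_congr_ae (Filter.Eventually.of_forall fun ω => ?_)
            simp only [hΔ]; ring
          rw [heq, (hstep j (Finset.mem_range.mpr hj)).2]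
          have hΓ : Real.Gamma (a * (t k (j+1) - t k j) + 1)
              = (a * (t k (j+1) - t k j)) * Real.Gamma (a * (t k (j+1) - t k j)) :=
            Real.Gamma_add_one hs.ne'
          have hΓpos : 0 < Real.Gamma (a * (t k (j+1) - t k j)) :=
            Real.Gamma_pos_of_pos hs
          have hsβ : (0:ℝ) < Real.sqrt β := Real.sqrt_pos.mpr hβ
          rw [hΓ]
          field_simp
          rw [mul_div_cancel_left₀ _ (hδ k j hj).ne']
  -- numeric bounds
  have h0 : 0 ≤ I₁ := h_I1_nonneg hI₁
  have h1 : I₁ ≤ (Real.exp 1)⁻¹ := h_I1_le hI₁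
  have hlt1 : 2 / Real.exp 1 + I₁ < Real.sqrt π := h_num1 h0 h1
  have hlt2 : Real.sqrt π < Real.exp 1 * (2 + I₁) := h_num2 h0
  set c₁ : ℝ := 2 / Real.exp 1 + I₁ with hc₁def
  set c₂ : ℝ := Real.exp 1 * (2 + I₁) with hc₂def
  -- neighborhood where G is within bounds
  have hGcont := h_G_cont
  rw [Metric.continuousAt_iff] at hGcont
  obtain ⟨δ₀, hδ₀pos, hδ₀⟩ := hGcont (min (Real.sqrt π - c₁) (c₂ - Real.sqrt π))
    (lt_min (by linarith) (by linarith))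
  have hGbound : ∀ s : ℝ, 0 < s → s < δ₀ →
      c₁ ≤ Real.Gamma (s + 1/2) / Real.Gamma (s + 1) ∧
        Real.Gamma (s + 1/2) / Real.Gamma (s + 1) ≤ c₂ := by
    intro s hs0 hsδ
    have hd : dist s 0 < δ₀ := by
      rw [Real.dist_eq, sub_zero, abs_of_pos hs0]; exact hsδ
    have h := hδ₀ hd
    rw [Real.dist_eq] at h
    rw [h_G_zero] at h
    have habs := abs_lt.mp h
    have hm1 : min (Real.sqrt π - c₁) (c₂ - Real.sqrt π) ≤ Real.sqrt π - c₁ :=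
      min_le_left _ _
    have hm2 : min (Real.sqrt π - c₁) (c₂ - Real.sqrt π) ≤ c₂ - Real.sqrt π :=
      min_le_right _ _
    have hA := lt_of_le_of_lt (neg_le_neg hm1) habs.1
    have hB := lt_of_lt_of_le habs.2 hm2
    exact ⟨by linarith, by linarith⟩
  -- mesh eventually small
  have hmesh' := hmesh.eventually_lt_const (show (0:ℝ) < δ₀ / a by positivity)
  -- eventual bounds for the expectation
  have hbound : ∀ᶠ k in atTop,
      σ * (Real.sqrt (2/π) / Real.sqrt β) * (c₁ * (a * T)) ≤ (∫ ω, V k ω ∂P) ∧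
      (∫ ω, V k ω ∂P) ≤ σ * (Real.sqrt (2/π) / Real.sqrt β) * (c₂ * (a * T)) := by
    filter_upwards [hmesh'] with k hk
    have hsb : ∀ j ∈ Finset.range (ℓ k),
        0 < a * (t k (j+1) - t k j) ∧ a * (t k (j+1) - t k j) < δ₀ := by
      intro j hj
      rw [Finset.mem_range] at hj
      refine ⟨mul_pos ha (hδ k j hj), ?_⟩
      have hle : t k (j+1) - t k j
          ≤ (Finset.range (ℓ k)).sup' (Finset.nonempty_range_iff.mpr (hℓ k).ne')
              (fun j => t k (j + 1) - t k j) :=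
        Finset.le_sup' (fun j => t k (j + 1) - t k j) (Finset.mem_range.mpr hj)
      have hlt : t k (j+1) - t k j < δ₀ / a := lt_of_le_of_lt hle hk
      calc a * (t k (j+1) - t k j) < a * (δ₀ / a) := mul_lt_mul_of_pos_left hlt ha
        _ = δ₀ := by field_simp
    have hsum1 : ∑ j ∈ Finset.range (ℓ k), (a * (t k (j+1) - t k j)) = a * T := by
      rw [← Finset.mul_sum, hsumδ k]
    rw [hEV k, ← Finset.mul_sum]
    constructor
    · refine mul_le_mul_of_nonneg_left ?_ hC0
      calc c₁ * (a * T) = ∑ j ∈ Finset.range (ℓ k), c₁ * (a * (t k (j+1) - t k j)) := by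
            rw [← Finset.mul_sum, hsum1]
        _ ≤ _ := by
            refine Finset.sum_le_sum fun j hj => ?_
            obtain ⟨hp, hlt⟩ := hsb j hj
            have hGb := (hGbound _ hp hlt).1
            rw [mul_comm c₁ _]
            exact mul_le_mul_of_nonneg_left hGb hp.le
    · refine mul_le_mul_of_nonneg_left ?_ hC0
      calc (∑ j ∈ Finset.range (ℓ k), (a * (t k (j+1) - t k j)) *
              (Real.Gamma (a * (t k (j+1) - t k j) + 1/2)
                / Real.Gamma (a * (t k (j+1) - t k j) + 1)))
          ≤ ∑ j ∈ Finset.range (ℓ k), (a * (t k (j+1) - t k j)) * c₂ := by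
            refine Finset.sum_le_sum fun j hj => ?_
            obtain ⟨hp, hlt⟩ := hsb j hj
            exact mul_le_mul_of_nonneg_left ((hGbound _ hp hlt).2) hp.le
        _ = c₂ * (a * T) := by
            simp_rw [mul_comm _ c₂]
            rw [← Finset.mul_sum, hsum1]
  -- constants
  have hconst : Real.sqrt (2 / (π * β)) = Real.sqrt (2/π) / Real.sqrt β := by
    rw [show (2:ℝ)/(π*β) = 2/π/β from (div_div 2 π β).symm,
      Real.sqrt_div (by positivity) β]
  constructor
  · have h := limsup_le_of_le
      (isCoboundedUnder_le_of_eventually_le atTop (hbound.mono fun k hb => hb.1))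
      (hbound.mono fun k hb => hb.2)
    calc limsup (fun k => ∫ ω, V k ω ∂P) atTop
        ≤ σ * (Real.sqrt (2/π) / Real.sqrt β) * (c₂ * (a * T)) := h
      _ = σ * Real.sqrt (2 / (π * β)) * c₂ * (a * T) := by rw [hconst]; ring
  · have h := le_liminf_of_le
      (isCoboundedUnder_ge_of_eventually_le atTop (hbound.mono fun k hb => hb.2))
      (hbound.mono fun k hb => hb.1)
    calc σ * Real.sqrt (2 / (π * β)) * c₁ * (a * T)
        = σ * (Real.sqrt (2/π) / Real.sqrt β) * (c₁ * (a * T)) := by rw [hconst]; ring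
      _ ≤ liminf (fun k => ∫ ω, V k ω ∂P) atTop := h
end

section
/- Fix a > 0, β > 0, σ > 0, T > 0. For each k ≥ 1 let π_k = (0 = t₀^{(k)} < ⋯ < t_{ℓ(k)}^{(k)} = T) be a partition of [0, T] whose mesh tends to 0 as k → ∞. For each k, let (Δ_{k,j})_{0 ≤ j ≤ ℓ(k)−1} be independent random variables with Δ_{k,j} = σ |Z_{k,j}| √(W_{k,j}), where Z_{k,j} is standard normal independent of W_{k,j} ~ Gamma(a δ_{k,j}, β), δ_{k,j} = t_{j+1}^{(k)} − t_j^{(k)}. Set V_k = Σ_{j=0}^{ℓ(k)−1} Δ_{k,j}. Then Var(V_k) → σ² a T / β as k → ∞. -/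
section VarHelpers
open MeasureTheory ProbabilityTheory Real Filter Set
open scoped ENNReal NNReal


lemma gammaMeasure_eq (s r : ℝ) : gammaMeasure s r
    = (volume : Measure ℝ).withDensity (fun x => ((Real.toNNReal (gammaPDFReal s r x) : ℝ≥0) : ℝ≥0∞)) := rfl

lemma gamma_moment {s r m : ℝ} (hs : 0 < s) (hr : 0 < r) (hm : 0 ≤ m)
    {f : ℝ → ℝ} (hf : Measurable f) (hfx : ∀ x : ℝ, 0 < x → f x = x ^ m) :
    Integrable f (gammaMeasure s r) ∧
      ∫ x, f x ∂(gammaMeasure s r) = Gamma (s + m) / (Gamma s * r ^ m) := by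
  have hmeas : Measurable (fun x => Real.toNNReal (gammaPDFReal s r x)) :=
    (measurable_gammaPDFReal s r).real_toNNReal
  have hae : (fun x => Real.toNNReal (gammaPDFReal s r x) • f x)
      =ᵐ[volume] (Ioi (0:ℝ)).indicator
        (fun x => (r ^ s / Gamma s) * (x ^ (s + m - 1) * Real.exp (-r * x ^ (1:ℝ)))) := by
    filter_upwards [compl_mem_ae_iff.mpr (volume_singleton (a := (0:ℝ)))] with x hx
    simp only [Set.mem_compl_iff, Set.mem_singleton_iff] at hx
    rcases lt_or_gt_of_ne hx with h | h
    · rw [Set.indicator_of_notMem (by simpa using h.le)]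
      simp [gammaPDFReal, not_le.mpr h]
    · rw [Set.indicator_of_mem (Set.mem_Ioi.mpr h), hfx x h]
      simp only [NNReal.smul_def, smul_eq_mul]
      rw [gammaPDFReal, if_pos h.le, Real.coe_toNNReal _ (by positivity),
        Real.rpow_one, show s + m - 1 = (s-1) + m by ring, Real.rpow_add h, neg_mul]
      ring
  -- integrability of the RHS
  have hIOn : IntegrableOn (fun x => (r ^ s / Gamma s) * (x ^ (s + m - 1) * Real.exp (-r * x ^ (1:ℝ))))
      (Ioi (0:ℝ)) volume := by
    exact (integrableOn_rpow_mul_exp_neg_mul_rpow (by linarith) one_pos hr).const_mul _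
  have hInt : Integrable (fun x => Real.toNNReal (gammaPDFReal s r x) • f x) volume := by
    rw [integrable_congr hae]
    rw [integrable_indicator_iff measurableSet_Ioi]
    exact hIOn
  constructor
  · rw [gammaMeasure_eq, integrable_withDensity_iff_integrable_smul hmeas]
    exact hInt
  · rw [gammaMeasure_eq, integral_withDensity_eq_integral_smul hmeas,
      integral_congr_ae hae, integral_indicator measurableSet_Ioi]
    rw [MeasureTheory.integral_const_mul]
    have := integral_rpow_mul_exp_neg_mul_rpow (p := 1) (q := s + m - 1) (b := r)
      one_pos (by linarith) hr
    rw [this]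
    rw [show s + m - 1 + 1 = s + m by ring]
    have hr0 : (r:ℝ) ^ s ≠ 0 := (Real.rpow_pos_of_pos hr s).ne'
    have hrm : (r:ℝ) ^ m ≠ 0 := (Real.rpow_pos_of_pos hr m).ne'
    have hΓ : Gamma s ≠ 0 := (Real.Gamma_pos_of_pos hs).ne'
    rw [show -(s + m) / 1 = -(s+m) by ring, show (s + m) / 1 = s + m by ring,
      Real.rpow_neg hr.le, Real.rpow_add hr]
    field_simp


lemma rpow_two' (x : ℝ) : x ^ (2:ℝ) = x ^ 2 := by norm_num [Real.rpow_natCast]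

lemma gauss_sq : Integrable (fun x : ℝ => x ^ 2) (gaussianReal 0 1) ∧
    ∫ x, x ^ 2 ∂(gaussianReal 0 1) = 1 := by
  have hmeas : Measurable (fun x => Real.toNNReal (gaussianPDFReal 0 1 x)) :=
    (measurable_gaussianPDFReal 0 1).real_toNNReal
  have hrepr : gaussianReal 0 1
      = (volume : Measure ℝ).withDensity (fun x => ((Real.toNNReal (gaussianPDFReal 0 1 x) : ℝ≥0) : ℝ≥0∞)) := by
    rw [gaussianReal_of_var_ne_zero 0 one_ne_zero]; rfl
  have hfun : (fun x : ℝ => Real.toNNReal (gaussianPDFReal 0 1 x) • (x^2 : ℝ))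
      = fun x => (Real.sqrt (2*π))⁻¹ * (x ^ (2:ℝ) * Real.exp (-(2⁻¹) * x^2)) := by
    ext x
    simp only [NNReal.smul_def, smul_eq_mul]
    rw [Real.coe_toNNReal _ (gaussianPDFReal_nonneg _ _ _), rpow_two']
    simp only [gaussianPDFReal, sub_zero, NNReal.coe_one, mul_one]
    ring_nf
  have hIgen : Integrable (fun x : ℝ => x ^ (2:ℝ) * Real.exp (-(2⁻¹) * x^2)) volume :=
    integrable_rpow_mul_exp_neg_mul_sq (by norm_num) (by norm_num)
  constructor
  · rw [hrepr, integrable_withDensity_iff_integrable_smul hmeas, hfun]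
    exact hIgen.const_mul _
  · rw [hrepr, integral_withDensity_eq_integral_smul hmeas]
    calc ∫ x : ℝ, Real.toNNReal (gaussianPDFReal 0 1 x) • (x^2:ℝ)
        = ∫ x : ℝ, (Real.sqrt (2*π))⁻¹ * (x ^ (2:ℝ) * Real.exp (-(2⁻¹) * x^2)) := by rw [hfun]
      _ = (Real.sqrt (2*π))⁻¹ * ∫ x : ℝ, x ^ (2:ℝ) * Real.exp (-(2⁻¹) * x^2) :=
        MeasureTheory.integral_const_mul _ _
      _ = 1 := ?_
    have hsplit : ∫ x : ℝ, x ^ (2:ℝ) * Real.exp (-(2⁻¹) * x^2)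
        = (∫ x in Iic (0:ℝ), x ^ (2:ℝ) * Real.exp (-(2⁻¹) * x^2))
          + ∫ x in Ioi (0:ℝ), x ^ (2:ℝ) * Real.exp (-(2⁻¹) * x^2) := by
      rw [← integral_add_compl (measurableSet_Iic (a := (0:ℝ))) hIgen]
      congr 1
      congr 1
      simp [compl_Iic]
    have hneg : (∫ x in Iic (0:ℝ), x ^ (2:ℝ) * Real.exp (-(2⁻¹) * x^2))
        = ∫ x in Ioi (0:ℝ), x ^ (2:ℝ) * Real.exp (-(2⁻¹) * x^2) := by
      have h := integral_comp_neg_Ioi (c := 0) (f := fun x : ℝ => x ^ (2:ℝ) * Real.exp (-(2⁻¹) * x^2))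
      simp only [neg_zero] at h
      rw [← h]
      refine setIntegral_congr_fun measurableSet_Ioi fun x _ => ?_
      rw [rpow_two', rpow_two']
      ring_nf
    have hval : ∫ x in Ioi (0:ℝ), x ^ (2:ℝ) * Real.exp (-(2⁻¹) * x^2)
        = (2⁻¹:ℝ) ^ (-((3:ℝ)/2)) * (1/2) * Gamma ((3:ℝ)/2) := by
      have h := integral_rpow_mul_exp_neg_mul_rpow (p := 2) (q := 2) (b := 2⁻¹)
        two_pos (by norm_num) (by norm_num)
      norm_num at h ⊢
      try exact h
      try { rw [← h]; refine setIntegral_congr_fun measurableSet_Ioi fun x _ => ?_; rw [rpow_two'] }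
    have hΓ : Gamma ((3:ℝ)/2) = (1/2) * Real.sqrt π := by
      rw [show (3/2:ℝ) = 1/2 + 1 by norm_num, Real.Gamma_add_one (by norm_num),
        Real.Gamma_one_half_eq]
    have hpow : ((2:ℝ)⁻¹) ^ (-((3:ℝ)/2)) = 2 * Real.sqrt 2 := by
      rw [Real.inv_rpow (by norm_num : (0:ℝ) ≤ 2), Real.rpow_neg (by norm_num : (0:ℝ) ≤ 2), inv_inv,
        show ((3:ℝ)/2) = 1 + 1/2 by norm_num, Real.rpow_add (by norm_num : (0:ℝ) < 2),
        Real.rpow_one, ← Real.sqrt_eq_rpow]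
    rw [hsplit, hneg, hval, hΓ, hpow]
    have h2 : Real.sqrt 2 > 0 := Real.sqrt_pos.mpr (by norm_num)
    have hπ' : Real.sqrt π > 0 := Real.sqrt_pos.mpr Real.pi_pos
    rw [Real.sqrt_mul (by norm_num : (0:ℝ) ≤ 2)]
    have h2sq : Real.sqrt 2 * Real.sqrt 2 = 2 := Real.mul_self_sqrt (by norm_num)
    field_simp
    try nlinarith [h2sq, h2, hπ']

lemma gauss_abs : Integrable (fun x : ℝ => |x|) (gaussianReal 0 1) ∧
    ∫ x, |x| ∂(gaussianReal 0 1) ≤ 1 := by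
  have hg : Integrable (fun x : ℝ => ((x^2:ℝ)+1)/2) (gaussianReal 0 1) :=
    (gauss_sq.1.add (integrable_const 1)).div_const 2
  have hle : ∀ x : ℝ, |x| ≤ (x^2+1)/2 := fun x => by nlinarith [sq_abs x, sq_nonneg (|x|-1)]
  have hint : Integrable (fun x : ℝ => |x|) (gaussianReal 0 1) := by
    refine hg.mono (measurable_abs.aestronglyMeasurable) (ae_of_all _ fun x => ?_)
    simp only [Real.norm_eq_abs, abs_abs]
    rw [abs_of_nonneg (by positivity : (0:ℝ) ≤ (x^2+1)/2)]
    exact hle x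
  refine ⟨hint, ?_⟩
  calc ∫ x, |x| ∂(gaussianReal 0 1) ≤ ∫ x, ((x^2:ℝ)+1)/2 ∂(gaussianReal 0 1) :=
        integral_mono hint hg hle
    _ = 1 := by
        rw [integral_div, integral_add gauss_sq.1 (integrable_const 1), gauss_sq.2,
          integral_const]
        simp

/-- Variance of one increment. -/
lemma var_increment {Ω : Type*} [MeasurableSpace Ω] (P : Measure Ω) [IsProbabilityMeasure P]
    (σ β s : ℝ) (hβ : 0 < β) (hs : 0 < s)
    (Z W : Ω → ℝ) (hZm : Measurable Z) (hWm : Measurable W)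
    (hZl : Measure.map Z P = gaussianReal 0 1) (hWl : Measure.map W P = gammaMeasure s β)
    (hind : IndepFun Z W P) :
    MemLp (fun ω => σ * |Z ω| * Real.sqrt (W ω)) 2 P ∧
    variance (fun ω => σ * |Z ω| * Real.sqrt (W ω)) P
      = σ^2 * s / β
        - (σ * (∫ x, |x| ∂(gaussianReal 0 1)) * (Gamma (s + 1/2) / (Gamma s * β ^ ((1:ℝ)/2))))^2 := by
  have hZae : AEMeasurable Z P := hZm.aemeasurable
  have hWae : AEMeasurable W P := hWm.aemeasurable
  have hsqm : Measurable (fun x : ℝ => x ^ 2) := measurable_id.pow_const 2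
  -- Z² integrable and mean 1
  have hZsq : Integrable (fun ω => (Z ω)^2) P :=
    (integrable_map_measure (f := Z) (g := fun x : ℝ => x^2)
      (by rw [hZl]; exact hsqm.aestronglyMeasurable) hZae).mp (by rw [hZl]; exact gauss_sq.1)
  have hZsqv : ∫ ω, (Z ω)^2 ∂P = 1 :=
    ((integral_map hZae (by rw [hZl]; exact hsqm.aestronglyMeasurable)
      (f := fun x : ℝ => x ^ 2)).symm.trans (by rw [hZl, gauss_sq.2]) :)
  have hZabs : Integrable (fun ω => |Z ω|) P :=
    (integrable_map_measure (g := fun x : ℝ => |x|)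
      (by rw [hZl]; exact measurable_abs.aestronglyMeasurable) hZae).mp
      (by rw [hZl]; exact gauss_abs.1)
  have hZabsv : ∫ ω, |Z ω| ∂P = ∫ x, |x| ∂(gaussianReal 0 1) :=
    ((integral_map hZae (by rw [hZl]; exact measurable_abs.aestronglyMeasurable)
      (f := fun x : ℝ => |x|)).symm.trans (by rw [hZl]) :)
  -- W moments
  have hsqrtm : Measurable (fun x : ℝ => Real.sqrt x) := Real.continuous_sqrt.measurable
  have hWsqG := gamma_moment hs hβ zero_le_one
    (f := fun x : ℝ => Real.sqrt x ^ 2) (hsqrtm.pow_const 2)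
    (fun x hx => by show Real.sqrt x ^ 2 = x ^ (1:ℝ); rw [Real.sq_sqrt hx.le, Real.rpow_one])
  have hWrtG := gamma_moment hs hβ (by norm_num : (0:ℝ) ≤ 1/2)
    (f := fun x : ℝ => Real.sqrt x) hsqrtm (fun x _ => by show Real.sqrt x = x ^ ((1:ℝ)/2); rw [Real.sqrt_eq_rpow])
  have hWsq : Integrable (fun ω => Real.sqrt (W ω) ^ 2) P :=
    (integrable_map_measure (g := fun x : ℝ => Real.sqrt x ^ 2)
      (by rw [hWl]; exact (hsqrtm.pow_const 2).aestronglyMeasurable) hWae).mp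
      (by rw [hWl]; exact hWsqG.1)
  have hΓs : Gamma s ≠ 0 := (Real.Gamma_pos_of_pos hs).ne'
  have hWsqv : ∫ ω, Real.sqrt (W ω) ^ 2 ∂P = s / β := by
    refine ((integral_map hWae (by rw [hWl]; exact (hsqrtm.pow_const 2).aestronglyMeasurable)
      (f := fun x : ℝ => Real.sqrt x ^ 2)).symm.trans ?_ :)
    rw [hWl, hWsqG.2, Real.rpow_one, Real.Gamma_add_one hs.ne']
    field_simp
    try ring
  have hWrt : Integrable (fun ω => Real.sqrt (W ω)) P :=
    (integrable_map_measure (g := fun x : ℝ => Real.sqrt x)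
      (by rw [hWl]; exact hsqrtm.aestronglyMeasurable) hWae).mp
      (by rw [hWl]; exact hWrtG.1)
  have hWrtv : ∫ ω, Real.sqrt (W ω) ∂P
      = Gamma (s + 1/2) / (Gamma s * β ^ ((1:ℝ)/2)) := by
    refine ((integral_map hWae (by rw [hWl]; exact hsqrtm.aestronglyMeasurable)
      (f := fun x : ℝ => Real.sqrt x)).symm.trans ?_ :)
    rw [hWl, hWrtG.2]
    try norm_num
  -- independence of transformed variables
  have hiA : IndepFun (fun ω => (Z ω)^2) (fun ω => Real.sqrt (W ω) ^ 2) P :=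
    hind.comp hsqm (hsqrtm.pow_const 2)
  have hiB : IndepFun (fun ω => |Z ω|) (fun ω => Real.sqrt (W ω)) P :=
    hind.comp measurable_abs hsqrtm
  -- the increment
  set Δ : Ω → ℝ := fun ω => σ * |Z ω| * Real.sqrt (W ω) with hΔdef
  have hΔm : Measurable Δ := ((hZm.abs.const_mul σ).mul (hsqrtm.comp hWm))
  have eqsq : (fun ω => Δ ω ^ 2) = fun ω => σ^2 * ((Z ω)^2 * (Real.sqrt (W ω))^2) := by
    funext ω; simp only [hΔdef]; rw [mul_pow, mul_pow, sq_abs]; ring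
  have hΔsq : Integrable (fun ω => Δ ω ^ 2) P := by
    rw [eqsq]; exact (hiA.integrable_mul hZsq hWsq).const_mul _
  have hmem : MemLp Δ 2 P :=
    (memLp_two_iff_integrable_sq hΔm.aestronglyMeasurable).mpr hΔsq
  have hEΔsq : ∫ ω, Δ ω ^ 2 ∂P = σ^2 * s / β := by
    have hmul : ∫ a, Z a ^ 2 * Real.sqrt (W a) ^ 2 ∂P
        = (∫ ω, (Z ω)^2 ∂P) * ∫ ω, Real.sqrt (W ω)^2 ∂P :=
      hiA.integral_fun_mul_eq_mul_integral (hZm.pow_const 2).aestronglyMeasurable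
        ((hsqrtm.comp hWm).pow_const 2).aestronglyMeasurable
    rw [eqsq, MeasureTheory.integral_const_mul, hmul, hZsqv, hWsqv]
    ring
  have hEΔ : ∫ ω, Δ ω ∂P
      = σ * (∫ x, |x| ∂(gaussianReal 0 1)) * (Gamma (s + 1/2) / (Gamma s * β ^ ((1:ℝ)/2))) := by
    have : (fun ω => Δ ω) = fun ω => σ * (|Z ω| * Real.sqrt (W ω)) := by
      funext ω; simp only [hΔdef]; ring
    have hmul : ∫ a, |Z a| * Real.sqrt (W a) ∂P
        = (∫ ω, |Z ω| ∂P) * ∫ ω, Real.sqrt (W ω) ∂P :=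
      hiB.integral_fun_mul_eq_mul_integral hZm.abs.aestronglyMeasurable (hsqrtm.comp hWm).aestronglyMeasurable
    rw [this, MeasureTheory.integral_const_mul, hmul, hZabsv, hWrtv]
    ring
  refine ⟨hmem, ?_⟩
  rw [variance_eq_sub hmem]
  have h1 : ∫ ω, (Δ^2) ω ∂P = σ^2*s/β := hEΔsq
  rw [h1, hEΔ]


end VarHelpers

open MeasureTheory ProbabilityTheory Real Filter

/-- **Limit of the variance of the variation of centered gamma-gh Lévy increments.**
Along partitions `π_k` of `[0, T]` with mesh tending to `0`, if for each `k` the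
`Δ_{k,j} = σ |Z_{k,j}| √(W_{k,j})`, `0 ≤ j ≤ ℓ(k) − 1`, are independent, with `Z_{k,j}`
standard normal independent of `W_{k,j} ~ Gamma(a δ_{k,j}, β)`, and `V_k = Σ_j Δ_{k,j}`,
then `Var(V_k) → σ² a T / β` as `k → ∞`. -/
theorem variance_variation_tendsto_gamma_gh
    {Ω : Type*} [MeasurableSpace Ω] (P : Measure Ω) [IsProbabilityMeasure P]
    (a β σ T : ℝ) (ha : 0 < a) (hβ : 0 < β) (hσ : 0 < σ) (hT : 0 < T)
    -- the partitions `π_k = (0 = t k 0 < t k 1 < ⋯ < t k (ℓ k) = T)`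
    (ℓ : ℕ → ℕ) (hℓ : ∀ k, 0 < ℓ k) (t : ℕ → ℕ → ℝ)
    (ht0 : ∀ k, t k 0 = 0) (htT : ∀ k, t k (ℓ k) = T)
    (hmono : ∀ k, ∀ j < ℓ k, t k j < t k (j + 1))
    -- the mesh `m(π_k)` tends to `0`
    (hmesh : Tendsto
      (fun k => (Finset.range (ℓ k)).sup'
        (Finset.nonempty_range_iff.mpr (hℓ k).ne') (fun j => t k (j + 1) - t k j))
      atTop (nhds 0))
    -- the random variables
    (Z W : ℕ → ℕ → Ω → ℝ)
    (hZmeas : ∀ k j, Measurable (Z k j)) (hWmeas : ∀ k j, Measurable (W k j))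
    (hZlaw : ∀ k, ∀ j < ℓ k, Measure.map (Z k j) P = gaussianReal 0 1)
    (hWlaw : ∀ k, ∀ j < ℓ k,
      Measure.map (W k j) P = gammaMeasure (a * (t k (j + 1) - t k j)) β)
    (hindep : ∀ k j, IndepFun (Z k j) (W k j) P)
    (Δ : ℕ → ℕ → Ω → ℝ)
    (hΔ : ∀ k j ω, Δ k j ω = σ * |Z k j ω| * Real.sqrt (W k j ω))
    -- for each `k`, the family `(Δ_{k,j})_{0 ≤ j ≤ ℓ(k) − 1}` is independent
    (hΔindep : ∀ k, iIndepFun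
      (fun j : Fin (ℓ k) => Δ k (j : ℕ)) P)
    (V : ℕ → Ω → ℝ) (hV : ∀ k ω, V k ω = ∑ j ∈ Finset.range (ℓ k), Δ k j ω) :
    Tendsto (fun k => variance (V k) P) atTop (nhds (σ ^ 2 * a * T / β)) := by
  -- upper bound for `Gamma` on `[1/2, 1/2 + aT]`
  obtain ⟨M, hM0, hM⟩ : ∃ M > 0, ∀ y ∈ Set.Icc (1/2 : ℝ) (1/2 + a*T), Real.Gamma y ≤ M := by
    have hne : (Set.Icc (1/2 : ℝ) (1/2 + a*T)).Nonempty := ⟨1/2, by constructor <;> nlinarith⟩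
    have hcont : ContinuousOn Real.Gamma (Set.Icc (1/2 : ℝ) (1/2 + a*T)) := fun x hx =>
      (Real.differentiableAt_Gamma (fun m => by
        have h1 : (0:ℝ) < x := lt_of_lt_of_le (by norm_num) hx.1
        have h2 : -(m:ℝ) ≤ 0 := neg_nonpos.mpr (Nat.cast_nonneg m)
        linarith)).continuousAt.continuousWithinAt
    obtain ⟨x₀, hx₀, hmax⟩ := isCompact_Icc.exists_isMaxOn hne hcont
    exact ⟨Real.Gamma x₀, Real.Gamma_pos_of_pos (lt_of_lt_of_le (by norm_num) hx₀.1),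
      fun y hy => hmax hy⟩
  -- positive lower bound for `Gamma` on `[1, 1 + aT]`
  obtain ⟨c₀, hc₀, hc₀le⟩ : ∃ c₀ > 0, ∀ y ∈ Set.Icc (1:ℝ) (1 + a*T), c₀ ≤ Real.Gamma y := by
    have hne : (Set.Icc (1:ℝ) (1 + a*T)).Nonempty := ⟨1, by constructor <;> nlinarith⟩
    have hcont : ContinuousOn Real.Gamma (Set.Icc (1:ℝ) (1 + a*T)) := fun x hx =>
      (Real.differentiableAt_Gamma (fun m => by
        have h1 : (0:ℝ) < x := lt_of_lt_of_le (by norm_num) hx.1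
        have h2 : -(m:ℝ) ≤ 0 := neg_nonpos.mpr (Nat.cast_nonneg m)
        linarith)).continuousAt.continuousWithinAt
    obtain ⟨x₀, hx₀, hmin⟩ := isCompact_Icc.exists_isMinOn hne hcont
    exact ⟨Real.Gamma x₀, Real.Gamma_pos_of_pos (lt_of_lt_of_le (by norm_num) hx₀.1),
      fun y hy => hmin hy⟩
  set c : ℝ := ∫ x, |x| ∂(gaussianReal 0 1) with hcdef
  have hc1 : c ≤ 1 := gauss_abs.2
  have hc0 : 0 ≤ c := integral_nonneg fun x => abs_nonneg x
  set δ : ℕ → ℕ → ℝ := fun k j => t k (j+1) - t k j with hδdef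
  have hδpos : ∀ k, ∀ j < ℓ k, 0 < δ k j := fun k j hj => sub_pos.mpr (hmono k j hj)
  have hδsum : ∀ k, ∑ j ∈ Finset.range (ℓ k), δ k j = T := fun k => by
    rw [show (∑ j ∈ Finset.range (ℓ k), δ k j)
        = ∑ j ∈ Finset.range (ℓ k), (t k (j+1) - t k j) from rfl,
      Finset.sum_range_sub (fun j => t k j) (ℓ k), htT, ht0, sub_zero]
  have hδT : ∀ k, ∀ j < ℓ k, δ k j ≤ T := by
    intro k j hj
    rw [← hδsum k]
    exact Finset.single_le_sum (fun i hi => (hδpos k i (Finset.mem_range.mp hi)).le)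
      (Finset.mem_range.mpr hj)
  set G : ℕ → ℕ → ℝ := fun k j =>
    Real.Gamma (a * δ k j + 1/2) / (Real.Gamma (a * δ k j) * β ^ ((1:ℝ)/2)) with hGdef
  have hβr : 0 < β ^ ((1:ℝ)/2) := Real.rpow_pos_of_pos hβ _
  -- per-increment variance
  have key : ∀ k, ∀ j < ℓ k, MemLp (Δ k j) 2 P ∧
      variance (Δ k j) P = σ^2 * (a * δ k j) / β - (σ * c * G k j)^2 := by
    intro k j hj
    have hfun : Δ k j = fun ω => σ * |Z k j ω| * Real.sqrt (W k j ω) := funext (hΔ k j)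
    have hs : 0 < a * δ k j := mul_pos ha (hδpos k j hj)
    have h := var_increment P σ β (a * δ k j) hβ hs (Z k j) (W k j)
      (hZmeas k j) (hWmeas k j) (hZlaw k j hj) (hWlaw k j hj) (hindep k j)
    rw [hfun]
    exact h
  -- bound on `G`
  have hGnn : ∀ k, ∀ j < ℓ k, 0 ≤ G k j := by
    intro k j hj
    have hs : 0 < a * δ k j := mul_pos ha (hδpos k j hj)
    exact div_nonneg (Real.Gamma_nonneg_of_nonneg (by positivity))
      (mul_nonneg (Real.Gamma_nonneg_of_nonneg hs.le) hβr.le)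
  have hGle : ∀ k, ∀ j < ℓ k, G k j ≤ M * (a * δ k j) / (c₀ * β ^ ((1:ℝ)/2)) := by
    intro k j hj
    have hs : 0 < a * δ k j := mul_pos ha (hδpos k j hj)
    have hsT : a * δ k j ≤ a * T := mul_le_mul_of_nonneg_left (hδT k j hj) ha.le
    show Real.Gamma (a * δ k j + 1/2) / (Real.Gamma (a * δ k j) * β ^ ((1:ℝ)/2))
      ≤ M * (a * δ k j) / (c₀ * β ^ ((1:ℝ)/2))
    clear_value δ c
    have hnum : Real.Gamma (a * δ k j + 1/2) ≤ M := hM _ ⟨by linarith, by linarith⟩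
    have h1 : c₀ ≤ (a * δ k j) * Real.Gamma (a * δ k j) := by
      have h1' : c₀ ≤ Real.Gamma (a * δ k j + 1) := hc₀le _ ⟨by linarith, by linarith⟩
      rwa [Real.Gamma_add_one hs.ne'] at h1'
    have hΓpos : 0 < Real.Gamma (a * δ k j) := Real.Gamma_pos_of_pos hs
    have hdenpos : 0 < Real.Gamma (a * δ k j) * β ^ ((1:ℝ)/2) := mul_pos hΓpos hβr
    have hnn : 0 ≤ Real.Gamma (a * δ k j + 1/2) := Real.Gamma_nonneg_of_nonneg (by positivity)
    rw [div_le_div_iff₀ hdenpos (by positivity)]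
    have hmain : Real.Gamma (a * δ k j + 1/2) * c₀
        ≤ M * ((a * δ k j) * Real.Gamma (a * δ k j)) :=
      mul_le_mul hnum h1 hc₀.le hM0.le
    nlinarith [mul_le_mul_of_nonneg_right hmain hβr.le]
  -- variance of `V k`
  have hvar : ∀ k, variance (V k) P
      = σ^2*a*T/β - ∑ j ∈ Finset.range (ℓ k), (σ * c * G k j)^2 := by
    intro k
    have hVk : V k = ∑ j : Fin (ℓ k), Δ k (j:ℕ) := by
      funext ω
      rw [hV k ω, Finset.sum_apply]
      exact (Fin.sum_univ_eq_sum_range (fun j => Δ k j ω) (ℓ k)).symm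
    rw [hVk]
    have hvs := IndepFun.variance_sum (μ := P) (X := fun j : Fin (ℓ k) => Δ k (j:ℕ))
      (s := Finset.univ) (fun i _ => (key k i.val i.isLt).1)
      (fun i _ j _ hij => (hΔindep k).indepFun hij)
    rw [hvs]
    rw [Fin.sum_univ_eq_sum_range (fun j => variance (Δ k j) P) (ℓ k)]
    rw [Finset.sum_congr rfl (fun j hj => (key k j (Finset.mem_range.mp hj)).2)]
    rw [Finset.sum_sub_distrib]
    congr 1
    calc ∑ j ∈ Finset.range (ℓ k), σ^2 * (a * δ k j) / β
        = (σ^2 * a / β) * ∑ j ∈ Finset.range (ℓ k), δ k j := by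
          rw [Finset.mul_sum]; exact Finset.sum_congr rfl fun j _ => by ring
      _ = σ^2*a*T/β := by rw [hδsum]; ring
  -- squeeze the remainder term to 0
  have h0R : ∀ k, 0 ≤ ∑ j ∈ Finset.range (ℓ k), (σ * c * G k j)^2 :=
    fun k => Finset.sum_nonneg fun j _ => sq_nonneg _
  set Q : ℝ := (σ * M * a / (c₀ * β ^ ((1:ℝ)/2)))^2 with hQdef
  have hQ0 : 0 ≤ Q := sq_nonneg _
  set mesh : ℕ → ℝ := fun k => (Finset.range (ℓ k)).sup'
      (Finset.nonempty_range_iff.mpr (hℓ k).ne') (fun j => t k (j + 1) - t k j) with hmeshdef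
  have hδle : ∀ k, ∀ j < ℓ k, δ k j ≤ mesh k := fun k j hj =>
    Finset.le_sup' (fun j => t k (j + 1) - t k j) (Finset.mem_range.mpr hj)
  have hRle : ∀ k, (∑ j ∈ Finset.range (ℓ k), (σ * c * G k j)^2) ≤ (Q * T) * mesh k := by
    intro k
    have hterm : ∀ j < ℓ k, (σ * c * G k j)^2 ≤ Q * (mesh k * δ k j) := by
      intro j hj
      have hs : 0 < a * δ k j := mul_pos ha (hδpos k j hj)
      have h1 : σ * c * G k j ≤ σ * (M * (a * δ k j) / (c₀ * β ^ ((1:ℝ)/2))) := by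
        have h2 : c * G k j ≤ 1 * (M * (a * δ k j) / (c₀ * β ^ ((1:ℝ)/2))) :=
          mul_le_mul hc1 (hGle k j hj) (hGnn k j hj) zero_le_one
        have h3 := mul_le_mul_of_nonneg_left (h2.trans_eq (one_mul _)) hσ.le
        calc σ * c * G k j = σ * (c * G k j) := by ring
          _ ≤ _ := h3
      have hnn1 : 0 ≤ σ * c * G k j :=
        mul_nonneg (mul_nonneg hσ.le hc0) (hGnn k j hj)
      have hsq : (σ * c * G k j)^2 ≤ (σ * (M * (a * δ k j) / (c₀ * β ^ ((1:ℝ)/2))))^2 :=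
        pow_le_pow_left₀ hnn1 h1 2
      have heq : (σ * (M * (a * δ k j) / (c₀ * β ^ ((1:ℝ)/2))))^2 = Q * (δ k j)^2 := by
        rw [hQdef]; field_simp
      have hδm : (δ k j)^2 ≤ mesh k * δ k j := by
        rw [sq]; exact mul_le_mul_of_nonneg_right (hδle k j hj) (hδpos k j hj).le
      calc (σ * c * G k j)^2 ≤ Q * (δ k j)^2 := by rw [← heq]; exact hsq
        _ ≤ Q * (mesh k * δ k j) := mul_le_mul_of_nonneg_left hδm hQ0
    calc (∑ j ∈ Finset.range (ℓ k), (σ * c * G k j)^2)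
        ≤ ∑ j ∈ Finset.range (ℓ k), Q * (mesh k * δ k j) :=
          Finset.sum_le_sum fun j hj => hterm j (Finset.mem_range.mp hj)
      _ = (Q * mesh k) * ∑ j ∈ Finset.range (ℓ k), δ k j := by
          rw [Finset.mul_sum]
          exact Finset.sum_congr rfl fun j _ => by ring
      _ = (Q * T) * mesh k := by rw [hδsum]; ring
  have hRlim : Tendsto (fun k => ∑ j ∈ Finset.range (ℓ k), (σ * c * G k j)^2)
      atTop (nhds 0) := by
    refine squeeze_zero h0R hRle ?_
    have h := hmesh.const_mul (Q * T)
    simpa using h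
  have hfin : (fun k => variance (V k) P)
      = fun k => σ^2*a*T/β - ∑ j ∈ Finset.range (ℓ k), (σ * c * G k j)^2 := funext hvar
  rw [hfin]
  have hfinal : Tendsto (fun k => σ^2*a*T/β - ∑ j ∈ Finset.range (ℓ k), (σ * c * G k j)^2)
      atTop (nhds (σ^2*a*T/β - 0)) := Tendsto.sub tendsto_const_nhds hRlim
  simpa using hfinal
end

section
/- Fix a > 0, β > 0, σ > 0, T > 0. Let (Ω, 𝔄, P) be a probability space and Y : [0, T] × Ω → ℝ a stochastic process such that Y(0) = 0 a.s., the increments of Y over pairwise disjoint intervals are independent, and for all 0 ≤ s < t ≤ T the increment Y(t) − Y(s) has the law of σ Z √W with Z standard normal independent of W ~ Gamma(a(t − s), β) (the centered gamma-gh increment law). For each k ≥ 1 let π_k = (0 = t₀^{(k)} < ⋯ < t_{ℓ(k)}^{(k)} = T) be a partition of [0, T] with mesh tending to 0 as k → ∞, and let V_k = Σ_{j=0}^{ℓ(k)−1} |Y(t_{j+1}^{(k)}) − Y(t_j^{(k)})|. Then P(sup_{k ≥ 1} V_k = +∞) = 0; in particular, almost surely limsup_{k → ∞} V_k < ∞ (the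 process is almost surely of asymptotic bounded variation). -/
open MeasureTheory ProbabilityTheory Real Filter

/-- The centered gamma-gh increment law of parameter `(s, β, σ)`: the law of `σ Z √W`
with `Z` standard normal independent of `W ~ Gamma(s, β)`. -/
noncomputable def centeredGammaGH (s β σ : ℝ) : Measure ℝ :=
  Measure.map (fun p : ℝ × ℝ => σ * p.1 * Real.sqrt p.2)
    ((gaussianReal 0 1).prod (gammaMeasure s β))


open scoped ENNReal NNReal


lemma chainMono {α : Type*} [Preorder α] {u : ℕ → α} {m : ℕ}
    (h : ∀ i < m, u i ≤ u (i + 1)) : ∀ j ≤ m, ∀ i ≤ j, u i ≤ u j := by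
  intro j
  induction j with
  | zero => intro _ i hi; simp [Nat.le_zero.mp hi]
  | succ n ih =>
    intro hj i hi
    rcases eq_or_lt_of_le hi with rfl | hlt
    · exact le_rfl
    · exact le_trans (ih (le_trans (Nat.le_succ n) hj) i (Nat.lt_succ_iff.mp hlt))
        (h n (Nat.lt_of_lt_of_le (Nat.lt_succ_self n) hj))

lemma abs_tele (F : ℕ → ℝ) {a b : ℕ} (hab : a ≤ b) :
    |F b - F a| ≤ ∑ i ∈ Finset.Ico a b, |F (i + 1) - F i| := by
  have h : F b - F a = ∑ i ∈ Finset.Ico a b, (F (i + 1) - F i) := by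
    rw [Finset.sum_Ico_eq_sub _ hab, Finset.sum_range_sub, Finset.sum_range_sub]
    ring
  rw [h]
  exact Finset.abs_sum_le_sum_abs _ _

lemma sum_blocks (g : ℕ → ℝ) (φ : ℕ → ℕ) : ∀ m, (∀ j < m, φ j ≤ φ (j + 1)) →
    ∑ j ∈ Finset.range m, ∑ i ∈ Finset.Ico (φ j) (φ (j + 1)), g i
      = ∑ i ∈ Finset.Ico (φ 0) (φ m), g i := by
  intro m
  induction m with
  | zero => simp
  | succ n ih =>
    intro h
    rw [Finset.sum_range_succ, ih (fun j hj => h j (Nat.lt_succ_of_lt hj)),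
      Finset.sum_Ico_consecutive _ (chainMono h n (Nat.le_succ n) 0 (Nat.zero_le n))
        (h n (Nat.lt_succ_self n))]

lemma var_refine (f : ℝ → ℝ) {m n : ℕ} {u v : ℕ → ℝ}
    (hu : ∀ j < m, u j < u (j + 1)) (hv : ∀ i < n, v i < v (i + 1))
    (hsub : ∀ j ≤ m, ∃ i ≤ n, v i = u j) :
    ∑ j ∈ Finset.range m, |f (u (j + 1)) - f (u j)|
      ≤ ∑ i ∈ Finset.range n, |f (v (i + 1)) - f (v i)| := by
  choose! φ hφn hφv using hsub
  have hvmono : ∀ p ≤ n, ∀ q ≤ p, v q ≤ v p := chainMono (fun i hi => (hv i hi).le)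
  have hstep : ∀ j < m, φ j < φ (j + 1) := by
    intro j hj
    by_contra hle
    push_neg at hle
    have h1 : v (φ (j + 1)) ≤ v (φ j) := hvmono (φ j) (hφn j hj.le) (φ (j + 1)) hle
    rw [hφv j hj.le, hφv (j + 1) hj] at h1
    exact absurd (hu j hj) (not_lt.mpr h1)
  calc ∑ j ∈ Finset.range m, |f (u (j + 1)) - f (u j)|
      ≤ ∑ j ∈ Finset.range m,
          ∑ i ∈ Finset.Ico (φ j) (φ (j + 1)), |f (v (i + 1)) - f (v i)| := by
        refine Finset.sum_le_sum fun j hj => ?_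
        have hj' := Finset.mem_range.mp hj
        have h2 := abs_tele (fun i => f (v i)) (hstep j hj').le
        rw [← hφv j hj'.le, ← hφv (j + 1) hj']
        exact h2
    _ = ∑ i ∈ Finset.Ico (φ 0) (φ m), |f (v (i + 1)) - f (v i)| :=
        sum_blocks _ _ m (fun j hj => (hstep j hj).le)
    _ ≤ ∑ i ∈ Finset.range n, |f (v (i + 1)) - f (v i)| := by
        refine Finset.sum_le_sum_of_subset_of_nonneg ?_ fun i _ _ => abs_nonneg _
        intro i hi
        rw [Finset.mem_Ico] at hi
        exact Finset.mem_range.mpr (lt_of_lt_of_le hi.2 (hφn m le_rfl))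

lemma exp_neg_two_le_Gamma {x : ℝ} (hx : 1 ≤ x) : Real.exp (-2) ≤ Real.Gamma x := by
  have hx0 : 0 < x := lt_of_lt_of_le one_pos hx
  rw [Real.Gamma_eq_integral hx0]
  have hInt : MeasureTheory.IntegrableOn (fun t : ℝ => Real.exp (-t) * t ^ (x - 1))
      (Set.Ioi 0) := Real.GammaIntegral_convergent hx0
  have hsub : Set.Icc (1 : ℝ) 2 ⊆ Set.Ioi 0 := fun t ht => lt_of_lt_of_le one_pos ht.1
  have h1 : Real.exp (-2) ≤ ∫ t in Set.Icc (1 : ℝ) 2, Real.exp (-t) * t ^ (x - 1) := by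
    have hconst : ∫ _t in Set.Icc (1 : ℝ) 2, Real.exp (-2) = Real.exp (-2) := by
      rw [setIntegral_const, Real.volume_real_Icc]
      norm_num
    rw [← hconst]
    refine setIntegral_mono_on ?_ ?_ measurableSet_Icc ?_
    · exact integrableOn_const (by rw [Real.volume_Icc]; norm_num)
    · exact hInt.mono_set hsub
    · intro s hs
      have h2 : Real.exp (-2) ≤ Real.exp (-s) := Real.exp_le_exp.mpr (by linarith [hs.2])
      have h3 : (1 : ℝ) ≤ s ^ (x - 1) := Real.one_le_rpow hs.1 (by linarith)
      nlinarith [Real.exp_pos (-s)]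
  refine le_trans h1 (setIntegral_mono_set hInt ?_ (HasSubset.Subset.eventuallyLE hsub))
  filter_upwards [ae_restrict_mem measurableSet_Ioi] with s hs
  have : (0:ℝ) < s := hs
  positivity

lemma Gamma_le_max {p q x : ℝ} (hp : 0 < p) (hpq : p ≤ q) (hx : x ∈ Set.Icc p q) :
    Real.Gamma x ≤ max (Real.Gamma p) (Real.Gamma q) :=
  Real.convexOn_Gamma.le_on_segment (Set.mem_Ioi.mpr hp)
    (Set.mem_Ioi.mpr (lt_of_lt_of_le hp hpq)) ((segment_eq_Icc hpq) ▸ hx)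


lemma lintegral_sqrt_gammaMeasure {s β : ℝ} (hs : 0 < s) (hβ : 0 < β) :
    ∫⁻ x, ENNReal.ofReal (Real.sqrt x) ∂(gammaMeasure s β)
      = ENNReal.ofReal (Real.Gamma (s + 1 / 2) / (Real.Gamma s * Real.sqrt β)) := by
  have hm : Measurable fun x : ℝ => ENNReal.ofReal (Real.sqrt x) :=
    Real.continuous_sqrt.measurable.ennreal_ofReal
  rw [gammaMeasure, lintegral_withDensity_eq_lintegral_mul _ (show Measurable (gammaPDF s β) from (measurable_gammaPDFReal s β).ennreal_ofReal) hm]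
  have hind : ∀ x : ℝ, (gammaPDF s β * fun x => ENNReal.ofReal (Real.sqrt x)) x
      = (Set.Ioi (0:ℝ)).indicator
          (fun x => gammaPDF s β x * ENNReal.ofReal (Real.sqrt x)) x := by
    intro x
    rcases le_or_gt x 0 with hx | hx
    · have h1 : Real.sqrt x = 0 := Real.sqrt_eq_zero'.mpr hx
      simp [Set.indicator_of_notMem, Set.mem_Ioi, not_lt.mpr hx, h1]
    · simp [Set.indicator_of_mem, Set.mem_Ioi, hx]
  simp_rw [hind]
  rw [lintegral_indicator measurableSet_Ioi _]
  have hcongr : ∀ x ∈ Set.Ioi (0:ℝ), gammaPDF s β x * ENNReal.ofReal (Real.sqrt x)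
      = ENNReal.ofReal (β ^ s / Real.Gamma s
          * (x ^ (s + 1 / 2 - 1) * Real.exp (-(β * x)))) := by
    intro x hx
    have hx0 : (0:ℝ) < x := hx
    rw [gammaPDF_eq, if_pos hx0.le, ← ENNReal.ofReal_mul (by positivity)]
    congr 1
    rw [Real.sqrt_eq_rpow]
    rw [show s + 1 / 2 - 1 = (s - 1) + (1 / 2 : ℝ) by ring, Real.rpow_add hx0]
    ring
  rw [setLIntegral_congr_fun measurableSet_Ioi hcongr]
  have hc : (0:ℝ) ≤ β ^ s / Real.Gamma s := by positivity
  simp_rw [ENNReal.ofReal_mul hc]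
  rw [lintegral_const_mul' _ _ ENNReal.ofReal_ne_top]
  have hInt : IntegrableOn (fun x : ℝ => x ^ (s + 1 / 2 - 1) * Real.exp (-(β * x)))
      (Set.Ioi 0) := by
    have h := integrableOn_rpow_mul_exp_neg_mul_rpow
      (p := 1) (s := s + 1 / 2 - 1) (b := β) (by linarith) zero_lt_one hβ
    simpa [Real.rpow_one, neg_mul] using h
  rw [← ofReal_integral_eq_lintegral_ofReal hInt ?_]
  · rw [show ∫ x in Set.Ioi (0:ℝ), x ^ (s + 1 / 2 - 1) * Real.exp (-(β * x))
        = (1 / β) ^ (s + 1 / 2) * Real.Gamma (s + 1 / 2) from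
      Real.integral_rpow_mul_exp_neg_mul_Ioi (by linarith) hβ]
    rw [← ENNReal.ofReal_mul hc]
    congr 1
    have hΓ : Real.Gamma s ≠ 0 := (Real.Gamma_pos_of_pos hs).ne'
    have h1 : (1 / β) ^ (s + 1 / 2 : ℝ) = (β ^ (s + 1 / 2 : ℝ))⁻¹ := by
      rw [one_div, Real.inv_rpow hβ.le]
    have h2 : β ^ (s + 1 / 2 : ℝ) = β ^ s * Real.sqrt β := by
      rw [Real.rpow_add hβ, Real.sqrt_eq_rpow]
    have hβs : (0:ℝ) < β ^ s := Real.rpow_pos_of_pos hβ s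
    have hsβ : (0:ℝ) < Real.sqrt β := Real.sqrt_pos.mpr hβ
    rw [h1, h2]
    field_simp
  · filter_upwards [ae_restrict_mem measurableSet_Ioi] with x hx
    have hx0 : (0:ℝ) < x := hx
    positivity

lemma lintegral_abs_gaussian_le :
    ∫⁻ z, ENNReal.ofReal |z| ∂(gaussianReal 0 1) ≤ 2 := by
  rw [gaussianReal_of_var_ne_zero 0 one_ne_zero,
    lintegral_withDensity_eq_lintegral_mul _ (measurable_gaussianPDF 0 1)
      measurable_abs.ennreal_ofReal]
  have hb : (0:ℝ) < 1 / 4 := by norm_num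
  have hpoint : ∀ z : ℝ, (gaussianPDF 0 1 * fun z => ENNReal.ofReal |z|) z
      ≤ ENNReal.ofReal ((Real.sqrt (2 * π))⁻¹ * Real.exp (-(1 / 4) * z ^ 2)) := by
    intro z
    have h1 : (gaussianPDF 0 1 * fun z => ENNReal.ofReal |z|) z
        = ENNReal.ofReal (gaussianPDFReal 0 1 z * |z|) := by
      simp [gaussianPDF, ENNReal.ofReal_mul (gaussianPDFReal_nonneg 0 1 z)]
    rw [h1]
    apply ENNReal.ofReal_le_ofReal
    have h2 : gaussianPDFReal 0 1 z = (Real.sqrt (2 * π))⁻¹ * Real.exp (-z ^ 2 / 2) := by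
      simp [gaussianPDFReal]
    rw [h2]
    have habs : |z| ≤ Real.exp (z ^ 2 / 4) := by
      have h3 := Real.add_one_le_exp (z ^ 2 / 4)
      nlinarith [sq_nonneg (|z| - 2), sq_abs z]
    have h4 : Real.exp (-z ^ 2 / 2) * |z| ≤ Real.exp (-(1 / 4) * z ^ 2) := by
      calc Real.exp (-z ^ 2 / 2) * |z| ≤ Real.exp (-z ^ 2 / 2) * Real.exp (z ^ 2 / 4) :=
            mul_le_mul_of_nonneg_left habs (Real.exp_pos _).le
        _ = Real.exp (-(1 / 4) * z ^ 2) := by rw [← Real.exp_add]; ring_nf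
    calc (Real.sqrt (2 * π))⁻¹ * Real.exp (-z ^ 2 / 2) * |z|
        = (Real.sqrt (2 * π))⁻¹ * (Real.exp (-z ^ 2 / 2) * |z|) := by ring
      _ ≤ (Real.sqrt (2 * π))⁻¹ * Real.exp (-(1 / 4) * z ^ 2) :=
          mul_le_mul_of_nonneg_left h4 (by positivity)
  refine le_trans (lintegral_mono hpoint) ?_
  have hint : Integrable (fun z : ℝ => (Real.sqrt (2 * π))⁻¹ * Real.exp (-(1 / 4) * z ^ 2)) :=
    (integrable_exp_neg_mul_sq hb).const_mul _
  rw [← ofReal_integral_eq_lintegral_ofReal hint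
    (Eventually.of_forall fun z => by positivity)]
  rw [MeasureTheory.integral_const_mul, integral_gaussian]
  have hval : (Real.sqrt (2 * π))⁻¹ * Real.sqrt (π / (1 / 4)) ≤ 2 := by
    have h1 : π / (1 / 4) = π * 4 := by ring
    have h2 : Real.sqrt (π * 4) = Real.sqrt π * 2 := by
      rw [Real.sqrt_mul Real.pi_pos.le, show (4:ℝ) = 2 ^ 2 by norm_num,
        Real.sqrt_sq (by norm_num : (0:ℝ) ≤ 2)]
    have h3 : (Real.sqrt (2 * π))⁻¹ ≤ (Real.sqrt π)⁻¹ := by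
      apply inv_anti₀ (Real.sqrt_pos.mpr Real.pi_pos)
      exact Real.sqrt_le_sqrt (by nlinarith [Real.pi_pos])
    have hπ : Real.sqrt π ≠ 0 := (Real.sqrt_pos.mpr Real.pi_pos).ne'
    calc (Real.sqrt (2 * π))⁻¹ * Real.sqrt (π / (1 / 4))
        ≤ (Real.sqrt π)⁻¹ * (Real.sqrt π * 2) := by
          rw [h1, h2]
          exact mul_le_mul_of_nonneg_right h3 (by positivity)
      _ = 2 := by field_simp
  calc ENNReal.ofReal ((Real.sqrt (2 * π))⁻¹ * Real.sqrt (π / (1 / 4)))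
      ≤ ENNReal.ofReal 2 := ENNReal.ofReal_le_ofReal hval
    _ = 2 := by norm_num

lemma centeredGammaGH_moment {β σ S : ℝ} (hβ : 0 < β) (hσ : 0 < σ) {s : ℝ}
    (hs : 0 < s) (hsS : s ≤ S) :
    ∫⁻ x, ENNReal.ofReal |x| ∂(centeredGammaGH s β σ)
      ≤ ENNReal.ofReal (σ * 2 * (max (Real.Gamma (1 / 2)) (Real.Gamma (S + 1 / 2))
          * (Real.exp 2 / Real.sqrt β)) * s) := by
  set M := max (Real.Gamma (1 / 2)) (Real.Gamma (S + 1 / 2)) with hM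
  have hMpos : 0 < M := lt_of_lt_of_le (Real.Gamma_pos_of_pos (by norm_num)) (le_max_left _ _)
  haveI := isProbabilityMeasure_gammaMeasure hs hβ
  have hg : Measurable fun p : ℝ × ℝ => σ * p.1 * Real.sqrt p.2 :=
    (measurable_fst.const_mul σ).mul (Real.continuous_sqrt.measurable.comp measurable_snd)
  rw [centeredGammaGH, lintegral_map measurable_abs.ennreal_ofReal hg,
    lintegral_prod (fun p : ℝ × ℝ => ENNReal.ofReal |σ * p.1 * Real.sqrt p.2|)
      (measurable_abs.ennreal_ofReal.comp hg).aemeasurable]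
  have hD : (0:ℝ) ≤ Real.Gamma (s + 1 / 2) / (Real.Gamma s * Real.sqrt β) := by
    have h1 : 0 < Real.Gamma (s + 1 / 2) := Real.Gamma_pos_of_pos (by linarith)
    have h2 : 0 < Real.Gamma s := Real.Gamma_pos_of_pos hs
    have h3 : 0 < Real.sqrt β := Real.sqrt_pos.mpr hβ
    positivity
  have hin : ∀ z : ℝ, ∫⁻ w, ENNReal.ofReal |σ * z * Real.sqrt w| ∂(gammaMeasure s β)
      = ENNReal.ofReal (σ * |z|)
        * ENNReal.ofReal (Real.Gamma (s + 1 / 2) / (Real.Gamma s * Real.sqrt β)) := by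
    intro z
    calc ∫⁻ w, ENNReal.ofReal |σ * z * Real.sqrt w| ∂(gammaMeasure s β)
        = ∫⁻ w, ENNReal.ofReal (σ * |z|) * ENNReal.ofReal (Real.sqrt w)
            ∂(gammaMeasure s β) := by
          refine lintegral_congr fun w => ?_
          rw [← ENNReal.ofReal_mul (by positivity)]
          congr 1
          rw [abs_mul, abs_mul, abs_of_pos hσ, abs_of_nonneg (Real.sqrt_nonneg w)]
      _ = ENNReal.ofReal (σ * |z|)
            * ∫⁻ w, ENNReal.ofReal (Real.sqrt w) ∂(gammaMeasure s β) :=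
          lintegral_const_mul' _ _ ENNReal.ofReal_ne_top
      _ = _ := by rw [lintegral_sqrt_gammaMeasure hs hβ]
  simp only [hin]
  rw [lintegral_mul_const' _ _ ENNReal.ofReal_ne_top]
  have hA : ∫⁻ z, ENNReal.ofReal (σ * |z|) ∂(gaussianReal 0 1) ≤ ENNReal.ofReal σ * 2 := by
    simp_rw [ENNReal.ofReal_mul hσ.le]
    rw [lintegral_const_mul' _ _ ENNReal.ofReal_ne_top]
    exact mul_le_mul_right lintegral_abs_gaussian_le _
  have hDle : Real.Gamma (s + 1 / 2) / (Real.Gamma s * Real.sqrt β)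
      ≤ M * (Real.exp 2 / Real.sqrt β) * s := by
    have hG1 : Real.exp (-2) ≤ Real.Gamma (s + 1) := exp_neg_two_le_Gamma (by linarith)
    have hG2 : Real.Gamma (s + 1 / 2) ≤ M :=
      Gamma_le_max (by norm_num) (by linarith) ⟨by linarith, by linarith⟩
    have hGs : Real.Gamma (s + 1) = s * Real.Gamma s := Real.Gamma_add_one hs.ne'
    have hΓpos : 0 < Real.Gamma s := Real.Gamma_pos_of_pos hs
    have hsβ : 0 < Real.sqrt β := Real.sqrt_pos.mpr hβ
    rw [div_le_iff₀ (by positivity)]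
    have key : M * (Real.exp 2 / Real.sqrt β) * s * (Real.Gamma s * Real.sqrt β)
        = M * Real.exp 2 * Real.Gamma (s + 1) := by
      rw [hGs]; field_simp
    rw [key]
    have h1 : M * Real.exp 2 * Real.exp (-2) = M := by
      rw [mul_assoc, ← Real.exp_add]; norm_num
    calc Real.Gamma (s + 1 / 2) ≤ M := hG2
      _ = M * Real.exp 2 * Real.exp (-2) := h1.symm
      _ ≤ M * Real.exp 2 * Real.Gamma (s + 1) :=
          mul_le_mul_of_nonneg_left hG1 (by positivity)
  refine le_trans (mul_le_mul' hA (ENNReal.ofReal_le_ofReal hDle)) (le_of_eq ?_)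
  rw [show (2:ℝ≥0∞) = ENNReal.ofReal 2 by norm_num, ← ENNReal.ofReal_mul hσ.le,
    ← ENNReal.ofReal_mul (by positivity)]
  congr 1
  ring

/-- **The centered gamma-gh Lévy process is a.s. of asymptotic bounded variation.**
Let `Y` be a process on `[0, T]` with `Y 0 = 0` a.s., independent increments, and
increments `Y t − Y s ∼ centeredGammaGH (a (t − s)) β σ`. Along any sequence of
partitions `π_k` of `[0, T]` with mesh tending to `0`, let `V_k` be the variation of `Y`
along `π_k`. Then `P(sup_k V_k = +∞) = 0`; in particular, almost surely
`limsup_k V_k < ∞`. -/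
theorem gamma_gh_levy_asymptotic_bounded_variation
    {Ω : Type*} [MeasurableSpace Ω] (P : Measure Ω) [IsProbabilityMeasure P]
    (a β σ T : ℝ) (ha : 0 < a) (hβ : 0 < β) (hσ : 0 < σ) (hT : 0 < T)
    -- the process on `[0, T]`
    (Y : ℝ → Ω → ℝ) (hYmeas : ∀ u, Measurable (Y u))
    (hY0 : ∀ᵐ ω ∂P, Y 0 ω = 0)
    -- independent increments
    (hYindep : ∀ (m : ℕ) (u : ℕ → ℝ), u 0 = 0 → (∀ i < m, u i < u (i + 1)) →
      u m ≤ T →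
      iIndepFun
        (fun j : Fin m => fun ω => Y (u ((j : ℕ) + 1)) ω - Y (u (j : ℕ)) ω) P)
    -- increment laws
    (hYlaw : ∀ u v : ℝ, 0 ≤ u → u < v → v ≤ T →
      Measure.map (fun ω => Y v ω - Y u ω) P = centeredGammaGH (a * (v - u)) β σ)
    -- the partitions `π_k = (0 = t k 0 < t k 1 < ⋯ < t k (ℓ k) = T)`
    (ℓ : ℕ → ℕ) (hℓ : ∀ k, 0 < ℓ k) (t : ℕ → ℕ → ℝ)
    (ht0 : ∀ k, t k 0 = 0) (htT : ∀ k, t k (ℓ k) = T)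
    (hmono : ∀ k, ∀ j < ℓ k, t k j < t k (j + 1))
    -- the mesh `m(π_k)` tends to `0`
    (hmesh : Tendsto
      (fun k => (Finset.range (ℓ k)).sup'
        (Finset.nonempty_range_iff.mpr (hℓ k).ne') (fun j => t k (j + 1) - t k j))
      atTop (nhds 0))
    -- the variations
    (V : ℕ → Ω → ℝ)
    (hV : ∀ k ω, V k ω = ∑ j ∈ Finset.range (ℓ k), |Y (t k (j + 1)) ω - Y (t k j) ω|) :
    P {ω | (⨆ k, ENNReal.ofReal (V k ω)) = ⊤} = 0 ∧
      ∀ᵐ ω ∂P, limsup (fun k => ENNReal.ofReal (V k ω)) atTop < ⊤ := by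
  classical
  -- the constant
  set C : ℝ := σ * 2 * (max (Real.Gamma (1 / 2)) (Real.Gamma (a * T + 1 / 2))
      * (Real.exp 2 / Real.sqrt β)) * a with hCdef
  have hC : 0 ≤ C := by
    have h1 : 0 < max (Real.Gamma (1 / 2)) (Real.Gamma (a * T + 1 / 2)) :=
      lt_of_lt_of_le (Real.Gamma_pos_of_pos (by norm_num)) (le_max_left _ _)
    positivity
  -- increment moment bound
  have hinc : ∀ u v : ℝ, 0 ≤ u → u < v → v ≤ T →
      ∫⁻ ω, ENNReal.ofReal |Y v ω - Y u ω| ∂P ≤ ENNReal.ofReal (C * (v - u)) := by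
    intro u v hu huv hvT
    have hmeas : Measurable fun ω => Y v ω - Y u ω := (hYmeas v).sub (hYmeas u)
    calc ∫⁻ ω, ENNReal.ofReal |Y v ω - Y u ω| ∂P
        = ∫⁻ x, ENNReal.ofReal |x| ∂(Measure.map (fun ω => Y v ω - Y u ω) P) :=
          (lintegral_map measurable_abs.ennreal_ofReal hmeas).symm
      _ = ∫⁻ x, ENNReal.ofReal |x| ∂(centeredGammaGH (a * (v - u)) β σ) := by
          rw [hYlaw u v hu huv hvT]
      _ ≤ ENNReal.ofReal (σ * 2 * (max (Real.Gamma (1 / 2)) (Real.Gamma (a * T + 1 / 2))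
            * (Real.exp 2 / Real.sqrt β)) * (a * (v - u))) :=
          centeredGammaGH_moment hβ hσ (by nlinarith) (by nlinarith)
      _ = ENNReal.ofReal (C * (v - u)) := by rw [hCdef]; congr 1; ring
  -- the refining partitions
  set S : ℕ → Finset ℝ := fun n =>
    (Finset.range (n + 1)).biUnion fun k => (Finset.range (ℓ k + 1)).image (t k) with hS
  have hmemS : ∀ n k j, k ≤ n → j ≤ ℓ k → t k j ∈ S n := by
    intro n k j hk hj
    exact Finset.mem_biUnion.mpr ⟨k, Finset.mem_range.mpr (Nat.lt_succ_of_le hk),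
      Finset.mem_image.mpr ⟨j, Finset.mem_range.mpr (Nat.lt_succ_of_le hj), rfl⟩⟩
  have hSsub : ∀ n, S n ⊆ S (n + 1) := by
    intro n x hx
    obtain ⟨k, hk, hx⟩ := Finset.mem_biUnion.mp hx
    exact Finset.mem_biUnion.mpr ⟨k, Finset.mem_range.mpr
      (lt_trans (Finset.mem_range.mp hk) (Nat.lt_succ_self _)), hx⟩
  have hSbound : ∀ n x, x ∈ S n → 0 ≤ x ∧ x ≤ T := by
    intro n x hx
    obtain ⟨k, -, hx⟩ := Finset.mem_biUnion.mp hx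
    obtain ⟨j, hj, rfl⟩ := Finset.mem_image.mp hx
    have hj' : j ≤ ℓ k := Nat.lt_succ_iff.mp (Finset.mem_range.mp hj)
    have hmonok : ∀ i < ℓ k, t k i ≤ t k (i + 1) := fun i hi => (hmono k i hi).le
    constructor
    · have h0 := chainMono hmonok j hj' 0 (Nat.zero_le j)
      rw [ht0 k] at h0
      exact h0
    · have h1 := chainMono hmonok (ℓ k) le_rfl j hj'
      rw [htT k] at h1
      exact h1
  have hSne : ∀ n, (S n).Nonempty :=
    fun n => ⟨t 0 0, hmemS n 0 0 (Nat.zero_le n) (Nat.zero_le _)⟩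
  have hcpos : ∀ n, 0 < (S n).card := fun n => Finset.card_pos.mpr (hSne n)
  set v : ℕ → ℕ → ℝ := fun n i =>
    if h : i < (S n).card then (((S n).orderIsoOfFin rfl) ⟨i, h⟩ : ℝ) else 0 with hv'
  have hvS : ∀ n i, i < (S n).card → v n i ∈ S n := by
    intro n i h
    rw [hv']
    simp only [dif_pos h]
    exact (((S n).orderIsoOfFin rfl) ⟨i, h⟩).2
  have hvmono : ∀ n i j, i < j → j < (S n).card → v n i < v n j := by
    intro n i j hij hj
    have hi : i < (S n).card := lt_trans hij hj
    rw [hv']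
    simp only [dif_pos hi, dif_pos hj]
    exact Subtype.coe_lt_coe.mpr
      (((S n).orderIsoOfFin rfl).strictMono (Fin.mk_lt_mk.mpr hij))
  have hcover : ∀ n x, x ∈ S n → ∃ i ≤ (S n).card - 1, v n i = x := by
    intro n x hx
    set i : Fin (S n).card := ((S n).orderIsoOfFin rfl).symm ⟨x, hx⟩ with hi
    refine ⟨(i : ℕ), Nat.le_pred_of_lt i.2, ?_⟩
    rw [hv']
    simp only [dif_pos i.2]
    rw [show (⟨(i : ℕ), i.2⟩ : Fin (S n).card) = i from Fin.eta i i.2, hi,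
      OrderIso.apply_symm_apply]
  -- the variation along sorted S n
  set W : ℕ → Ω → ℝ := fun n ω =>
    ∑ i ∈ Finset.range ((S n).card - 1), |Y (v n (i + 1)) ω - Y (v n i) ω| with hW
  have hWmeas : ∀ n, Measurable (W n) :=
    fun n => Finset.measurable_sum _ fun i _ => ((hYmeas _).sub (hYmeas _)).abs
  have hvstrict : ∀ n, ∀ i < (S n).card - 1, v n i < v n (i + 1) :=
    fun n i hi => hvmono n i (i + 1) (Nat.lt_succ_self i) (by omega)
  have hVW : ∀ k n, k ≤ n → ∀ ω, V k ω ≤ W n ω := by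
    intro k n hk ω
    rw [hV, hW]
    exact var_refine (fun x => Y x ω) (hmono k) (hvstrict n)
      (fun j hj => hcover n (t k j) (hmemS n k j hk hj))
  have hWmono : ∀ n ω, W n ω ≤ W (n + 1) ω := by
    intro n ω
    rw [hW]
    refine var_refine (fun x => Y x ω) (hvstrict n) (hvstrict (n + 1)) fun j hj => ?_
    exact hcover (n + 1) (v n j)
      (hSsub n (hvS n j (lt_of_le_of_lt hj (Nat.sub_lt (hcpos n) one_pos))))
  -- integral bound
  have hWint : ∀ n, ∫⁻ ω, ENNReal.ofReal (W n ω) ∂P ≤ ENNReal.ofReal (C * T) := by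
    intro n
    have hof : ∀ ω, ENNReal.ofReal (W n ω)
        = ∑ i ∈ Finset.range ((S n).card - 1),
            ENNReal.ofReal |Y (v n (i + 1)) ω - Y (v n i) ω| :=
      fun ω => ENNReal.ofReal_sum_of_nonneg fun i _ => abs_nonneg _
    simp_rw [hof]
    rw [lintegral_finset_sum (f := fun i ω => ENNReal.ofReal |Y (v n (i + 1)) ω - Y (v n i) ω|)
      _ fun i _ => ((hYmeas _).sub (hYmeas _)).abs.ennreal_ofReal]
    have hterm : ∀ i ∈ Finset.range ((S n).card - 1),
        ∫⁻ ω, ENNReal.ofReal |Y (v n (i + 1)) ω - Y (v n i) ω| ∂P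
          ≤ ENNReal.ofReal (C * v n (i + 1) - C * v n i) := by
      intro i hi
      have hi' := Finset.mem_range.mp hi
      have h1 : i < (S n).card := by omega
      have h2 : i + 1 < (S n).card := by omega
      have h3 := hinc (v n i) (v n (i + 1)) (hSbound n _ (hvS n i h1)).1
        (hvmono n i (i + 1) (Nat.lt_succ_self i) h2) (hSbound n _ (hvS n (i + 1) h2)).2
      refine le_trans h3 (le_of_eq ?_)
      congr 1
      ring
    refine le_trans (Finset.sum_le_sum hterm) ?_
    rw [← ENNReal.ofReal_sum_of_nonneg fun i hi => ?nn]
    case nn =>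
      have hi' := Finset.mem_range.mp hi
      have h2 : i + 1 < (S n).card := by omega
      have := (hvmono n i (i + 1) (Nat.lt_succ_self i) h2).le
      nlinarith
    rw [Finset.sum_range_sub (fun i => C * v n i)]
    refine ENNReal.ofReal_le_ofReal ?_
    have hb1 := hSbound n _ (hvS n ((S n).card - 1) (Nat.sub_lt (hcpos n) one_pos))
    have hb0 := hSbound n _ (hvS n 0 (hcpos n))
    nlinarith [hb1.2, hb0.1]
  -- monotone convergence
  have hWmonoF : Monotone fun n => fun ω => ENNReal.ofReal (W n ω) :=
    monotone_nat_of_le_succ fun n ω => ENNReal.ofReal_le_ofReal (hWmono n ω)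
  set G : Ω → ℝ≥0∞ := fun ω => ⨆ n, ENNReal.ofReal (W n ω) with hG
  have hGmeas : Measurable G := Measurable.iSup fun n => (hWmeas n).ennreal_ofReal
  have hGint : ∫⁻ ω, G ω ∂P ≤ ENNReal.ofReal (C * T) := by
    rw [hG, lintegral_iSup (fun n => (hWmeas n).ennreal_ofReal) hWmonoF]
    exact iSup_le hWint
  have hGae : ∀ᵐ ω ∂P, G ω < ⊤ :=
    ae_lt_top hGmeas (lt_of_le_of_lt hGint ENNReal.ofReal_lt_top).ne
  have hnull : P {ω | G ω = ⊤} = 0 := by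
    have h := hGae
    rw [ae_iff] at h
    convert h using 2
    ext ω
    simp [lt_top_iff_ne_top]
  have hsup : ∀ ω, (⨆ k, ENNReal.ofReal (V k ω)) ≤ G ω := fun ω =>
    iSup_le fun k => le_trans (ENNReal.ofReal_le_ofReal (hVW k k le_rfl ω))
      (le_iSup (fun n => ENNReal.ofReal (W n ω)) k)
  constructor
  · refine measure_mono_null ?_ hnull
    intro ω hω
    simp only [Set.mem_setOf_eq] at hω ⊢
    exact top_le_iff.mp (hω ▸ hsup ω)
  · filter_upwards [hGae] with ω hω
    exact lt_of_le_of_lt (le_trans limsup_le_iSup (hsup ω)) hω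
end

section
/- Fix a > 0, β > 0, σ > 0, T > 0. Let Y : [0, T] × Ω → ℝ be a stochastic process with Y(0) = 0 a.s., independent increments, and such that for all 0 ≤ s < t ≤ T the increment Y(t) − Y(s) has the law of σ Z √W with Z standard normal independent of W ~ Gamma(a(t − s), β). For each k ≥ 1 let π_k = (0 = t₀^{(k)} < ⋯ < t_{ℓ(k)}^{(k)} = T) be a partition of [0, T] with mesh tending to 0 as k → ∞, and let V_Q(T, π_k) = Σ_{j=0}^{ℓ(k)−1} (Y(t_{j+1}^{(k)}) − Y(t_j^{(k)}))². Then for every constant c ∈ ℝ, liminf_{k → ∞} E[(V_Q(T, π_k) − c)²] ≥ 3 a σ⁴ T / β² > 0; in particular V_Q(T, π_k) does not converge in L² to any constant. -/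
open MeasureTheory ProbabilityTheory Real Filter

open scoped ENNReal NNReal
section helpers
open Set

lemma integral_withDensity_ofReal {p : ℝ → ℝ} (hp : Measurable p) (hp0 : ∀ x, 0 ≤ p x)
    (g : ℝ → ℝ) :
    ∫ x, g x ∂((volume : Measure ℝ).withDensity (fun x => ENNReal.ofReal (p x)))
      = ∫ x, p x * g x := by
  have h : (fun x => ENNReal.ofReal (p x)) = (fun x => ((p x).toNNReal : ℝ≥0∞)) := rfl
  rw [h, integral_withDensity_eq_integral_smul hp.real_toNNReal]
  congr 1; ext x
  simp [NNReal.smul_def, Real.coe_toNNReal _ (hp0 x)]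

lemma integrable_withDensity_ofReal {p : ℝ → ℝ} (hp : Measurable p) (hp0 : ∀ x, 0 ≤ p x)
    {g : ℝ → ℝ} (hg : Measurable g)
    (h : Integrable (fun x => p x * g x)) :
    Integrable g ((volume : Measure ℝ).withDensity (fun x => ENNReal.ofReal (p x))) := by
  have heq : (fun x => ENNReal.ofReal (p x)) = (fun x => ((p x).toNNReal : ℝ≥0∞)) := rfl
  rw [heq, integrable_withDensity_iff_integrable_smul hp.real_toNNReal]
  refine h.congr (ae_of_all _ fun x => ?_)
  simp [NNReal.smul_def, Real.coe_toNNReal _ (hp0 x)]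

lemma gammaMeasure_ae_nonneg (s β : ℝ) : ∀ᵐ x ∂(gammaMeasure s β), 0 ≤ x := by
  rw [ae_iff]
  have h : {x : ℝ | ¬ 0 ≤ x} = Set.Iio 0 := by ext x; simp [Set.mem_Iio, not_le]
  rw [h, gammaMeasure, withDensity_apply _ measurableSet_Iio]
  rw [setLIntegral_congr_fun measurableSet_Iio
    (fun x (hx : x < 0) => gammaPDF_of_neg hx), lintegral_zero]

lemma gamma_moment_s18 {s β : ℝ} (hs : 0 < s) (hβ : 0 < β) (n : ℕ) (hn : n ≠ 0) :
    Integrable (fun x => x ^ n) (gammaMeasure s β) ∧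
    ∫ x, x ^ n ∂(gammaMeasure s β) = Real.Gamma (s + n) / (Real.Gamma s * β ^ n) := by
  have hΓ : 0 < Real.Gamma s := Real.Gamma_pos_of_pos hs
  set C : ℝ := β ^ s / Real.Gamma s with hC
  have hmeas : Measurable (gammaPDFReal s β) := measurable_gammaPDFReal s β
  have hnn : ∀ x, 0 ≤ gammaPDFReal s β x := fun x => gammaPDFReal_nonneg hs hβ x
  -- the real integrand
  set h : ℝ → ℝ := fun x => gammaPDFReal s β x * x ^ n with hh
  have hzero : ∀ x ≤ 0, h x = 0 := by
    intro x hx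
    rcases lt_or_eq_of_le hx with hx' | hx'
    · simp [hh, gammaPDFReal, not_le.mpr hx']
    · simp [hh, hx', zero_pow hn]
  have hIoi : ∀ x ∈ Set.Ioi (0:ℝ), h x =
      C * (x ^ (s + n - 1) * Real.exp (-β * x ^ (1:ℝ))) := by
    intro x hx
    have hx0 : (0:ℝ) < x := hx
    simp only [hh, gammaPDFReal, if_pos hx0.le]
    rw [Real.rpow_one]
    have h1 : (x:ℝ) ^ n = x ^ (n:ℝ) := (Real.rpow_natCast x n).symm
    have h2 : x ^ (s + (n:ℝ) - 1) = x ^ (s - 1) * x ^ (n:ℝ) := by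
      rw [← Real.rpow_add hx0]; ring_nf
    rw [h1, h2, hC]; ring
  have hint : IntegrableOn h (Set.Ioi (0:ℝ)) := by
    have := (integrableOn_rpow_mul_exp_neg_mul_rpow
      (s := s + n - 1) (p := (1:ℝ)) (b := β)
      (by push_cast; linarith [Nat.one_le_cast (α := ℝ) |>.mpr (Nat.one_le_iff_ne_zero.mpr hn)])
      one_pos hβ).const_mul C
    exact MeasureTheory.IntegrableOn.congr_fun this (fun x hx => (hIoi x hx).symm)
      measurableSet_Ioi
  have hintIic : IntegrableOn h (Set.Iic (0:ℝ)) := by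
    refine (integrable_zero _ _ _).integrableOn.congr_fun (fun x hx => ?_) measurableSet_Iic
    exact (hzero x hx).symm
  have hintfull : Integrable h := by
    rw [← integrableOn_univ, ← Set.Iic_union_Ioi (a := (0:ℝ))]
    exact hintIic.union hint
  have hval : ∫ x, h x = Real.Gamma (s + n) / (Real.Gamma s * β ^ n) := by
    have hsplit : ∫ x, h x = (∫ x in Set.Iic (0:ℝ), h x) + ∫ x in Set.Ioi (0:ℝ), h x := by
      rw [← setIntegral_union (Set.Iic_disjoint_Ioi le_rfl) measurableSet_Ioi hintIic hint,
        Set.Iic_union_Ioi, setIntegral_univ]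
    have h1 : ∫ x in Set.Iic (0:ℝ), h x = 0 := by
      rw [setIntegral_congr_fun measurableSet_Iic (fun x hx => hzero x hx), integral_zero]
    have h2 : ∫ x in Set.Ioi (0:ℝ), h x
        = C * ((1/β) ^ (s + n) * Real.Gamma (s + n)) := by
      rw [setIntegral_congr_fun measurableSet_Ioi hIoi, integral_const_mul]
      congr 1
      have : ∀ x ∈ Set.Ioi (0:ℝ), x ^ (s + n - 1) * Real.exp (-β * x ^ (1:ℝ))
          = x ^ (s + (n:ℝ) - 1) * Real.exp (-(β * x)) := by
        intro x hx; rw [Real.rpow_one]; ring_nf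
      rw [setIntegral_congr_fun measurableSet_Ioi this,
        Real.integral_rpow_mul_exp_neg_mul_Ioi (by positivity) hβ]
    rw [hsplit, h1, h2, zero_add, hC]
    rw [one_div, Real.inv_rpow hβ.le, ← Real.rpow_neg hβ.le]
    have hb : β ^ s * β ^ (-(s + (n:ℝ))) = (β ^ n)⁻¹ := by
      rw [← Real.rpow_add hβ, show s + -(s + (n:ℝ)) = -(n:ℝ) by ring,
        Real.rpow_neg hβ.le, Real.rpow_natCast]
    rw [show β ^ s / Real.Gamma s * (β ^ (-(s + (n:ℝ))) * Real.Gamma (s + (n:ℝ)))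
        = (β ^ s * β ^ (-(s + (n:ℝ)))) * Real.Gamma (s + (n:ℝ)) / Real.Gamma s by ring, hb]
    field_simp
  constructor
  · rw [gammaMeasure, show gammaPDF s β = (fun x => ENNReal.ofReal (gammaPDFReal s β x)) from rfl]
    exact integrable_withDensity_ofReal hmeas hnn (measurable_id.pow_const n) hintfull
  · rw [gammaMeasure, show gammaPDF s β = (fun x => ENNReal.ofReal (gammaPDFReal s β x)) from rfl,
      integral_withDensity_ofReal hmeas hnn]
    exact hval

lemma gaussian_core (m : ℕ) :
    Integrable (fun x : ℝ => x ^ (2*m) * Real.exp (-(1/2) * x^2)) ∧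
    ∫ x : ℝ, x ^ (2*m) * Real.exp (-(1/2) * x^2)
      = 2 * ((1/2:ℝ) ^ (-(2*(m:ℝ)+1)/2) * (1/2) * Real.Gamma ((2*(m:ℝ)+1)/2)) := by
  constructor
  · have := integrable_rpow_mul_exp_neg_mul_sq (b := (1/2:ℝ)) (by norm_num)
      (s := ((2*m : ℕ) : ℝ)) (lt_of_lt_of_le (by norm_num : (-1:ℝ) < 0) (Nat.cast_nonneg _))
    refine this.congr (ae_of_all _ fun x => ?_)
    simp only [Real.rpow_natCast]
  · have habs : (fun x : ℝ => x ^ (2*m) * Real.exp (-(1/2) * x^2))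
        = fun x : ℝ => (fun y : ℝ => y ^ (2*m) * Real.exp (-(1/2) * y^2)) |x| := by
      funext x
      simp only []
      rw [pow_abs, abs_of_nonneg ((even_two_mul m).pow_nonneg x), sq_abs]
    have hca := integral_comp_abs (f := fun y : ℝ => y ^ (2*m) * Real.exp (-(1/2) * y^2))
    rw [habs, hca]
    congr 1
    have hcong : ∀ x ∈ Set.Ioi (0:ℝ), x ^ (2*m) * Real.exp (-(1/2) * x^2)
        = x ^ ((2*(m:ℝ))) * Real.exp (-(1/2) * x ^ (2:ℝ)) := by
      intro x hx
      have hx0 : (0:ℝ) < x := hx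
      rw [show ((2*(m:ℝ))) = ((2*m : ℕ) : ℝ) by push_cast; ring, Real.rpow_natCast,
        show ((2:ℝ)) = ((2 : ℕ) : ℝ) by norm_num, Real.rpow_natCast]
    rw [setIntegral_congr_fun measurableSet_Ioi hcong,
      integral_rpow_mul_exp_neg_mul_rpow (by norm_num)
        (lt_of_lt_of_le (by norm_num : (-1:ℝ) < 0) (by positivity)) (by norm_num)]

lemma D_ratio1 :
    (2:ℝ) * ((1/2:ℝ) ^ (-(2*((1:ℕ):ℝ)+1)/2) * (1/2) * Real.Gamma ((2*((1:ℕ):ℝ)+1)/2))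
      = (2:ℝ) * ((1/2:ℝ) ^ (-(2*((0:ℕ):ℝ)+1)/2) * (1/2) * Real.Gamma ((2*((0:ℕ):ℝ)+1)/2)) := by
  have hA : (1/2:ℝ) ^ (-(2*((1:ℕ):ℝ)+1)/2)
      = (1/2:ℝ) ^ (-(2*((0:ℕ):ℝ)+1)/2) * 2 := by
    rw [show (-(2*((1:ℕ):ℝ)+1)/2) = (-(2*((0:ℕ):ℝ)+1)/2) + (-1) by push_cast; ring,
      Real.rpow_add (by norm_num), Real.rpow_neg_one]
    norm_num
  have hG : Real.Gamma ((2*((1:ℕ):ℝ)+1)/2)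
      = ((2*((0:ℕ):ℝ)+1)/2) * Real.Gamma ((2*((0:ℕ):ℝ)+1)/2) := by
    rw [show ((2*((1:ℕ):ℝ)+1)/2) = (2*((0:ℕ):ℝ)+1)/2 + 1 by push_cast; ring,
      Real.Gamma_add_one (by push_cast; norm_num)]
  rw [hA, hG]
  push_cast
  ring

lemma D_ratio2 :
    (2:ℝ) * ((1/2:ℝ) ^ (-(2*((2:ℕ):ℝ)+1)/2) * (1/2) * Real.Gamma ((2*((2:ℕ):ℝ)+1)/2))
      = 3 * ((2:ℝ) * ((1/2:ℝ) ^ (-(2*((0:ℕ):ℝ)+1)/2)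
          * (1/2) * Real.Gamma ((2*((0:ℕ):ℝ)+1)/2))) := by
  have hA : (1/2:ℝ) ^ (-(2*((2:ℕ):ℝ)+1)/2)
      = (1/2:ℝ) ^ (-(2*((0:ℕ):ℝ)+1)/2) * 4 := by
    rw [show (-(2*((2:ℕ):ℝ)+1)/2) = (-(2*((0:ℕ):ℝ)+1)/2) + (-2) by push_cast; ring,
      Real.rpow_add (by norm_num),
      show ((-2:ℝ)) = ((-2:ℤ):ℝ) by norm_num, Real.rpow_intCast]
    norm_num
  have hG : Real.Gamma ((2*((2:ℕ):ℝ)+1)/2)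
      = (3/2) * ((1/2) * Real.Gamma ((2*((0:ℕ):ℝ)+1)/2)) := by
    rw [show ((2*((2:ℕ):ℝ)+1)/2) = ((2*((0:ℕ):ℝ)+1)/2 + 1) + 1 by push_cast; ring,
      Real.Gamma_add_one (by push_cast; norm_num),
      Real.Gamma_add_one (by push_cast; norm_num)]
    push_cast
    ring
  rw [hA, hG]
  ring

lemma gaussian_moments :
    (Integrable (fun x : ℝ => x^2) (gaussianReal 0 1) ∧
      ∫ x, x^2 ∂(gaussianReal 0 1) = 1) ∧
    (Integrable (fun x : ℝ => x^4) (gaussianReal 0 1) ∧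
      ∫ x, x^4 ∂(gaussianReal 0 1) = 3) := by
  have hstd : gaussianReal 0 1
      = (volume : Measure ℝ).withDensity (fun x => ENNReal.ofReal (gaussianPDFReal 0 1 x)) := by
    rw [gaussianReal_of_var_ne_zero 0 one_ne_zero]; rfl
  set C : ℝ := (Real.sqrt (2*π))⁻¹ with hCdef
  have hpdf : ∀ x : ℝ, gaussianPDFReal 0 1 x = C * Real.exp (-(1/2) * x^2) := by
    intro x
    simp only [gaussianPDFReal, NNReal.coe_one, mul_one, sub_zero, hCdef]
    congr 1
    ring
  have hmeas := measurable_gaussianPDFReal 0 1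
  have hnn : ∀ x, 0 ≤ gaussianPDFReal 0 1 x := gaussianPDFReal_nonneg 0 1
  have c0 := gaussian_core 0
  have c1 := gaussian_core 1
  have c2 := gaussian_core 2
  have hpt : ∀ m : ℕ, ∀ x : ℝ, gaussianPDFReal 0 1 x * x ^ (2*m)
      = C * (x ^ (2*m) * Real.exp (-(1/2) * x^2)) := by
    intro m x; rw [hpdf x]; ring
  have hnorm : C * (2 * ((1/2:ℝ) ^ (-(2*((0:ℕ):ℝ)+1)/2) * (1/2)
      * Real.Gamma ((2*((0:ℕ):ℝ)+1)/2))) = 1 := by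
    have h0 : ∫ x : ℝ, gaussianPDFReal 0 1 x = 1 := integral_gaussianPDFReal_eq_one 0 one_ne_zero
    have h0' : ∫ x : ℝ, gaussianPDFReal 0 1 x
        = C * (2 * ((1/2:ℝ) ^ (-(2*((0:ℕ):ℝ)+1)/2) * (1/2)
          * Real.Gamma ((2*((0:ℕ):ℝ)+1)/2))) := by
      rw [← c0.2, ← integral_const_mul]
      refine integral_congr_ae (ae_of_all _ fun x => ?_)
      simpa using hpt 0 x
    exact h0'.symm.trans h0
  have key : ∀ m : ℕ, Integrable (fun x : ℝ => x ^ (2*m)) (gaussianReal 0 1) ∧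
      ∫ x, x ^ (2*m) ∂(gaussianReal 0 1)
        = C * (2 * ((1/2:ℝ) ^ (-(2*(m:ℝ)+1)/2) * (1/2) * Real.Gamma ((2*(m:ℝ)+1)/2))) := by
    intro m
    constructor
    · rw [hstd]
      refine integrable_withDensity_ofReal hmeas hnn (measurable_id.pow_const _) ?_
      exact (((gaussian_core m).1.const_mul C).congr (ae_of_all _ fun x => (hpt m x).symm))
    · rw [hstd, integral_withDensity_ofReal hmeas hnn, ← (gaussian_core m).2, ← integral_const_mul]
      exact integral_congr_ae (ae_of_all _ fun x => hpt m x)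
  refine ⟨⟨?_, ?_⟩, ?_, ?_⟩
  · have := (key 1).1; simpa using this
  · have h := (key 1).2
    have : ∫ x, x^2 ∂(gaussianReal 0 1)
        = C * (2 * ((1/2:ℝ) ^ (-(2*((1:ℕ):ℝ)+1)/2) * (1/2) * Real.Gamma ((2*((1:ℕ):ℝ)+1)/2))) := by
      rw [← h]
    rw [this, D_ratio1]
    exact hnorm
  · have := (key 2).1; simpa using this
  · have h := (key 2).2
    have : ∫ x, x^4 ∂(gaussianReal 0 1)
        = C * (2 * ((1/2:ℝ) ^ (-(2*((2:ℕ):ℝ)+1)/2) * (1/2) * Real.Gamma ((2*((2:ℕ):ℝ)+1)/2))) := by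
      rw [← h]
    rw [this, D_ratio2]
    rw [← mul_assoc, mul_comm C 3, mul_assoc, hnorm, mul_one]

end helpers

lemma cgh_moments {s β σ : ℝ} (hs : 0 < s) (hβ : 0 < β) (hσ : 0 < σ) :
    (Integrable (fun x : ℝ => x^2) (centeredGammaGH s β σ) ∧
      ∫ x, x^2 ∂(centeredGammaGH s β σ) = σ^2 * s / β) ∧
    (Integrable (fun x : ℝ => x^4) (centeredGammaGH s β σ) ∧
      ∫ x, x^4 ∂(centeredGammaGH s β σ) = 3 * σ^4 * (s * (s+1)) / β^2) := by
  haveI : IsProbabilityMeasure (gammaMeasure s β) := isProbabilityMeasure_gammaMeasure hs hβ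
  set ν : Measure (ℝ × ℝ) := (gaussianReal 0 1).prod (gammaMeasure s β) with hν
  set f : ℝ × ℝ → ℝ := fun p => σ * p.1 * Real.sqrt p.2 with hf
  have hfm : Measurable f := ((measurable_const.mul measurable_fst).mul measurable_snd.sqrt)
  have hW : ∀ᵐ p : ℝ × ℝ ∂ν, 0 ≤ p.2 := by
    rw [ae_iff]
    have hset : {p : ℝ × ℝ | ¬ 0 ≤ p.2} = Set.univ ×ˢ {x : ℝ | ¬ 0 ≤ x} := by
      ext p; simp
    rw [hset, hν, Measure.prod_prod]
    have := gammaMeasure_ae_nonneg s β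
    rw [ae_iff] at this
    rw [this, mul_zero]
  have hgauss := gaussian_moments
  have hg1 := gamma_moment_s18 hs hβ 1 one_ne_zero
  have hg2 := gamma_moment_s18 hs hβ 2 two_ne_zero
  have hΓs : Real.Gamma s ≠ 0 := (Real.Gamma_pos_of_pos hs).ne'
  have hg1' : ∫ x, x ^ 1 ∂(gammaMeasure s β) = s / β := by
    rw [hg1.2, show s + ((1:ℕ):ℝ) = s + 1 by norm_num, Real.Gamma_add_one hs.ne']
    field_simp
  have hg2' : ∫ x, x ^ 2 ∂(gammaMeasure s β) = s * (s+1) / β^2 := by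
    rw [hg2.2, show s + ((2:ℕ):ℝ) = (s + 1) + 1 by push_cast; ring,
      Real.Gamma_add_one (by linarith), Real.Gamma_add_one hs.ne']
    field_simp
  -- pointwise identities
  have hpt2 : ∀ᵐ p : ℝ × ℝ ∂ν, (f p)^2 = σ^2 * (p.1^2 * p.2^1) := by
    filter_upwards [hW] with p hp
    simp only [hf, pow_one]
    rw [mul_pow, mul_pow, Real.sq_sqrt hp]
    ring
  have hpt4 : ∀ᵐ p : ℝ × ℝ ∂ν, (f p)^4 = σ^4 * (p.1^4 * p.2^2) := by
    filter_upwards [hW] with p hp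
    simp only [hf]
    rw [mul_pow, mul_pow, show (Real.sqrt p.2)^4 = ((Real.sqrt p.2)^2)^2 by ring,
      Real.sq_sqrt hp]
    ring
  have hmap2 : ∫ x, x^2 ∂(centeredGammaGH s β σ) = ∫ p, (f p)^2 ∂ν := by
    rw [centeredGammaGH, ← hν, ← hf, integral_map hfm.aemeasurable]
    exact (measurable_id.pow_const 2).aestronglyMeasurable
  have hmap4 : ∫ x, x^4 ∂(centeredGammaGH s β σ) = ∫ p, (f p)^4 ∂ν := by
    rw [centeredGammaGH, ← hν, ← hf, integral_map hfm.aemeasurable]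
    exact (measurable_id.pow_const 4).aestronglyMeasurable
  have hint2 : Integrable (fun p => (f p)^2) ν := by
    have := ((hgauss.1.1.mul_prod hg1.1).const_mul (σ^2))
    exact this.congr (hpt2.mono fun p hp => hp.symm)
  have hint4 : Integrable (fun p => (f p)^4) ν := by
    have := ((hgauss.2.1.mul_prod hg2.1).const_mul (σ^4))
    exact this.congr (hpt4.mono fun p hp => hp.symm)
  refine ⟨⟨?_, ?_⟩, ?_, ?_⟩
  · rw [centeredGammaGH, ← hν, ← hf,
      integrable_map_measure (continuous_pow 2).measurable.aestronglyMeasurable hfm.aemeasurable]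
    exact hint2
  · rw [hmap2, integral_congr_ae hpt2, integral_const_mul, hν,
      integral_prod_mul (f := fun z : ℝ => z^2) (g := fun w : ℝ => w^1), hg1',
      hgauss.1.2, one_mul]
    ring
  · rw [centeredGammaGH, ← hν, ← hf,
      integrable_map_measure (continuous_pow 4).measurable.aestronglyMeasurable hfm.aemeasurable]
    exact hint4
  · rw [hmap4, integral_congr_ae hpt4, integral_const_mul, hν,
      integral_prod_mul (f := fun z : ℝ => z^4) (g := fun w : ℝ => w^2), hg2',
      hgauss.2.2]
    ring

/-- **The quadratic variation of the centered gamma-gh Lévy process does not converge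
in `L²` to a constant.** Let `Y` be a process on `[0, T]` with `Y 0 = 0` a.s.,
independent increments, and increments `Y t − Y s ∼ centeredGammaGH (a (t − s)) β σ`.
Along partitions `π_k` of `[0, T]` with mesh tending to `0`, let
`V_Q(T, π_k) = Σ_j (Y(t_{j+1}) − Y(t_j))²`. Then for every constant `c ∈ ℝ`,
`liminf_k E[(V_Q(T, π_k) − c)²] ≥ 3 a σ⁴ T / β² > 0`; in particular `V_Q(T, π_k)` does
not converge in `L²` to any constant. -/
theorem quadratic_variation_not_L2_convergent_gamma_gh
    {Ω : Type*} [MeasurableSpace Ω] (P : Measure Ω) [IsProbabilityMeasure P]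
    (a β σ T : ℝ) (ha : 0 < a) (hβ : 0 < β) (hσ : 0 < σ) (hT : 0 < T)
    -- the process on `[0, T]`
    (Y : ℝ → Ω → ℝ) (hYmeas : ∀ u, Measurable (Y u))
    (hY0 : ∀ᵐ ω ∂P, Y 0 ω = 0)
    -- independent increments
    (hYindep : ∀ (m : ℕ) (u : ℕ → ℝ), u 0 = 0 → (∀ i < m, u i < u (i + 1)) →
      u m ≤ T →
      iIndepFun
        (fun j : Fin m => fun ω => Y (u ((j : ℕ) + 1)) ω - Y (u (j : ℕ)) ω) P)
    -- increment laws
    (hYlaw : ∀ u v : ℝ, 0 ≤ u → u < v → v ≤ T →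
      Measure.map (fun ω => Y v ω - Y u ω) P = centeredGammaGH (a * (v - u)) β σ)
    -- the partitions `π_k = (0 = t k 0 < t k 1 < ⋯ < t k (ℓ k) = T)`
    (ℓ : ℕ → ℕ) (hℓ : ∀ k, 0 < ℓ k) (t : ℕ → ℕ → ℝ)
    (ht0 : ∀ k, t k 0 = 0) (htT : ∀ k, t k (ℓ k) = T)
    (hmono : ∀ k, ∀ j < ℓ k, t k j < t k (j + 1))
    -- the mesh `m(π_k)` tends to `0`
    (hmesh : Tendsto
      (fun k => (Finset.range (ℓ k)).sup'
        (Finset.nonempty_range_iff.mpr (hℓ k).ne') (fun j => t k (j + 1) - t k j))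
      atTop (nhds 0))
    -- the quadratic variations
    (VQ : ℕ → Ω → ℝ)
    (hVQ : ∀ k ω,
      VQ k ω = ∑ j ∈ Finset.range (ℓ k), (Y (t k (j + 1)) ω - Y (t k j) ω) ^ 2) :
    (∀ c : ℝ,
        3 * a * σ ^ 4 * T / β ^ 2 ≤ liminf (fun k => ∫ ω, (VQ k ω - c) ^ 2 ∂P) atTop) ∧
      0 < 3 * a * σ ^ 4 * T / β ^ 2 ∧
      ¬ ∃ c : ℝ, Tendsto (fun k => ∫ ω, (VQ k ω - c) ^ 2 ∂P) atTop (nhds 0) := by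
  have hC : 0 < 3 * a * σ ^ 4 * T / β ^ 2 := by positivity
  have main : ∀ c : ℝ, ∀ k : ℕ,
      3 * a * σ ^ 4 * T / β ^ 2 ≤ ∫ ω, (VQ k ω - c) ^ 2 ∂P ∧
      ∫ ω, (VQ k ω - c) ^ 2 ∂P
        ≤ σ^4 * (a*T) * (2*(a*T) + 3) / β^2 + (σ^2 * (a*T)/β - c)^2 := by
    intro c k
    set n := ℓ k with hn
    set u : ℕ → ℝ := t k with hu
    have hu0 : u 0 = 0 := ht0 k
    have hunT : u n = T := htT k
    have hmo : ∀ j < n, u j < u (j+1) := hmono k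
    have hmono2 : ∀ i j, i ≤ j → j ≤ n → u i ≤ u j := by
      intro i j hij hj
      induction j with
      | zero =>
        have : i = 0 := Nat.le_zero.mp hij
        simp [this]
      | succ m ih =>
        by_cases h : i = m + 1
        · simp [h]
        · have h1 : i ≤ m := by omega
          exact le_trans (ih h1 (by omega)) (le_of_lt (hmo m (by omega)))
    have h0le : ∀ j, j ≤ n → 0 ≤ u j := by
      intro j hj
      have := hmono2 0 j (Nat.zero_le _) hj
      rwa [hu0] at this
    have hleT : ∀ j, j ≤ n → u j ≤ T := by
      intro j hj
      have := hmono2 j n hj le_rfl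
      rwa [hunT] at this
    set X : ℕ → Ω → ℝ := fun j ω => Y (u (j+1)) ω - Y (u j) ω with hX
    have hXm : ∀ j, Measurable (X j) := fun j => (hYmeas _).sub (hYmeas _)
    set s : ℕ → ℝ := fun j => a * (u (j+1) - u j) with hs
    have hspos : ∀ j < n, 0 < s j := fun j hj =>
      mul_pos ha (sub_pos.mpr (hmo j hj))
    have hlaw : ∀ j < n, Measure.map (X j) P = centeredGammaGH (s j) β σ := fun j hj =>
      hYlaw (u j) (u (j+1)) (h0le j (le_of_lt hj)) (hmo j hj) (hleT (j+1) hj)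
    have hmom : ∀ j < n,
        (Integrable (fun ω => (X j ω)^2) P ∧ ∫ ω, (X j ω)^2 ∂P = σ^2 * s j / β) ∧
        (Integrable (fun ω => (X j ω)^4) P ∧
          ∫ ω, (X j ω)^4 ∂P = 3*σ^4*(s j * (s j + 1))/β^2) := by
      intro j hj
      have hcgh := cgh_moments (hspos j hj) hβ hσ
      refine ⟨⟨?_, ?_⟩, ?_, ?_⟩
      · exact (integrable_map_measure (continuous_pow 2).measurable.aestronglyMeasurable
          (hXm j).aemeasurable).mp (by rw [hlaw j hj]; exact hcgh.1.1)
      · rw [← hcgh.1.2, ← hlaw j hj, integral_map (hXm j).aemeasurable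
          (continuous_pow 2).measurable.aestronglyMeasurable]
      · exact (integrable_map_measure (continuous_pow 4).measurable.aestronglyMeasurable
          (hXm j).aemeasurable).mp (by rw [hlaw j hj]; exact hcgh.2.1)
      · rw [← hcgh.2.2, ← hlaw j hj, integral_map (hXm j).aemeasurable
          (continuous_pow 4).measurable.aestronglyMeasurable]
    have hM2 : ∀ j < n, MemLp (fun ω => (X j ω)^2) 2 P := by
      intro j hj
      refine (memLp_two_iff_integrable_sq
        ((hXm j).pow_const 2).aestronglyMeasurable).mpr ?_
      refine ((hmom j hj).2.1).congr (ae_of_all _ fun ω => ?_)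
      ring
    have hvar : ∀ j < n, variance (fun ω => (X j ω)^2) P
        = σ^4 * (s j * (2 * s j + 3)) / β^2 := by
      intro j hj
      rw [variance_eq_sub (hM2 j hj)]
      have e1 : (∫ ω, ((fun ω => (X j ω)^2)^2) ω ∂P) = ∫ ω, (X j ω)^4 ∂P :=
        integral_congr_ae (ae_of_all _ fun ω => by simp [Pi.pow_apply]; ring)
      rw [e1, (hmom j hj).2.2, (hmom j hj).1.2]
      field_simp
      ring
    -- independence
    have hindepF := hYindep n u hu0 hmo (le_of_eq hunT)
    have hindepS : iIndepFun
        (fun j : Fin n => fun ω => (X (j:ℕ) ω)^2) P := by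
      have := hindepF.comp (fun _ => fun x : ℝ => x^2) (fun _ => (continuous_pow 2).measurable)
      exact this
    have hVQpt : ∀ ω, VQ k ω = ∑ j ∈ Finset.range n, (X j ω)^2 := fun ω => hVQ k ω
    have hVQeq : VQ k = ∑ j : Fin n, (fun ω => (X (j:ℕ) ω)^2) := by
      funext ω
      rw [hVQpt ω, Finset.sum_apply, Finset.sum_range (fun j => (X j ω)^2)]
    have hvarsum : variance (VQ k) P
        = ∑ j : Fin n, variance (fun ω => (X (j:ℕ) ω)^2) P := by
      rw [hVQeq]
      exact IndepFun.variance_sum (fun j _ => hM2 j j.isLt)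
        (fun i _ j _ hij => hindepS.indepFun hij)
    have hsum_s : ∑ j ∈ Finset.range n, s j = a * T := by
      simp only [hs]
      rw [← Finset.mul_sum, Finset.sum_range_sub (f := u), hu0, hunT, sub_zero]
    -- mean
    have hEVQ : ∫ ω, VQ k ω ∂P = σ^2 * (a*T) / β := by
      rw [integral_congr_ae (ae_of_all _ hVQpt),
        integral_finset_sum _ (fun j hj => (hmom j (Finset.mem_range.mp hj)).1.1)]
      rw [Finset.sum_congr rfl (fun j hj => (hmom j (Finset.mem_range.mp hj)).1.2)]
      rw [Finset.sum_congr rfl (fun j (hj : j ∈ Finset.range n) =>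
        show σ^2 * s j / β = (σ^2/β) * s j from by ring), ← Finset.mul_sum, hsum_s]
      ring
    -- variance bounds
    have hvarsum' : variance (VQ k) P
        = ∑ j ∈ Finset.range n, σ^4 * (s j * (2 * s j + 3)) / β^2 := by
      rw [hvarsum, ← Finset.sum_range (fun j => variance (fun ω => (X j ω)^2) P)]
      exact Finset.sum_congr rfl (fun j hj => hvar j (Finset.mem_range.mp hj))
    have hvar_lb : 3 * a * σ ^ 4 * T / β ^ 2 ≤ variance (VQ k) P := by
      rw [hvarsum']
      have h1 : ∑ j ∈ Finset.range n, 3 * σ^4 * s j / β^2 = 3 * a * σ^4 * T / β^2 := by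
        rw [Finset.sum_congr rfl (fun j (hj : j ∈ Finset.range n) =>
          show 3 * σ^4 * s j / β^2 = (3 * σ^4/β^2) * s j from by ring),
          ← Finset.mul_sum, hsum_s]
        ring
      rw [← h1]
      refine Finset.sum_le_sum (fun j hj => ?_)
      have hsj := hspos j (Finset.mem_range.mp hj)
      rw [div_le_div_iff₀ (by positivity) (by positivity)]
      nlinarith [mul_nonneg (mul_nonneg (pow_pos hσ 4).le (sq_nonneg (s j))) (sq_nonneg β)]
    have hs2 : ∑ j ∈ Finset.range n, (s j)^2 ≤ (a*T)^2 := by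
      have hstep : ∀ j ∈ Finset.range n, (s j)^2 ≤ s j * (a*T) := by
        intro j hj
        have h1 : s j ≤ a * T := by
          rw [← hsum_s]
          exact Finset.single_le_sum
            (fun i hi => (hspos i (Finset.mem_range.mp hi)).le) hj
        nlinarith [(hspos j (Finset.mem_range.mp hj)).le]
      calc ∑ j ∈ Finset.range n, (s j)^2 ≤ ∑ j ∈ Finset.range n, s j * (a*T) :=
            Finset.sum_le_sum hstep
        _ = (∑ j ∈ Finset.range n, s j) * (a*T) := by rw [← Finset.sum_mul]
        _ = (a*T)^2 := by rw [hsum_s]; ring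
    have hvar_ub : variance (VQ k) P ≤ σ^4 * (a*T) * (2*(a*T) + 3) / β^2 := by
      rw [hvarsum']
      rw [Finset.sum_congr rfl (fun j (hj : j ∈ Finset.range n) =>
        show σ^4 * (s j * (2 * s j + 3)) / β^2
          = (2*σ^4/β^2) * (s j)^2 + (3*σ^4/β^2) * s j from by field_simp)]
      rw [Finset.sum_add_distrib, ← Finset.mul_sum, ← Finset.mul_sum, hsum_s]
      have h2 : (2*σ^4/β^2) * (∑ j ∈ Finset.range n, (s j)^2)
          ≤ (2*σ^4/β^2) * (a*T)^2 := by
        refine mul_le_mul_of_nonneg_left hs2 (by positivity)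
      calc (2*σ^4/β^2) * (∑ j ∈ Finset.range n, (s j)^2) + (3*σ^4/β^2) * (a*T)
          ≤ (2*σ^4/β^2) * (a*T)^2 + (3*σ^4/β^2) * (a*T) := by linarith
        _ = σ^4 * (a*T) * (2*(a*T) + 3) / β^2 := by field_simp
    -- L² decomposition
    have hMVQ : MemLp (VQ k) 2 P := by
      rw [hVQeq]
      exact memLp_finset_sum' _ (fun j _ => hM2 j j.isLt)
    have hIVQ : Integrable (VQ k) P := hMVQ.integrable one_le_two
    have hIVQ2 : Integrable (fun ω => (VQ k ω)^2) P := hMVQ.integrable_sq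
    have hdecomp : ∫ ω, (VQ k ω - c)^2 ∂P
        = variance (VQ k) P + ((∫ ω, VQ k ω ∂P) - c)^2 := by
      have hexp : ∫ ω, (VQ k ω - c)^2 ∂P
          = ∫ ω, ((VQ k ω)^2 - 2*c*(VQ k ω) + c^2) ∂P :=
        integral_congr_ae (ae_of_all _ fun ω => by ring)
      have hf1 : Integrable (fun ω => 2*c*(VQ k ω)) P := hIVQ.const_mul (2*c)
      have hf2 : Integrable (fun ω => (VQ k ω)^2 - 2*c*(VQ k ω)) P := hIVQ2.sub hf1
      rw [hexp, integral_add hf2 (integrable_const _),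
        integral_sub hIVQ2 hf1, integral_const_mul, integral_const]
      simp only [measure_univ, probReal_univ, ENNReal.toReal_one, smul_eq_mul, one_mul]
      rw [variance_eq_sub hMVQ]
      have e2 : P[(VQ k)^2] = ∫ ω, (VQ k ω)^2 ∂P :=
        integral_congr_ae (ae_of_all _ fun ω => by simp [Pi.pow_apply])
      rw [e2]
      ring
    constructor
    · rw [hdecomp]
      nlinarith [sq_nonneg ((∫ ω, VQ k ω ∂P) - c), hvar_lb]
    · rw [hdecomp, hEVQ]
      exact add_le_add hvar_ub le_rfl
  refine ⟨?_, hC, ?_⟩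
  · intro c
    refine le_liminf_of_le ?_ (Eventually.of_forall fun k => (main c k).1)
    exact isCoboundedUnder_ge_of_le atTop (fun k => (main c k).2)
  · rintro ⟨c, hconv⟩
    have h0 : liminf (fun k => ∫ ω, (VQ k ω - c)^2 ∂P) atTop = 0 := hconv.liminf_eq
    have h1 : 3 * a * σ ^ 4 * T / β ^ 2
        ≤ liminf (fun k => ∫ ω, (VQ k ω - c)^2 ∂P) atTop := by
      refine le_liminf_of_le ?_ (Eventually.of_forall fun k => (main c k).1)
      exact isCoboundedUnder_ge_of_le atTop (fun k => (main c k).2)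
    rw [h0] at h1
    linarith
end
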